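/- arXiv:2206.12802 — 8 statements merged into one kernel-verified Lean document; each statement's English description precedes it below -/
import Mathlib

section
/- Separator at initialization (Lemma E.2): Assume there exists v̄ ∈ F_B with γ_v̄(X,Y) ≥ γ for some γ > 0. If m′ ≥ 8 ln(2n/δ)/γ², then, with probability at least 1 − δ over the coupled random initialization, there exists U ∈ ℝ^{m×d} with rows u_s satisfying ‖u_s‖₂ ≤ 1/√m for all s ∈ [m] and ‖U‖_F ≤ 1, such that simultaneously for all i ∈ [n], y_i f_i^{(0)}(U) ≥ γ/2, where f_i^{(0)}(U) := (1/√m) Σ_{s=1}^m a_s 𝟙[⟨w_{s,0}, x_i⟩ > 0] ⟨u_s, x_i⟩. -/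
open MeasureTheory ProbabilityTheory
open scoped BigOperators ENNReal

noncomputable section

abbrev E (d : ℕ) : Type := EuclideanSpace ℝ (Fin d)

/-- The standard Gaussian measure `N(0, I_d)` on `ℝ^d`. -/
def stdGaussian (d : ℕ) : Measure (E d) :=
  (Measure.pi fun _ : Fin d => gaussianReal 0 1).map
    (⇑(EuclideanSpace.equiv (Fin d) ℝ).symm)

/-- The set `F_B` of vector fields bounded by 1 in norm. -/
def FB (d : ℕ) : Set (E d → E d) := {v | ∀ z, ‖v z‖ ≤ 1}

/-- `∫ ⟨v(z), x⟩ 𝟙[⟨x,z⟩>0] dμ_N(z)`. -/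
def mIntegral (d : ℕ) (v : E d → E d) (x : E d) : ℝ :=
  ∫ z, (if 0 < (inner ℝ x z : ℝ) then (inner ℝ (v z) x : ℝ) else 0) ∂(stdGaussian d)

/-- The margin `γ_v̄(X,Y)`. -/
def marginV (d n : ℕ) (x : Fin n → E d) (y : Fin n → ℝ) (v : E d → E d) : ℝ :=
  ⨅ i, y i * mIntegral d v (x i)

/-- The margin `γ(X,Y) = max_{v̄ ∈ F_B} γ_v̄(X,Y)`. -/
def gammaM (d n : ℕ) (x : Fin n → E d) (y : Fin n → ℝ) : ℝ :=
  ⨆ v ∈ FB d, marginV d n x y v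

end
noncomputable section

/-- Second-layer signs of the coupled initialization: `a_s = 1` for `s < m'`, `−1` otherwise. -/
def aSign (m' : ℕ) : Fin (2 * m') → ℝ := fun s => if (s : ℕ) < m' then 1 else -1

/-- First-layer weights of the coupled initialization with scale `β`:
`w_{s,0} = w_{s+m',0} = β·w'_s`. -/
def W0init (d m' : ℕ) (β : ℝ) (w' : Fin m' → E d) (s : Fin (2 * m')) : E d :=
  if h : (s : ℕ) < m' then β • w' ⟨s, h⟩
  else β • w' ⟨(s : ℕ) - m', by have := s.isLt; omega⟩

/-- `f_i^{(0)}(U) = (1/√m) Σ_s a_s 𝟙[⟨w_{s,0}, x_i⟩ > 0] ⟨u_s, x_i⟩`. -/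
def fZero (d m' : ℕ) (β : ℝ) (w' : Fin m' → E d) (U : Fin (2 * m') → E d) (xi : E d) : ℝ :=
  (Real.sqrt (2 * m'))⁻¹ * ∑ s, aSign m' s *
    (if 0 < (inner ℝ (W0init d m' β w' s) xi : ℝ) then (inner ℝ (U s) xi : ℝ) else 0)

end
noncomputable section

set_option maxHeartbeats 1000000

-- L1: sinh t ≤ t cosh t for t ≥ 0
lemma sinh_le_mul_cosh {t : ℝ} (ht : 0 ≤ t) : Real.sinh t ≤ t * Real.cosh t := by
  rw [Real.sinh_eq_tsum, Real.cosh_eq_tsum, ← tsum_mul_left]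
  refine Summable.tsum_le_tsum (fun n => ?_) t.hasSum_sinh.summable
    (t.hasSum_cosh.summable.mul_left t)
  rw [mul_div_assoc']
  rw [← pow_succ']
  gcongr
  omega

-- L2 helper: exp u - 4u ≤ exp (-3u) for u ∈ [0,1/8]
lemma exp_sub_le (u : ℝ) (hu0 : 0 ≤ u) (hu : u ≤ 1/8) :
    Real.exp u - 4 * u ≤ Real.exp (-(3 * u)) := by
  have key : Real.exp u - Real.exp (-(3*u)) ≤ 4 * u := by
    have h1 : Real.exp u - Real.exp (-(3*u)) = 2 * Real.exp (-u) * Real.sinh (2*u) := by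
      rw [Real.sinh_eq]
      have e1 : Real.exp (-u) * Real.exp (2*u) = Real.exp u := by
        rw [← Real.exp_add]; ring_nf
      have e2 : Real.exp (-u) * Real.exp (-(2*u)) = Real.exp (-(3*u)) := by
        rw [← Real.exp_add]; ring_nf
      linear_combination e2 - e1
    rw [h1]
    have h2 : Real.sinh (2*u) ≤ (2*u) * Real.cosh (2*u) := sinh_le_mul_cosh (by linarith)
    have h3 : Real.cosh (2*u) ≤ Real.exp ((2*u)^2/2) := Real.cosh_le_exp_half_sq _
    have h4 : Real.exp ((2*u)^2/2) ≤ Real.exp u := by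
      apply Real.exp_le_exp.2; nlinarith
    have h5 : 2 * Real.exp (-u) * Real.sinh (2*u) ≤ 2 * Real.exp (-u) * ((2*u) * Real.exp u) := by
      have : Real.sinh (2*u) ≤ (2*u) * Real.exp u := by
        calc Real.sinh (2*u) ≤ (2*u) * Real.cosh (2*u) := h2
        _ ≤ (2*u) * Real.exp u := by
            apply mul_le_mul_of_nonneg_left (h3.trans h4) (by linarith)
      apply mul_le_mul_of_nonneg_left this (by positivity)
    calc 2 * Real.exp (-u) * Real.sinh (2*u) ≤ 2 * Real.exp (-u) * ((2*u) * Real.exp u) := h5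
      _ = 4 * u * (Real.exp (-u) * Real.exp u) := by ring
      _ = 4 * u := by rw [← Real.exp_add]; simp
  linarith

-- L2: scalar key inequality
lemma key_scalar {γ : ℝ} (h0 : 0 < γ) (h1 : γ ≤ 1) :
    Real.cosh (γ/2) - γ * Real.sinh (γ/2) ≤ Real.exp (-(3 * γ^2 / 8)) := by
  have hc : Real.cosh (γ/2) ≤ Real.exp (γ^2/8) := by
    have := Real.cosh_le_exp_half_sq (γ/2)
    convert this using 2
    ring
  have hs : γ/2 ≤ Real.sinh (γ/2) := (Real.self_le_sinh_iff.2 (by linarith))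
  have hγs : γ * (γ/2) ≤ γ * Real.sinh (γ/2) :=
    mul_le_mul_of_nonneg_left hs h0.le
  have hu := exp_sub_le (γ^2/8) (by positivity) (by nlinarith)
  have : -(3 * (γ^2/8)) = -(3 * γ^2/8) := by ring
  rw [this] at hu
  nlinarith

-- L3: convexity bound
lemma exp_le_cosh_sub_mul_sinh {t a : ℝ} (ha : |a| ≤ 1) :
    Real.exp (-(t * a)) ≤ Real.cosh t - a * Real.sinh t := by
  rw [abs_le] at ha
  have h := convexOn_exp.2 (Set.mem_univ t) (Set.mem_univ (-t))
    (show (0:ℝ) ≤ (1-a)/2 by linarith) (show (0:ℝ) ≤ (1+a)/2 by linarith) (by ring)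
  simp only [smul_eq_mul] at h
  have harg : (1-a)/2 * t + (1+a)/2 * (-t) = -(t*a) := by ring
  rw [harg] at h
  rw [Real.cosh_eq, Real.sinh_eq]
  calc Real.exp (-(t*a)) ≤ (1-a)/2 * Real.exp t + (1+a)/2 * Real.exp (-t) := h
    _ = (Real.exp t + Real.exp (-t))/2 - a * ((Real.exp t - Real.exp (-t))/2) := by ring

-- pi integral of product of a single function
lemma integral_pi_pow {α : Type*} [MeasurableSpace α] (μ : Measure α) [IsProbabilityMeasure μ]
    (k : ℕ) (f : α → ℝ) :
    ∫ w : Fin k → α, ∏ s, f (w s) ∂(Measure.pi fun _ => μ) = (∫ z, f z ∂μ) ^ k := by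
  letI : MeasureSpace α := ⟨μ⟩
  haveI : SigmaFinite (volume : Measure α) := (inferInstance : SigmaFinite μ)
  have hv : (Measure.pi fun _ : Fin k => μ) = (volume : Measure (Fin k → α)) :=
    (MeasureTheory.volume_pi).symm
  rw [hv]
  rw [← hv, MeasureTheory.integral_fintype_prod_eq_pow (ι := Fin k) f, Fintype.card_fin]

-- Chernoff-style bound
set_option maxHeartbeats 1000000 in
lemma chernoff_bound {α : Type*} [MeasurableSpace α] (μ : Measure α) [IsProbabilityMeasure μ]
    (m' : ℕ) (γ : ℝ) (hγ0 : 0 < γ) (hγ1 : γ ≤ 1)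
    (F : α → ℝ) (hF : Measurable F) (hFb : ∀ z, |F z| ≤ 1) (hmean : γ ≤ ∫ z, F z ∂μ) :
    ((Measure.pi fun _ : Fin m' => μ) {w | ∑ s, F (w s) < m' * (γ/2)}).toReal
      ≤ Real.exp (-(m' * γ^2 / 8)) := by
  set t : ℝ := γ/2 with ht
  have ht0 : 0 < t := by positivity
  set Pm := Measure.pi fun _ : Fin m' => μ with hPm
  haveI : IsProbabilityMeasure Pm := by rw [hPm]; infer_instance
  have hSmeas : Measurable fun w : Fin m' → α => ∑ s, F (w s) :=
    Finset.measurable_sum _ (fun s _ => hF.comp (measurable_pi_apply s))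
  have hBmeas : MeasurableSet {w : Fin m' → α | ∑ s, F (w s) < m' * t} :=
    measurableSet_lt hSmeas measurable_const
  have hHprod : ∀ w : Fin m' → α, Real.exp (t * (m' * t - ∑ s, F (w s)))
      = Real.exp (t * (m' * t)) * ∏ s, Real.exp (-(t * F (w s))) := by
    intro w
    rw [← Real.exp_sum, ← Real.exp_add]
    congr 1
    have : (∑ s, -(t * F (w s))) = -(t * ∑ s, F (w s)) := by
      rw [Finset.mul_sum, Finset.sum_neg_distrib]
    rw [this]; ring
  set H : (Fin m' → α) → ℝ := fun w => Real.exp (t * (m' * t - ∑ s, F (w s))) with hH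
  have hHmeas : Measurable H := by
    apply Real.measurable_exp.comp
    exact (measurable_const.mul (measurable_const.sub hSmeas))
  have hHnn : ∀ w, 0 ≤ H w := fun w => (Real.exp_pos _).le
  have hHbdd : ∀ w, H w ≤ Real.exp (t * (m' * t) + m' * t) := by
    intro w
    rw [hH]
    apply Real.exp_le_exp.2
    have : ∀ s : Fin m', -1 ≤ F (w s) := fun s => (abs_le.1 (hFb (w s))).1
    have hsum : -(m' : ℝ) ≤ ∑ s, F (w s) := by
      calc -(m' : ℝ) = ∑ _s : Fin m', (-1 : ℝ) := by simp
        _ ≤ ∑ s, F (w s) := Finset.sum_le_sum (fun s _ => this s)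
    nlinarith
  have hHint : Integrable H Pm := by
    refine Integrable.mono' (integrable_const (Real.exp (t * (m' * t) + m' * t)))
      hHmeas.aestronglyMeasurable ?_
    exact Filter.Eventually.of_forall fun w => by
      rw [Real.norm_eq_abs, abs_of_nonneg (hHnn w)]; exact hHbdd w
  -- step 1
  have step1 : (Pm {w : Fin m' → α | ∑ s, F (w s) < m' * t}).toReal ≤ ∫ w, H w ∂Pm := by
    have heq : (Pm {w : Fin m' → α | ∑ s, F (w s) < m' * t}).toReal
        = ∫ w, Set.indicator {w : Fin m' → α | ∑ s, F (w s) < m' * t} (fun _ => (1:ℝ)) w ∂Pm := by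
      rw [integral_indicator_const _ hBmeas]; simp [Measure.real]
    rw [heq]
    refine integral_mono ((integrable_const (1:ℝ)).indicator hBmeas) hHint ?_
    intro w
    by_cases hw : w ∈ {w : Fin m' → α | ∑ s, F (w s) < m' * t}
    · rw [Set.indicator_of_mem hw]
      apply Real.one_le_exp
      have : ∑ s, F (w s) < m' * t := hw
      nlinarith
    · rw [Set.indicator_of_notMem hw]; exact hHnn w
  -- step 2
  have step2 : ∫ w, H w ∂Pm
      = Real.exp (t * (m' * t)) * (∫ z, Real.exp (-(t * F z)) ∂μ) ^ m' := by
    calc ∫ w, H w ∂Pm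
        = ∫ w, Real.exp (t * (m' * t)) * ∏ s, Real.exp (-(t * F (w s))) ∂Pm := by
          exact integral_congr_ae (Filter.Eventually.of_forall fun w => hHprod w)
      _ = Real.exp (t * (m' * t)) * ∫ w, ∏ s, Real.exp (-(t * F (w s))) ∂Pm := by
          rw [integral_const_mul]
      _ = Real.exp (t * (m' * t)) * (∫ z, Real.exp (-(t * F z)) ∂μ) ^ m' := by
          rw [hPm, integral_pi_pow μ m' (fun z => Real.exp (-(t * F z)))]
  -- step 3
  have hexpint : Integrable (fun z => Real.exp (-(t * F z))) μ := by
    refine Integrable.mono' (integrable_const (Real.exp t))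
      (Real.measurable_exp.comp (measurable_const.mul hF).neg).aestronglyMeasurable ?_
    refine Filter.Eventually.of_forall fun z => ?_
    rw [Real.norm_eq_abs, abs_of_nonneg (Real.exp_pos _).le]
    apply Real.exp_le_exp.2
    have := (abs_le.1 (hFb z)).1
    nlinarith
  have hFint : Integrable F μ := by
    refine Integrable.mono' (integrable_const 1) hF.aestronglyMeasurable ?_
    exact Filter.Eventually.of_forall fun z => by rw [Real.norm_eq_abs]; exact hFb z
  have step3 : ∫ z, Real.exp (-(t * F z)) ∂μ ≤ Real.cosh t - γ * Real.sinh t := by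
    have h1 : ∫ z, Real.exp (-(t * F z)) ∂μ ≤ ∫ z, Real.cosh t - F z * Real.sinh t ∂μ := by
      refine integral_mono hexpint ?_ (fun z => exp_le_cosh_sub_mul_sinh (hFb z))
      exact (integrable_const (Real.cosh t)).sub (hFint.mul_const _)
    have h2 : ∫ z, Real.cosh t - F z * Real.sinh t ∂μ
        = Real.cosh t - (∫ z, F z ∂μ) * Real.sinh t := by
      rw [integral_sub (integrable_const _) (hFint.mul_const _), integral_const,
        integral_mul_const]
      simp
    have h3 : (∫ z, F z ∂μ) * Real.sinh t ≥ γ * Real.sinh t :=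
      mul_le_mul_of_nonneg_right hmean (by positivity) 
    linarith [h1, h2.le, h2.ge]
  have hintnn : 0 ≤ ∫ z, Real.exp (-(t * F z)) ∂μ :=
    integral_nonneg fun z => (Real.exp_pos _).le
  have step4 : (∫ z, Real.exp (-(t * F z)) ∂μ) ^ m' ≤ (Real.exp (-(3 * γ^2 / 8))) ^ m' := by
    have hkey := key_scalar hγ0 hγ1
    calc (∫ z, Real.exp (-(t * F z)) ∂μ) ^ m'
        ≤ (Real.cosh t - γ * Real.sinh t) ^ m' := pow_le_pow_left₀ hintnn step3 m'
      _ ≤ (Real.exp (-(3 * γ^2 / 8))) ^ m' :=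
          pow_le_pow_left₀ (le_trans hintnn step3) hkey m'
  calc (Pm {w : Fin m' → α | ∑ s, F (w s) < m' * (γ/2)}).toReal
      ≤ ∫ w, H w ∂Pm := step1
    _ = Real.exp (t * (m' * t)) * (∫ z, Real.exp (-(t * F z)) ∂μ) ^ m' := step2
    _ ≤ Real.exp (t * (m' * t)) * (Real.exp (-(3 * γ^2 / 8))) ^ m' := by
        apply mul_le_mul_of_nonneg_left step4 (Real.exp_pos _).le
    _ = Real.exp (-(m' * γ^2 / 8)) := by
        rw [← Real.exp_nat_mul, ← Real.exp_add]
        congr 1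
        rw [ht]; ring

lemma stdGaussian_prob (d : ℕ) : IsProbabilityMeasure (stdGaussian d) := by
  unfold _root_.stdGaussian
  exact Measure.isProbabilityMeasure_map
    ((EuclideanSpace.equiv (Fin d) ℝ).symm.continuous.measurable).aemeasurable


/-- **Lemma E.2 (separator at initialization).** If `γ_v̄(X,Y) ≥ γ` for some `v̄ ∈ F_B` and
`m' ≥ 8 ln(2n/δ)/γ²`, then with probability at least `1 − δ` over the coupled random
initialization there is `U ∈ ℝ^{m×d}` with row norms at most `1/√m` and `‖U‖_F ≤ 1` such that
`y_i f_i^{(0)}(U) ≥ γ/2` simultaneously for all `i ∈ [n]`. -/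
theorem separator_at_initialization (d n m' : ℕ) (hn : 0 < n) (hm' : 0 < m')
    (x : Fin n → E d) (hx : ∀ i, ‖x i‖ = 1)
    (y : Fin n → ℝ) (hy : ∀ i, y i = 1 ∨ y i = -1)
    (γ : ℝ) (hγ : 0 < γ)
    (v : E d → E d) (hv : v ∈ FB d) (hmarg : ∀ i, γ ≤ y i * mIntegral d v (x i))
    (δ : ℝ) (hδ0 : 0 < δ) (hδ1 : δ < 1)
    (β : ℝ) (hβ : 0 < β)
    (hm : 8 * Real.log (2 * n / δ) / γ ^ 2 ≤ (m' : ℝ)) :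
    1 - δ ≤ ((Measure.pi fun _ : Fin m' => stdGaussian d)
      {w' : Fin m' → E d | ∃ U : Fin (2 * m') → E d,
        (∀ s, ‖U s‖ ≤ (Real.sqrt (2 * m'))⁻¹) ∧
        Real.sqrt (∑ s, ‖U s‖ ^ 2) ≤ 1 ∧
        ∀ i, γ / 2 ≤ y i * fZero d m' β w' U (x i)}).toReal := by
  haveI := stdGaussian_prob d
  set Pm := Measure.pi fun _ : Fin m' => stdGaussian d with hPmdef
  haveI : IsProbabilityMeasure Pm := by rw [hPmdef]; infer_instance
  set g : Fin n → E d → ℝ :=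
    fun i z => if 0 < (inner ℝ (x i) z : ℝ) then (inner ℝ (v z) (x i) : ℝ) else 0 with hg
  have hgb : ∀ (i : Fin n) z, |g i z| ≤ 1 := by
    intro i z
    rw [hg]
    by_cases h : 0 < (inner ℝ (x i) z : ℝ)
    · simp only [if_pos h]
      calc |(inner ℝ (v z) (x i) : ℝ)| ≤ ‖v z‖ * ‖x i‖ := abs_real_inner_le_norm _ _
        _ ≤ 1 * 1 := by
            apply mul_le_mul (hv z) (le_of_eq (hx i)) (norm_nonneg _) zero_le_one
        _ = 1 := by norm_num
    · simp only [if_neg h]; norm_num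
  have hgint : ∀ i, Integrable (g i) (stdGaussian d) := by
    intro i
    by_contra hni
    have h0 : mIntegral d v (x i) = 0 := by
      rw [mIntegral, integral_undef hni]
    have := hmarg i
    rw [h0, mul_zero] at this
    linarith
  have hexG : ∀ i : Fin n, ∃ G : E d → ℝ, Measurable G ∧ (∀ z, |G z| ≤ 1) ∧
      G =ᵐ[stdGaussian d] g i := by
    intro i
    have hae := (hgint i).1
    refine ⟨fun z => max (-1) (min 1 (hae.mk _ z)), ?_, ?_, ?_⟩
    · exact measurable_const.max (measurable_const.min hae.stronglyMeasurable_mk.measurable)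
    · intro z
      rw [abs_le]
      exact ⟨le_max_left _ _, max_le (by norm_num) (min_le_left _ _)⟩
    · filter_upwards [hae.ae_eq_mk] with z hz
      rw [← hz]
      have hb := hgb i z
      rw [abs_le] at hb
      rw [min_eq_right hb.2, max_eq_right hb.1]
  choose G hGmeas hGb hGae using hexG
  set F : Fin n → E d → ℝ := fun i z => y i * G i z with hF
  have absy : ∀ i, |y i| = 1 := by
    intro i; rcases hy i with h | h <;> rw [h] <;> norm_num
  have hFb : ∀ i z, |F i z| ≤ 1 := by
    intro i z
    rw [hF]; simp only
    rw [abs_mul, absy i, one_mul]; exact hGb i z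
  have hFmeas : ∀ i, Measurable (F i) := fun i => measurable_const.mul (hGmeas i)
  have hGint : ∀ i, ∫ z, G i z ∂stdGaussian d = mIntegral d v (x i) := by
    intro i
    rw [mIntegral]
    exact integral_congr_ae (hGae i)
  have hFmean : ∀ i, γ ≤ ∫ z, F i z ∂stdGaussian d := by
    intro i
    rw [hF]; simp only
    rw [integral_const_mul, hGint i]
    exact hmarg i
  have hFint : ∀ i, Integrable (F i) (stdGaussian d) := by
    intro i
    refine Integrable.mono' (integrable_const 1) (hFmeas i).aestronglyMeasurable ?_
    exact Filter.Eventually.of_forall fun z => by rw [Real.norm_eq_abs]; exact hFb i z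
  have hγ1 : γ ≤ 1 := by
    have h1 := hFmean ⟨0, hn⟩
    have h2 : ∫ z, F ⟨0, hn⟩ z ∂stdGaussian d ≤ 1 := by
      calc ∫ z, F ⟨0, hn⟩ z ∂stdGaussian d ≤ ∫ _z, (1:ℝ) ∂stdGaussian d :=
            integral_mono (hFint _) (integrable_const 1) (fun z => (abs_le.1 (hFb _ z)).2)
        _ = 1 := by simp
    linarith
  -- bad events and Chernoff
  set Bad : Fin n → Set (Fin m' → E d) := fun i => {w | ∑ s, F i (w s) < m' * (γ/2)} with hBad
  have hBadmeas : ∀ i, MeasurableSet (Bad i) := by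
    intro i
    exact measurableSet_lt
      (Finset.measurable_sum _ (fun s _ => (hFmeas i).comp (measurable_pi_apply s)))
      measurable_const
  have hBadbd : ∀ i, (Pm (Bad i)).toReal ≤ Real.exp (-(m' * γ^2 / 8)) := by
    intro i
    exact chernoff_bound (stdGaussian d) m' γ hγ hγ1 (F i) (hFmeas i) (hFb i) (hFmean i)
  have h2n : (0:ℝ) < 2 * n := by positivity
  have hexp_le : Real.exp (-(m' * γ^2 / 8)) ≤ δ / (2*n) := by
    have hγ2 : (0:ℝ) < γ^2 := by positivity
    have hlog : 8 * Real.log (2 * n / δ) ≤ m' * γ^2 := by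
      rw [div_le_iff₀ hγ2] at hm
      linarith
    calc Real.exp (-(m' * γ^2 / 8)) ≤ Real.exp (-(Real.log (2 * n / δ))) := by
          apply Real.exp_le_exp.2; linarith
      _ = (2 * n / δ)⁻¹ := by rw [Real.exp_neg, Real.exp_log (by positivity)]
      _ = δ / (2 * n) := by rw [inv_div]
  have hδ2n : (0:ℝ) ≤ δ / (2*n) := by positivity
  have hBadE : ∀ i, Pm (Bad i) ≤ ENNReal.ofReal (δ / (2*n)) := by
    intro i
    rw [ENNReal.le_ofReal_iff_toReal_le (measure_ne_top Pm _) hδ2n]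
    exact (hBadbd i).trans hexp_le
  have hUnion : Pm (⋃ i, Bad i) ≤ ENNReal.ofReal (δ/2) := by
    calc Pm (⋃ i, Bad i) ≤ ∑' i, Pm (Bad i) := measure_iUnion_le _
      _ = ∑ i, Pm (Bad i) := tsum_fintype _
      _ ≤ ∑ _i : Fin n, ENNReal.ofReal (δ / (2*n)) := Finset.sum_le_sum fun i _ => hBadE i
      _ = (n : ℝ≥0∞) * ENNReal.ofReal (δ / (2*n)) := by
          rw [Finset.sum_const, Finset.card_univ, Fintype.card_fin, nsmul_eq_mul]
      _ = ENNReal.ofReal (n * (δ / (2*n))) := by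
          rw [ENNReal.ofReal_mul (by positivity), ENNReal.ofReal_natCast]
      _ = ENNReal.ofReal (δ/2) := by
          congr 1
          field_simp
  set A : Set (Fin m' → E d) := ⋂ i, (Bad i)ᶜ with hA
  have hAmeas : MeasurableSet A := MeasurableSet.iInter fun i => (hBadmeas i).compl
  have hAc : Aᶜ = ⋃ i, Bad i := by rw [hA, Set.compl_iInter]; simp
  have hAlow : 1 - δ/2 ≤ (Pm A).toReal := by
    have h1 : (Pm Aᶜ).toReal ≤ δ/2 := by
      apply ENNReal.toReal_le_of_le_ofReal (by positivity)
      rw [hAc]; exact hUnion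
    have h2 : (Pm A).toReal + (Pm Aᶜ).toReal = 1 := by
      have h3 := measure_add_measure_compl (μ := Pm) hAmeas
      rw [measure_univ] at h3
      have h4 := congrArg ENNReal.toReal h3
      rw [ENNReal.toReal_add (measure_ne_top _ _) (measure_ne_top _ _)] at h4
      simpa using h4
    linarith
  -- a.e. transfer set
  set T : Set (Fin m' → E d) := {w | ∀ (i : Fin n) (s : Fin m'), G i (w s) = g i (w s)} with hT
  have hTc : Pm Tᶜ = 0 := by
    have hsub : Tᶜ ⊆ ⋃ (i : Fin n), ⋃ (s : Fin m'),
        (Function.eval s) ⁻¹' {z : E d | G i z ≠ g i z} := by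
      intro w hw
      simp only [hT, Set.mem_compl_iff, Set.mem_setOf_eq, not_forall] at hw
      obtain ⟨i, s, his⟩ := hw
      exact Set.mem_iUnion.2 ⟨i, Set.mem_iUnion.2 ⟨s, his⟩⟩
    refine measure_mono_null hsub ?_
    refine measure_iUnion_null fun i => measure_iUnion_null fun s => ?_
    rw [hPmdef]
    apply Measure.pi_eval_preimage_null
    exact ae_iff.1 (hGae i)
  -- the inclusion
  have hsubS : A ∩ T ⊆ {w' : Fin m' → E d | ∃ U : Fin (2 * m') → E d,
      (∀ s, ‖U s‖ ≤ (Real.sqrt (2 * m'))⁻¹) ∧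
      Real.sqrt (∑ s, ‖U s‖ ^ 2) ≤ 1 ∧
      ∀ i, γ / 2 ≤ y i * fZero d m' β w' U (x i)} := by
    rintro w ⟨hwA, hwT⟩
    set c : ℝ := (Real.sqrt (2 * m'))⁻¹ with hc
    have h2m : (0:ℝ) < 2 * m' := by positivity
    have hcpos : 0 < c := by
      rw [hc]
      exact inv_pos.2 (Real.sqrt_pos.2 h2m)
    have hc2 : c^2 = (2 * (m':ℝ))⁻¹ := by
      rw [hc, ← Real.sqrt_inv, Real.sq_sqrt (by positivity)]
    set U : Fin (2 * m') → E d := fun s =>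
      if h : (s:ℕ) < m' then c • v (w ⟨s, h⟩)
      else -(c • v (w ⟨(s:ℕ) - m', by have := s.isLt; omega⟩)) with hU
    have hnorm : ∀ s, ‖U s‖ ≤ c := by
      intro s
      simp only [hU]
      by_cases h : (s:ℕ) < m'
      · rw [dif_pos h, norm_smul, Real.norm_eq_abs, abs_of_pos hcpos]
        calc c * ‖v (w ⟨s, h⟩)‖ ≤ c * 1 := mul_le_mul_of_nonneg_left (hv _) hcpos.le
          _ = c := mul_one c
      · rw [dif_neg h, norm_neg, norm_smul, Real.norm_eq_abs, abs_of_pos hcpos]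
        calc c * ‖v (w _)‖ ≤ c * 1 := mul_le_mul_of_nonneg_left (hv _) hcpos.le
          _ = c := mul_one c
    refine ⟨U, hnorm, ?_, ?_⟩
    · rw [show (1:ℝ) = Real.sqrt 1 by simp]
      apply Real.sqrt_le_sqrt
      calc ∑ s, ‖U s‖^2 ≤ ∑ _s : Fin (2*m'), c^2 :=
            Finset.sum_le_sum (fun s _ => pow_le_pow_left₀ (norm_nonneg _) (hnorm s) 2)
        _ = (2*m' : ℝ) * c^2 := by
            rw [Finset.sum_const, Finset.card_univ, Fintype.card_fin, nsmul_eq_mul]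
            push_cast; ring
        _ = 1 := by rw [hc2]; push_cast; field_simp
    · intro i
      -- sum computation
      set e : Fin m' ⊕ Fin m' ≃ Fin (2 * m') :=
        finSumFinEquiv.trans (finCongr (by omega)) with he
      have he1 : ∀ s' : Fin m', ((e (Sum.inl s') : Fin (2*m')) : ℕ) = (s' : ℕ) := by
        intro s'; simp [he, finCongr]
      have he2 : ∀ s' : Fin m', ((e (Sum.inr s') : Fin (2*m')) : ℕ) = m' + (s' : ℕ) := by
        intro s'; simp [he, finCongr, Nat.add_comm]
      set f : Fin (2*m') → ℝ := fun s => aSign m' s *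
        (if 0 < (inner ℝ (W0init d m' β w s) (x i) : ℝ) then (inner ℝ (U s) (x i) : ℝ) else 0)
        with hf
      have hcond : ∀ s' : Fin m',
          (0 < (inner ℝ (β • w s') (x i) : ℝ)) ↔ (0 < (inner ℝ (x i) (w s') : ℝ)) := by
        intro s'
        rw [real_inner_smul_left, real_inner_comm]
        exact mul_pos_iff_of_pos_left hβ
      have hterm1 : ∀ s' : Fin m', f (e (Sum.inl s')) = c * g i (w s') := by
        intro s'
        have hlt : ((e (Sum.inl s') : Fin (2*m')) : ℕ) < m' := by rw [he1]; exact s'.isLt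
        have hidx : (⟨((e (Sum.inl s') : Fin (2*m')) : ℕ), hlt⟩ : Fin m') = s' :=
          Fin.ext (he1 s')
        rw [hf]
        simp only [aSign, W0init, hU]
        rw [if_pos hlt, dif_pos hlt, dif_pos hlt, hidx, one_mul]
        rw [hg]
        simp only
        by_cases hP : 0 < (inner ℝ (x i) (w s') : ℝ)
        · rw [if_pos ((hcond s').2 hP), if_pos hP, real_inner_smul_left]
        · rw [if_neg (fun hb => hP ((hcond s').1 hb)), if_neg hP]; ring
      have hterm2 : ∀ s' : Fin m', f (e (Sum.inr s')) = c * g i (w s') := by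
        intro s'
        have hnlt : ¬ ((e (Sum.inr s') : Fin (2*m')) : ℕ) < m' := by
          rw [he2]; omega
        have hidx : (⟨((e (Sum.inr s') : Fin (2*m')) : ℕ) - m', by
            have := (e (Sum.inr s')).isLt; omega⟩ : Fin m') = s' := by
          apply Fin.ext
          simp only [he2]
          omega
        rw [hf]
        simp only [aSign, W0init, hU]
        rw [if_neg hnlt, dif_neg hnlt, dif_neg hnlt, hidx]
        rw [hg]
        simp only
        by_cases hP : 0 < (inner ℝ (x i) (w s') : ℝ)
        · rw [if_pos ((hcond s').2 hP), if_pos hP, inner_neg_left, real_inner_smul_left]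
          ring
        · rw [if_neg (fun hb => hP ((hcond s').1 hb)), if_neg hP]; ring
      have hsumeq : ∑ s : Fin (2*m'), f s = ∑ s' : Fin m', 2 * (c * g i (w s')) := by
        rw [← Equiv.sum_comp e f, Fintype.sum_sum_type]
        rw [← Finset.sum_add_distrib]
        apply Finset.sum_congr rfl
        intro s' _
        rw [hterm1 s', hterm2 s']
        ring
      have hfz : fZero d m' β w U (x i) = (m' : ℝ)⁻¹ * ∑ s' : Fin m', g i (w s') := by
        rw [fZero, ← hc, ← hf, hsumeq, ← Finset.mul_sum, ← Finset.mul_sum]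
        have : c * (2 * c) = (m' : ℝ)⁻¹ := by
          have : c * (2 * c) = 2 * c^2 := by ring
          rw [this, hc2]
          rw [mul_inv]
          field_simp
        rw [← mul_assoc, ← this]
        ring_nf
      have hwTi : ∀ s' : Fin m', G i (w s') = g i (w s') := fun s' => hwT i s'
      have hyf : y i * fZero d m' β w U (x i) = (m' : ℝ)⁻¹ * ∑ s' : Fin m', F i (w s') := by
        rw [hfz, hF]
        simp only
        rw [Finset.mul_sum, Finset.mul_sum, Finset.mul_sum]
        apply Finset.sum_congr rfl
        intro s' _
        rw [hwTi s']
        ring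
      have hwAi : (m' : ℝ) * (γ/2) ≤ ∑ s' : Fin m', F i (w s') := by
        have := Set.mem_iInter.1 hwA i
        rw [Set.mem_compl_iff, hBad] at this
        simp only [Set.mem_setOf_eq, not_lt] at this
        exact this
      rw [hyf]
      have hm'pos : (0:ℝ) < m' := by exact_mod_cast hm'
      calc γ/2 = (m' : ℝ)⁻¹ * ((m' : ℝ) * (γ/2)) := by field_simp
        _ ≤ (m' : ℝ)⁻¹ * ∑ s' : Fin m', F i (w s') := by
            apply mul_le_mul_of_nonneg_left hwAi (by positivity)
  have hPAT : Pm (A ∩ T) = Pm A := measure_inter_conull hTc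
  have hmono := measure_mono (μ := Pm) hsubS
  have hend : (Pm (A ∩ T)).toReal ≤ (Pm {w' : Fin m' → E d | ∃ U : Fin (2 * m') → E d,
      (∀ s, ‖U s‖ ≤ (Real.sqrt (2 * m'))⁻¹) ∧
      Real.sqrt (∑ s, ‖U s‖ ^ 2) ≤ 1 ∧
      ∀ i, γ / 2 ≤ y i * fZero d m' β w' U (x i)}).toReal :=
    ENNReal.toReal_mono (measure_ne_top _ _) hmono
  have : 1 - δ ≤ (Pm (A ∩ T)).toReal := by
    rw [hPAT]; linarith
  linarith


end
end

section
/- Constant-labels margin bound (Example 3): There exists an absolute constant c > 0 such that for every d ≥ 1 and every x ∈ ℝ^d with ‖x‖₂ = 1, ∫ ⟨z/‖z‖₂, x⟩ 𝟙[⟨x, z⟩ > 0] dμ_N(z) ≥ c/√d. Consequently, for any data set X of unit vectors in ℝ^d with all labels y_i = +1, the margin satisfies γ(X,Y) ≥ c/√d. -/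
open MeasureTheory ProbabilityTheory
open scoped BigOperators ENNReal

noncomputable section

open Real Set Filter

namespace ExAux


lemma pdf_smul_eq (g : ℝ → ℝ) (t : ℝ) :
    (gaussianPDFReal 0 1 t).toNNReal • g t = gaussianPDFReal 0 1 t * g t := by
  rw [NNReal.smul_def, Real.coe_toNNReal _ (gaussianPDFReal_nonneg 0 1 t), smul_eq_mul]

lemma integral_gaussianReal_eq (g : ℝ → ℝ) :
    ∫ t, g t ∂(gaussianReal 0 1) = ∫ t, gaussianPDFReal 0 1 t * g t := by
  rw [gaussianReal_of_var_ne_zero _ one_ne_zero]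
  have h : (gaussianPDF 0 1) = fun t => ((gaussianPDFReal 0 1 t).toNNReal : ℝ≥0∞) := by
    ext t; rw [gaussianPDF_def]; rfl
  rw [h, integral_withDensity_eq_integral_smul
    ((measurable_gaussianPDFReal 0 1).real_toNNReal) g]
  congr 1; ext t; exact pdf_smul_eq g t

lemma integrable_gaussianReal_iff (g : ℝ → ℝ) :
    Integrable g (gaussianReal 0 1) ↔
      Integrable (fun t => gaussianPDFReal 0 1 t * g t) volume := by
  rw [gaussianReal_of_var_ne_zero _ one_ne_zero]
  have h : (gaussianPDF 0 1) = fun t => ((gaussianPDFReal 0 1 t).toNNReal : ℝ≥0∞) := by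
    ext t; rw [gaussianPDF_def]; rfl
  rw [h, integrable_withDensity_iff_integrable_smul
    ((measurable_gaussianPDFReal 0 1).real_toNNReal)]
  constructor <;> intro hh <;> refine hh.congr (Filter.Eventually.of_forall fun t => ?_)
  · exact pdf_smul_eq g t
  · exact (pdf_smul_eq g t).symm


lemma hasDerivAt_negexp (t : ℝ) :
    HasDerivAt (fun s : ℝ => -Real.exp (-s^2/2)) (t * Real.exp (-t^2/2)) t := by
  have h1 : HasDerivAt (fun s : ℝ => -s^2/2) (-t) t := by
    have := ((hasDerivAt_pow 2 t).neg).div_const 2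
    simpa using this.congr_deriv (by ring)
  have := (h1.exp).neg
  exact this.congr_deriv (by ring)

lemma tendsto_negexp : Tendsto (fun s : ℝ => -Real.exp (-s^2/2)) atTop (nhds 0) := by
  rw [show (0:ℝ) = -0 by ring]
  apply Tendsto.neg
  apply Real.tendsto_exp_atBot.comp
  have : Tendsto (fun s : ℝ => s^2/2) atTop atTop :=
    (tendsto_pow_atTop two_ne_zero).atTop_div_const (by norm_num)
  simpa using (tendsto_neg_atBot_iff.mpr this).congr (fun s => by ring)

lemma integrable_mul_negexp : Integrable (fun t : ℝ => t * Real.exp (-t^2/2)) := by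
  have := integrable_mul_exp_neg_mul_sq (b := 1/2) (by norm_num)
  exact this.congr (Filter.Eventually.of_forall fun t => by ring_nf)

lemma integral_Ioi_mul_negexp (a : ℝ) :
    ∫ t in Ioi a, t * Real.exp (-t^2/2) = Real.exp (-a^2/2) := by
  have := integral_Ioi_of_hasDerivAt_of_tendsto' (a := a)
    (fun t _ => hasDerivAt_negexp t) integrable_mul_negexp.integrableOn tendsto_negexp
  rw [this]; ring


lemma rpow_two_eq (x : ℝ) : x ^ (2:ℝ) = x ^ (2:ℕ) := by
  rw [show (2:ℝ) = ((2:ℕ):ℝ) by norm_num, Real.rpow_natCast]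

lemma integrable_sq_mul_negexp : Integrable (fun t : ℝ => t^2 * Real.exp (-t^2/2)) := by
  have := integrable_rpow_mul_exp_neg_mul_sq (b := 1/2) (by norm_num) (s := 2) (by norm_num)
  refine this.congr (Filter.Eventually.of_forall fun t => ?_)
  simp only [rpow_two_eq]; ring_nf

lemma integrable_negexp : Integrable (fun t : ℝ => Real.exp (-t^2/2)) := by
  have := integrable_exp_neg_mul_sq (b := 1/2) (by norm_num)
  exact this.congr (Filter.Eventually.of_forall fun t => by ring_nf)

lemma integral_negexp : ∫ t : ℝ, Real.exp (-t^2/2) = Real.sqrt (2 * π) := by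
  have := integral_gaussian (1/2)
  rw [show π / (1/2) = 2 * π by ring] at this
  rw [← this]
  congr 1; ext t; ring_nf

lemma tendsto_mul_negexp_atTop :
    Tendsto (fun t : ℝ => t * Real.exp (-t^2/2)) atTop (nhds 0) := by
  have ho := rpow_mul_exp_neg_mul_sq_isLittleO_exp_neg (b := 1/2) (by norm_num) (s := 1)
  have h0 : Tendsto (fun x : ℝ => Real.exp (-(1/2) * x)) atTop (nhds 0) := by
    apply Real.tendsto_exp_atBot.comp
    exact (tendsto_const_mul_atBot_of_neg (by norm_num)).mpr tendsto_id
  have := ho.trans_tendsto h0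
  apply this.congr'
  filter_upwards [eventually_gt_atTop (0:ℝ)] with t ht
  rw [Real.rpow_one]; ring_nf

-- f t = -t * exp (-t^2/2), f' t = (t^2 - 1) * exp (-t^2/2)
lemma hasDerivAt_f2 (t : ℝ) :
    HasDerivAt (fun s : ℝ => -s * Real.exp (-s^2/2))
      ((t^2 - 1) * Real.exp (-t^2/2)) t := by
  have h1 : HasDerivAt (fun s : ℝ => -s^2/2) (-t) t := by
    have := ((hasDerivAt_pow 2 t).neg).div_const 2
    simpa using this.congr_deriv (by ring)
  have h2 : HasDerivAt (fun s : ℝ => Real.exp (-s^2/2)) (Real.exp (-t^2/2) * -t) t := h1.exp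
  have := ((hasDerivAt_id t).neg).mul h2
  exact this.congr_deriv (by simp only [Pi.neg_apply, id_eq]; ring)

lemma integrable_f2' : Integrable (fun t : ℝ => (t^2 - 1) * Real.exp (-t^2/2)) := by
  have := integrable_sq_mul_negexp.sub integrable_negexp
  exact this.congr (Filter.Eventually.of_forall fun t => by simp; ring)

lemma tendsto_f2_atTop :
    Tendsto (fun s : ℝ => -s * Real.exp (-s^2/2)) atTop (nhds 0) := by
  have := tendsto_mul_negexp_atTop.neg
  simpa using this.congr fun t => by ring

lemma tendsto_f2_atBot :
    Tendsto (fun s : ℝ => -s * Real.exp (-s^2/2)) atBot (nhds 0) := by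
  have hcomp : Tendsto (fun t : ℝ => -t) atBot atTop := tendsto_neg_atBot_atTop
  have := tendsto_mul_negexp_atTop.comp hcomp
  apply this.congr
  intro t
  simp [Function.comp, neg_sq]

lemma integral_sq_negexp : ∫ t : ℝ, (t^2 - 1) * Real.exp (-t^2/2) = 0 := by
  have hIic : ∫ t in Iic (0:ℝ), (t^2 - 1) * Real.exp (-t^2/2) = 0 := by
    have := integral_Iic_of_hasDerivAt_of_tendsto (a := (0:ℝ))
      (f := fun s : ℝ => -s * Real.exp (-s^2/2))
      ((hasDerivAt_f2 0).continuousAt.continuousWithinAt)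
      (fun t _ => hasDerivAt_f2 t) integrable_f2'.integrableOn tendsto_f2_atBot
    simpa using this
  have hIoi : ∫ t in Ioi (0:ℝ), (t^2 - 1) * Real.exp (-t^2/2) = 0 := by
    have := integral_Ioi_of_hasDerivAt_of_tendsto' (a := (0:ℝ))
      (f := fun s : ℝ => -s * Real.exp (-s^2/2))
      (fun t _ => hasDerivAt_f2 t) integrable_f2'.integrableOn tendsto_f2_atTop
    simpa using this
  have := integral_add_compl (measurableSet_Iic (a := (0:ℝ))) integrable_f2'
  rw [compl_Iic] at this
  rw [← this, hIic, hIoi]; ring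

lemma integral_sq_mul_negexp :
    ∫ t : ℝ, t^2 * Real.exp (-t^2/2) = Real.sqrt (2 * π) := by
  have h := integral_sub integrable_sq_mul_negexp integrable_negexp
  have h2 : ∫ t : ℝ, (t^2 * Real.exp (-t^2/2) - Real.exp (-t^2/2)) = 0 := by
    rw [← integral_sq_negexp]; congr 1; ext t; ring
  rw [h2] at h
  have := sub_eq_zero.mp h.symm
  rw [this, integral_negexp]

lemma gaussianPDFReal_zero_one (t : ℝ) :
    gaussianPDFReal 0 1 t = (Real.sqrt (2*π))⁻¹ * Real.exp (-t^2/2) := by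
  simp [gaussianPDFReal]

lemma sqrt_two_pi_pos : 0 < Real.sqrt (2*π) :=
  Real.sqrt_pos.mpr (by positivity)

lemma tail_integrable (a : ℝ) :
    Integrable (fun t => if a < t then t else 0) (gaussianReal 0 1) := by
  rw [integrable_gaussianReal_iff]
  refine Integrable.mono (integrable_mul_negexp.const_mul ((Real.sqrt (2*π))⁻¹))
    ?_ (Filter.Eventually.of_forall fun t => ?_)
  · refine ((measurable_gaussianPDFReal 0 1).mul ?_).aestronglyMeasurable
    exact Measurable.ite measurableSet_Ioi measurable_id measurable_const
  · rw [gaussianPDFReal_zero_one, Real.norm_eq_abs, Real.norm_eq_abs]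
    by_cases h : a < t
    · simp only [h, if_pos]
      rw [show (Real.sqrt (2*π))⁻¹ * rexp (-t^2/2) * t
          = (Real.sqrt (2*π))⁻¹ * (t * rexp (-t^2/2)) by ring]
    · simp only [h, if_neg, not_false_iff, mul_zero, abs_zero]
      positivity

lemma tail_value (a : ℝ) :
    ∫ t, (if a < t then t else 0) ∂(gaussianReal 0 1)
      = Real.exp (-a^2/2) / Real.sqrt (2*π) := by
  rw [integral_gaussianReal_eq]
  have h1 : (fun t => gaussianPDFReal 0 1 t * (if a < t then t else 0))
      = Set.indicator (Ioi a) (fun t => (Real.sqrt (2*π))⁻¹ * (t * Real.exp (-t^2/2))) := by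
    ext t
    rw [gaussianPDFReal_zero_one]
    by_cases h : a < t <;> simp [Set.indicator, h] <;> ring
  rw [h1, integral_indicator measurableSet_Ioi, integral_const_mul,
    integral_Ioi_mul_negexp]
  exact (div_eq_inv_mul _ _).symm

lemma sq_integrable : Integrable (fun t : ℝ => t^2) (gaussianReal 0 1) := by
  rw [integrable_gaussianReal_iff]
  refine (integrable_sq_mul_negexp.const_mul ((Real.sqrt (2*π))⁻¹)).congr
    (Filter.Eventually.of_forall fun t => ?_)
  simp only [gaussianPDFReal_zero_one]; ring

lemma sq_value : ∫ t, t^2 ∂(gaussianReal 0 1) = 1 := by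
  rw [integral_gaussianReal_eq]
  have h1 : (fun t => gaussianPDFReal 0 1 t * t^2)
      = fun t => (Real.sqrt (2*π))⁻¹ * (t^2 * Real.exp (-t^2/2)) := by
    ext t; rw [gaussianPDFReal_zero_one]; ring
  rw [h1, integral_const_mul, integral_sq_mul_negexp,
    inv_mul_cancel₀ (ne_of_gt sqrt_two_pi_pos)]




lemma pi_gaussian_eq (d : ℕ) :
    Measure.pi (fun _ : Fin d => gaussianReal 0 1)
      = (volume : Measure (Fin d → ℝ)).withDensity
          (fun w => ENNReal.ofReal (∏ i, gaussianPDFReal 0 1 (w i))) := by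
  refine Measure.pi_eq fun s hs => ?_
  rw [withDensity_apply _ (MeasurableSet.univ_pi hs),
    ← lintegral_indicator (MeasurableSet.univ_pi hs)]
  have hind : ∀ w : Fin d → ℝ,
      (Set.pi Set.univ s).indicator
        (fun w => ENNReal.ofReal (∏ i, gaussianPDFReal 0 1 (w i))) w
      = ENNReal.ofReal (∏ i, Set.indicator (s i) (gaussianPDFReal 0 1) (w i)) := by
    intro w
    by_cases hw : w ∈ Set.pi Set.univ s
    · rw [Set.indicator_of_mem hw]
      congr 1
      exact Finset.prod_congr rfl fun i _ =>
        (Set.indicator_of_mem (hw i (Set.mem_univ i)) _).symm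
    · rw [Set.indicator_of_notMem hw]
      rw [Set.mem_univ_pi] at hw
      push_neg at hw
      obtain ⟨i, hi⟩ := hw
      have h0 : Set.indicator (s i) (gaussianPDFReal 0 1) (w i) = 0 :=
        Set.indicator_of_notMem hi _
      rw [Finset.prod_eq_zero (Finset.mem_univ i) h0, ENNReal.ofReal_zero]
  simp_rw [hind]
  have hInt : ∀ i : Fin d, Integrable (Set.indicator (s i) (gaussianPDFReal 0 1)) :=
    fun i => (integrable_gaussianPDFReal 0 1).indicator (hs i)
  have hIntProd : Integrable
      (fun w : Fin d → ℝ => ∏ i, Set.indicator (s i) (gaussianPDFReal 0 1) (w i)) :=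
    Integrable.fintype_prod hInt
  have hnn : ∀ w : Fin d → ℝ,
      0 ≤ ∏ i, Set.indicator (s i) (gaussianPDFReal 0 1) (w i) :=
    fun w => Finset.prod_nonneg fun i _ =>
      Set.indicator_nonneg (fun t _ => gaussianPDFReal_nonneg 0 1 t) _
  rw [← ofReal_integral_eq_lintegral_ofReal hIntProd
    (Filter.Eventually.of_forall hnn)]
  rw [volume_pi, integral_fintype_prod_eq_prod
    (fun i => Set.indicator (s i) (gaussianPDFReal 0 1))]
  rw [ENNReal.ofReal_prod_of_nonneg (fun i _ =>
    integral_nonneg (Set.indicator_nonneg (fun t _ => gaussianPDFReal_nonneg 0 1 t)))]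
  refine Finset.prod_congr rfl fun i _ => ?_
  rw [integral_indicator (hs i),
    gaussianReal_apply_eq_integral 0 one_ne_zero (s i)]

lemma map_withDensity_equiv {α β : Type*} [MeasurableSpace α] [MeasurableSpace β]
    (e : α ≃ᵐ β) (μ : Measure α) (f : β → ℝ≥0∞) (hf : Measurable f) :
    (μ.withDensity (fun a => f (e a))).map e = (μ.map e).withDensity f := by
  ext s hs
  rw [Measure.map_apply e.measurable hs, withDensity_apply _ hs,
    withDensity_apply _ (e.measurable hs), setLIntegral_map hs hf e.measurable]

lemma measurable_prod_pdf (d : ℕ) :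
    Measurable (fun z : E d => ENNReal.ofReal (∏ i, gaussianPDFReal 0 1 (z i))) := by
  refine Measurable.ennreal_ofReal ?_
  refine Finset.measurable_prod _ fun i _ => ?_
  exact (measurable_gaussianPDFReal 0 1).comp ((measurable_pi_apply i).comp (WithLp.measurable_ofLp 2 _))

lemma stdGaussian_eq (d : ℕ) :
    stdGaussian d = (volume : Measure (E d)).withDensity
      (fun z => ENNReal.ofReal (∏ i, gaussianPDFReal 0 1 (z i))) := by
  unfold _root_.stdGaussian
  rw [pi_gaussian_eq]
  have hcoe : ⇑(EuclideanSpace.equiv (Fin d) ℝ).symm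
      = ⇑(MeasurableEquiv.toLp 2 (Fin d → ℝ)) := rfl
  rw [hcoe]
  have h := map_withDensity_equiv (MeasurableEquiv.toLp 2 (Fin d → ℝ))
    (volume : Measure (Fin d → ℝ))
    (fun z : E d => ENNReal.ofReal (∏ i, gaussianPDFReal 0 1 (z i)))
    (measurable_prod_pdf d)
  have hfun : (fun w : Fin d → ℝ => ENNReal.ofReal (∏ i, gaussianPDFReal 0 1 (w i)))
      = (fun a : Fin d → ℝ =>
          (fun z : E d => ENNReal.ofReal (∏ i, gaussianPDFReal 0 1 (z i)))
            ((MeasurableEquiv.toLp 2 (Fin d → ℝ)) a)) := rfl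
  rw [hfun, h, MeasurableEquiv.coe_toLp, (PiLp.volume_preserving_toLp (Fin d)).map_eq]



lemma prod_pdf_radial (d : ℕ) (z : E d) :
    ∏ i, gaussianPDFReal 0 1 (z i)
      = (Real.sqrt (2*π))⁻¹ ^ d * Real.exp (-‖z‖^2/2) := by
  simp only [gaussianPDFReal_zero_one]
  rw [Finset.prod_mul_distrib, Finset.prod_const, ← Real.exp_sum,
    Finset.card_univ, Fintype.card_fin]
  congr 1
  have hnorm : ‖z‖^2 = ∑ i, (z i)^2 := by
    rw [EuclideanSpace.norm_eq, Real.sq_sqrt (Finset.sum_nonneg fun i _ => sq_nonneg _)]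
    exact Finset.sum_congr rfl fun i _ => by rw [Real.norm_eq_abs, sq_abs]
  rw [hnorm, ← Finset.sum_div, ← Finset.sum_neg_distrib]

lemma stdGaussian_map_isometry (d : ℕ) (e : E d ≃ₗᵢ[ℝ] E d) :
    (stdGaussian d).map e = stdGaussian d := by
  rw [stdGaussian_eq]
  set em : E d ≃ᵐ E d := e.toHomeomorph.toMeasurableEquiv with hem
  have hcoe : ⇑e = ⇑em := rfl
  have hradial : (fun z : E d => ENNReal.ofReal (∏ i, gaussianPDFReal 0 1 (z i)))
      = (fun a : E d => (fun z : E d => ENNReal.ofReal (∏ i, gaussianPDFReal 0 1 (z i))) (em a)) := by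
    funext a
    simp only [prod_pdf_radial]
    have : ‖em a‖ = ‖a‖ := e.norm_map a
    rw [this]
  have hvol : (volume : Measure (E d)).map ⇑em = volume := e.measurePreserving.map_eq
  rw [hcoe, hradial, map_withDensity_equiv em volume _ (measurable_prod_pdf d),
    hvol, ← hradial]

lemma stdGaussian_map_eval (d : ℕ) (i : Fin d) :
    (stdGaussian d).map (fun z : E d => z i) = gaussianReal 0 1 := by
  unfold _root_.stdGaussian
  have hmeas : Measurable (fun z : E d => z i) := (measurable_pi_apply i).comp (WithLp.measurable_ofLp 2 _)
  rw [Measure.map_map hmeas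
    (EuclideanSpace.equiv (Fin d) ℝ).symm.continuous.measurable]
  have hcomp : ((fun z : E d => z i) ∘ ⇑(EuclideanSpace.equiv (Fin d) ℝ).symm)
      = fun w : Fin d → ℝ => w i := rfl
  rw [hcomp]
  ext s hs
  rw [Measure.map_apply (measurable_pi_apply i) hs]
  have hpre : (fun w : Fin d → ℝ => w i) ⁻¹' s
      = Set.pi Set.univ (Function.update (fun _ : Fin d => (Set.univ : Set ℝ)) i s) :=
    Set.eval_preimage
  rw [hpre, Measure.pi_pi]
  rw [Fintype.prod_eq_single i (fun j hj => by
    rw [Function.update_of_ne hj]; exact measure_univ)]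
  rw [Function.update_self]

instance stdGaussian_prob (d : ℕ) : IsProbabilityMeasure (stdGaussian d) :=
  Measure.isProbabilityMeasure_map
    (EuclideanSpace.equiv (Fin d) ℝ).symm.continuous.measurable.aemeasurable

lemma stdGaussian_map_inner (d : ℕ) (hd : 0 < d) (x : E d) (hx : ‖x‖ = 1) :
    (stdGaussian d).map (fun z : E d => (inner ℝ x z : ℝ)) = gaussianReal 0 1 := by
  set i0 : Fin d := ⟨0, hd⟩
  have hcard : Module.finrank ℝ (E d) = Fintype.card (Fin d) := by
    simp [finrank_euclideanSpace_fin]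
  have horth : Orthonormal ℝ (({i0} : Set (Fin d)).restrict (fun _ : Fin d => x)) := by
    constructor
    · intro i; exact hx
    · intro i j hij
      exact absurd (Subtype.ext (i.2.trans j.2.symm)) hij
  obtain ⟨b, hb⟩ := horth.exists_orthonormalBasis_extension_of_card_eq hcard
  have hbx : b i0 = x := hb i0 (Set.mem_singleton _)
  have hrepr : (fun z : E d => (inner ℝ x z : ℝ))
      = (fun w : E d => w i0) ∘ ⇑b.repr := by
    funext z
    simp only [Function.comp_apply]
    rw [← hbx, b.repr_apply_apply]
  have hmeas : Measurable (fun z : E d => z i0) := (measurable_pi_apply i0).comp (WithLp.measurable_ofLp 2 _)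
  rw [hrepr, ← Measure.map_map hmeas b.repr.continuous.measurable]
  rw [stdGaussian_map_isometry d b.repr, stdGaussian_map_eval d i0]


lemma norm_sq_eq_sum (d : ℕ) (z : E d) : ‖z‖^2 = ∑ i, (z i)^2 := by
  rw [EuclideanSpace.norm_eq, Real.sq_sqrt (Finset.sum_nonneg fun i _ => sq_nonneg _)]
  exact Finset.sum_congr rfl fun i _ => by rw [Real.norm_eq_abs, sq_abs]

lemma coord_sq_int (d : ℕ) (i : Fin d) :
    Integrable (fun z : E d => (z i)^2) (stdGaussian d) := by
  have hm : Measurable (fun z : E d => z i) := (measurable_pi_apply i).comp (WithLp.measurable_ofLp 2 _)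
  have h := sq_integrable
  rw [← stdGaussian_map_eval d i] at h
  exact (integrable_map_measure
    ((measurable_id.pow_const 2).aestronglyMeasurable) hm.aemeasurable).mp h

lemma coord_sq_val (d : ℕ) (i : Fin d) :
    ∫ z, (z i)^2 ∂(stdGaussian d) = 1 := by
  have hm : Measurable (fun z : E d => z i) := (measurable_pi_apply i).comp (WithLp.measurable_ofLp 2 _)
  have h := integral_map (φ := fun z : E d => z i) (μ := stdGaussian d)
    hm.aemeasurable (f := fun t : ℝ => t^2)
    ((measurable_id.pow_const 2).aestronglyMeasurable)
  rw [← h, stdGaussian_map_eval d i, sq_value]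

lemma snorm_int (d : ℕ) :
    Integrable (fun z : E d => ‖z‖^2) (stdGaussian d) := by
  have h : (fun z : E d => ‖z‖^2) = fun z => ∑ i, (z i)^2 :=
    funext (norm_sq_eq_sum d)
  rw [h]
  exact integrable_finset_sum _ fun i _ => coord_sq_int d i

lemma snorm_val (d : ℕ) :
    ∫ z, ‖z‖^2 ∂(stdGaussian d) = d := by
  have h : (fun z : E d => ‖z‖^2) = fun z => ∑ i, (z i)^2 :=
    funext (norm_sq_eq_sum d)
  rw [h, integral_finset_sum _ fun i _ => coord_sq_int d i]
  simp [coord_sq_val]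

lemma main_est (d : ℕ) (hd : 1 ≤ d) (x : E d) (hx : ‖x‖ = 1) :
    ((1 - Real.exp (-8)) / Real.sqrt (2*π) - 1/4) / 4 / Real.sqrt d
      ≤ mIntegral d (fun z => ‖z‖⁻¹ • z) x := by
  have hd0 : (0:ℝ) < d := by exact_mod_cast hd
  have hsd : 0 < Real.sqrt d := Real.sqrt_pos.mpr hd0
  have hsd1 : 1 ≤ Real.sqrt d := by
    rw [show (1:ℝ) = Real.sqrt 1 by simp]
    exact Real.sqrt_le_sqrt (by exact_mod_cast hd)
  set μ := stdGaussian d with hμ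
  set g : E d → ℝ := fun z => (inner ℝ x z : ℝ) with hgdef
  have hgmeas : Measurable g := by
    have hc : Continuous fun z : E d => (inner ℝ x z : ℝ) :=
      Continuous.inner continuous_const continuous_id
    exact hc.measurable
  have hlaw := stdGaussian_map_inner d (lt_of_lt_of_le Nat.zero_lt_one hd) x hx
  set R : ℝ := 4 * Real.sqrt d with hRdef
  have hRpos : 0 < R := by positivity
  have hR4 : 4 ≤ R := by nlinarith
  -- transfer lemmas
  have htrans : ∀ F : ℝ → ℝ, Measurable F →
      ∫ z, F (g z) ∂μ = ∫ t, F t ∂(gaussianReal 0 1) := by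
    intro F hF
    rw [← hlaw, integral_map hgmeas.aemeasurable hF.aestronglyMeasurable]
  have hint : ∀ F : ℝ → ℝ, Measurable F → Integrable F (gaussianReal 0 1) →
      Integrable (fun z => F (g z)) μ := by
    intro F hF h
    rw [← hlaw] at h
    exact (integrable_map_measure hF.aestronglyMeasurable hgmeas.aemeasurable).mp h
  -- bad set and Markov
  have hbadmeas : MeasurableSet {z : E d | R < ‖z‖} :=
    measurableSet_lt measurable_const measurable_norm
  have hmark : (μ {z : E d | R < ‖z‖}).toReal ≤ 1/16 := by
    have hRsq : R^2 = 16 * d := by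
      rw [hRdef, mul_pow, Real.sq_sqrt hd0.le]; norm_num
    have hsub : {z : E d | R < ‖z‖} ⊆ {z : E d | 16 * d ≤ ‖z‖^2} := by
      intro z hz
      have h1 : R ≤ ‖z‖ := le_of_lt hz
      have h2 : R^2 ≤ ‖z‖^2 := by nlinarith [norm_nonneg z]
      simpa [hRsq] using h2
    have h1 := mul_meas_ge_le_integral_of_nonneg
      (ae_of_all μ fun z => sq_nonneg ‖z‖) (snorm_int d) (16 * d)
    rw [snorm_val d, measureReal_def] at h1
    have h2 : (μ {z : E d | R < ‖z‖}).toReal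
        ≤ (μ {z : E d | 16 * d ≤ ‖z‖^2}).toReal :=
      ENNReal.toReal_mono (measure_ne_top _ _) (measure_mono hsub)
    have h3 : 0 ≤ (μ {z : E d | R < ‖z‖}).toReal := ENNReal.toReal_nonneg
    nlinarith [mul_le_mul_of_nonneg_left h2 (by positivity : (0:ℝ) ≤ 16 * d)]
  -- 1-D pieces
  have hF0meas : Measurable (fun t : ℝ => if 0 < t then t else 0) :=
    Measurable.ite measurableSet_Ioi measurable_id measurable_const
  have hF4meas : Measurable (fun t : ℝ => if 4 < t then t else 0) :=
    Measurable.ite measurableSet_Ioi measurable_id measurable_const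
  have hI2 : ∫ z, (if 0 < g z then g z else 0) ∂μ = 1 / Real.sqrt (2*π) := by
    rw [htrans _ hF0meas, tail_value 0]
    norm_num
  have hI3 : ∫ z, (if 4 < g z then g z else 0) ∂μ = Real.exp (-8) / Real.sqrt (2*π) := by
    rw [htrans _ hF4meas, tail_value 4]
    norm_num
  have hInt2 : Integrable (fun z => if 0 < g z then g z else 0) μ :=
    hint _ hF0meas (tail_integrable 0)
  have hInt3 : Integrable (fun z => if 4 < g z then g z else 0) μ :=
    hint _ hF4meas (tail_integrable 4)
  have hInt4 : Integrable ({z : E d | R < ‖z‖}.indicator fun _ => (4:ℝ)) μ :=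
    (integrable_const (4:ℝ)).indicator hbadmeas
  have hI4 : ∫ z, ({z : E d | R < ‖z‖}.indicator fun _ => (4:ℝ)) z ∂μ ≤ 1/4 := by
    rw [integral_indicator_const _ hbadmeas, smul_eq_mul, measureReal_def]
    nlinarith
  -- named summands
  set h3f : E d → ℝ := fun z => if 4 < g z then g z else 0 with hh3def
  set h4f : E d → ℝ := fun z => ({z : E d | R < ‖z‖}.indicator fun _ => (4:ℝ)) z with hh4def
  have hInt3' : Integrable h3f μ := hInt3
  have hInt4' : Integrable h4f μ := hInt4
  have hI3' : ∫ z, h3f z ∂μ = Real.exp (-8) / Real.sqrt (2*π) := hI3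
  have hI4' : ∫ z, h4f z ∂μ ≤ 1/4 := hI4
  -- h1f
  set h1f : E d → ℝ := fun z => if 0 < g z ∧ ‖z‖ ≤ R then g z else 0 with hh1def
  have hcond1 : MeasurableSet {z : E d | 0 < g z ∧ ‖z‖ ≤ R} :=
    (measurableSet_lt measurable_const hgmeas).inter
      (measurableSet_le measurable_norm measurable_const)
  have hh1meas : Measurable h1f :=
    Measurable.ite hcond1 hgmeas measurable_const
  have hgle : ∀ z : E d, g z ≤ ‖z‖ := by
    intro z
    calc g z ≤ ‖x‖ * ‖z‖ := real_inner_le_norm x z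
    _ = ‖z‖ := by rw [hx, one_mul]
  have hInt1 : Integrable h1f μ := by
    refine Integrable.mono' (integrable_const R) hh1meas.aestronglyMeasurable
      (ae_of_all _ fun z => ?_)
    rw [Real.norm_eq_abs]
    simp only [hh1def]
    by_cases h : 0 < g z ∧ ‖z‖ ≤ R
    · rw [if_pos h, abs_of_pos h.1]
      exact le_trans (hgle z) h.2
    · rw [if_neg h, abs_zero]; exact hRpos.le
  -- pointwise 2 : pos part ≤ h1f + tail4 + bad indicator
  have hptw2 : ∀ z, (if 0 < g z then g z else 0)
      ≤ h1f z + (h3f z + h4f z) := by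
    intro z
    simp only [hh3def, hh4def]
    have hindnn : 0 ≤ ({z : E d | R < ‖z‖}.indicator fun _ => (4:ℝ)) z :=
      Set.indicator_nonneg (fun _ _ => by norm_num) z
    by_cases hg : 0 < g z
    · rw [if_pos hg]
      by_cases hz : ‖z‖ ≤ R
      · simp only [hh1def]; rw [if_pos ⟨hg, hz⟩]
        have h3 : 0 ≤ (if 4 < g z then g z else 0) := by
          by_cases h4 : 4 < g z
          · rw [if_pos h4]; linarith
          · rw [if_neg h4]
        linarith
      · simp only [hh1def]; rw [if_neg (fun h => hz h.2)]
        have hzbad : z ∈ {z : E d | R < ‖z‖} := not_le.mp hz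
        rw [Set.indicator_of_mem hzbad]
        by_cases h4 : 4 < g z
        · rw [if_pos h4]; linarith
        · rw [if_neg h4]; push_neg at h4; linarith
    · rw [if_neg hg]; simp only [hh1def]; rw [if_neg (fun h => hg h.1)]
      have h3 : 0 ≤ (if 4 < g z then g z else 0) := by
        by_cases h4 : 4 < g z
        · rw [if_pos h4]; linarith
        · rw [if_neg h4]
      linarith
  have hlow1 : (1 - Real.exp (-8)) / Real.sqrt (2*π) - 1/4 ≤ ∫ z, h1f z ∂μ := by
    have hInt34 : Integrable (fun z => h3f z + h4f z) μ := hInt3'.add hInt4'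
    have hIntSum : Integrable (fun z => h1f z + (h3f z + h4f z)) μ := hInt1.add hInt34
    have hmono : (∫ z, (if 0 < g z then g z else 0) ∂μ)
        ≤ ∫ z, (h1f z + (h3f z + h4f z)) ∂μ :=
      integral_mono hInt2 hIntSum hptw2
    rw [integral_add hInt1 hInt34, integral_add hInt3' hInt4', hI2, hI3'] at hmono
    have : (1 - Real.exp (-8)) / Real.sqrt (2*π)
        = 1 / Real.sqrt (2*π) - Real.exp (-8) / Real.sqrt (2*π) := by ring
    rw [this]
    linarith
  -- integrand of mIntegral
  have hmint : mIntegral d (fun z => ‖z‖⁻¹ • z) x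
      = ∫ z, (if 0 < g z then ‖z‖⁻¹ * g z else 0) ∂μ := by
    rw [mIntegral]
    refine integral_congr_ae (ae_of_all _ fun z => ?_)
    simp only [hgdef]
    by_cases hg : 0 < (inner ℝ x z : ℝ)
    · rw [if_pos hg, if_pos hg, real_inner_smul_left, real_inner_comm]
    · rw [if_neg hg, if_neg hg]
  have hne : ∀ z : E d, 0 < g z → 0 < ‖z‖ := by
    intro z hgz
    rcases eq_or_ne z 0 with rfl | hz
    · simp [hgdef, inner_zero_right] at hgz
    · exact norm_pos_iff.mpr hz
  have hInt0 : Integrable (fun z => if 0 < g z then ‖z‖⁻¹ * g z else 0) μ := by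
    have hmeas0 : Measurable (fun z : E d => if 0 < g z then ‖z‖⁻¹ * g z else 0) :=
      Measurable.ite (measurableSet_lt measurable_const hgmeas)
        (measurable_norm.inv.mul hgmeas) measurable_const
    refine Integrable.mono' (integrable_const (1:ℝ)) hmeas0.aestronglyMeasurable
      (ae_of_all _ fun z => ?_)
    rw [Real.norm_eq_abs]
    by_cases hg : 0 < g z
    · rw [if_pos hg]
      have hz := hne z hg
      rw [abs_of_nonneg (mul_nonneg (inv_nonneg.mpr hz.le) hg.le)]
      calc ‖z‖⁻¹ * g z ≤ ‖z‖⁻¹ * ‖z‖ :=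
            mul_le_mul_of_nonneg_left (hgle z) (inv_nonneg.mpr hz.le)
      _ = 1 := inv_mul_cancel₀ hz.ne'
    · rw [if_neg hg, abs_zero]; norm_num
  -- pointwise 1
  have hptw1 : ∀ z, R⁻¹ * h1f z ≤ (if 0 < g z then ‖z‖⁻¹ * g z else 0) := by
    intro z
    by_cases hg : 0 < g z
    · rw [if_pos hg]
      have hz := hne z hg
      by_cases hle : ‖z‖ ≤ R
      · simp only [hh1def]; rw [if_pos ⟨hg, hle⟩]
        have : R⁻¹ ≤ ‖z‖⁻¹ := by
          rw [inv_le_inv₀ hRpos hz]  -- maybe wrong name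
          exact hle
        exact mul_le_mul_of_nonneg_right this hg.le
      · simp only [hh1def]; rw [if_neg (fun h => hle h.2), mul_zero]
        positivity
    · rw [if_neg hg]; simp only [hh1def]; rw [if_neg (fun h => hg h.1), mul_zero]
  have hstep : R⁻¹ * ((1 - Real.exp (-8)) / Real.sqrt (2*π) - 1/4)
      ≤ mIntegral d (fun z => ‖z‖⁻¹ • z) x := by
    rw [hmint]
    calc R⁻¹ * ((1 - Real.exp (-8)) / Real.sqrt (2*π) - 1/4)
        ≤ R⁻¹ * ∫ z, h1f z ∂μ :=
          mul_le_mul_of_nonneg_left hlow1 (inv_nonneg.mpr hRpos.le)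
    _ = ∫ z, R⁻¹ * h1f z ∂μ := (integral_const_mul _ _).symm
    _ ≤ ∫ z, (if 0 < g z then ‖z‖⁻¹ * g z else 0) ∂μ :=
          integral_mono (hInt1.const_mul _) hInt0 hptw1
  have hfinal : ((1 - Real.exp (-8)) / Real.sqrt (2*π) - 1/4) / 4 / Real.sqrt d
      = R⁻¹ * ((1 - Real.exp (-8)) / Real.sqrt (2*π) - 1/4) := by
    rw [hRdef, div_div]
    ring
  rw [hfinal]
  exact hstep

lemma mIntegral_le_one (d : ℕ) (v : E d → E d) (hv : v ∈ FB d)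
    (x : E d) (hx : ‖x‖ = 1) : mIntegral d v x ≤ 1 := by
  have hbound : ∀ z : E d,
      ‖(if 0 < (inner ℝ x z : ℝ) then (inner ℝ (v z) x : ℝ) else 0)‖ ≤ 1 := by
    intro z
    rw [Real.norm_eq_abs]
    by_cases h : 0 < (inner ℝ x z : ℝ)
    · rw [if_pos h]
      calc |(inner ℝ (v z) x : ℝ)| ≤ ‖v z‖ * ‖x‖ := abs_real_inner_le_norm _ _
      _ ≤ 1 * 1 := mul_le_mul (hv z) (le_of_eq hx) (norm_nonneg _) zero_le_one
      _ = 1 := one_mul 1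
    · rw [if_neg h, abs_zero]; norm_num
  have := norm_integral_le_of_norm_le_const (μ := stdGaussian d)
    (C := 1) (ae_of_all _ hbound)
  rw [probReal_univ, mul_one] at this
  calc mIntegral d v x ≤ ‖mIntegral d v x‖ := le_abs_self _
  _ ≤ 1 := this

end ExAux
open ExAux


/-- **Example 3 (constant labels).** There is an absolute constant `c > 0` such that for every
`d ≥ 1` and every unit vector `x ∈ ℝ^d`,
`∫ ⟨z/‖z‖, x⟩ 𝟙[⟨x,z⟩>0] dμ_N(z) ≥ c/√d`; consequently any data set of unit vectors with
all labels `+1` has margin `γ(X,Y) ≥ c/√d`. -/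
theorem constant_labels_margin :
    ∃ c : ℝ, 0 < c ∧ ∀ d : ℕ, 1 ≤ d →
      (∀ x : E d, ‖x‖ = 1 →
        c / Real.sqrt d ≤ mIntegral d (fun z => ‖z‖⁻¹ • z) x) ∧
      (∀ n : ℕ, 0 < n → ∀ x : Fin n → E d, (∀ i, ‖x i‖ = 1) →
        c / Real.sqrt d ≤ gammaM d n x fun _ => 1) := by
  refine ⟨((1 - Real.exp (-8)) / Real.sqrt (2*π) - 1/4) / 4, ?_, ?_⟩
  · have hsqrt : Real.sqrt (2*π) ≤ 3 := by
      have h2 : (2:ℝ)*π ≤ 9 := by nlinarith [Real.pi_le_four]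
      calc Real.sqrt (2*π) ≤ Real.sqrt 9 := Real.sqrt_le_sqrt h2
      _ = 3 := by rw [show (9:ℝ) = 3^2 by norm_num, Real.sqrt_sq (by norm_num : (0:ℝ) ≤ 3)]
    have hsqrtpos := sqrt_two_pi_pos
    have hexp : Real.exp (-8) ≤ 1/9 := by
      rw [Real.exp_neg]
      have h9 : (9:ℝ) ≤ Real.exp 8 := by nlinarith [Real.add_one_le_exp (8:ℝ)]
      have := one_div_le_one_div_of_le (by norm_num : (0:ℝ) < 9) h9
      simpa [one_div] using this
    have key : (8/9 : ℝ)/3 ≤ (1 - Real.exp (-8)) / Real.sqrt (2*π) :=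
      div_le_div₀ (by linarith) (by linarith) hsqrtpos hsqrt
    have h827 : (8:ℝ)/9/3 = 8/27 := by norm_num
    apply div_pos _ (by norm_num : (0:ℝ) < 4)
    rw [h827] at key
    linarith
  · intro d hd
    constructor
    · intro x hx
      exact main_est d hd x hx
    · intro n hn x hx
      haveI : Nonempty (Fin n) := ⟨⟨0, hn⟩⟩
      have hv0 : (fun z : E d => ‖z‖⁻¹ • z) ∈ FB d := by
        intro z
        rcases eq_or_ne z 0 with rfl | hz
        · simp
        · rw [norm_smul, norm_inv, norm_norm,
            inv_mul_cancel₀ (norm_ne_zero_iff.mpr hz)]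
      have hmarg : ((1 - Real.exp (-8)) / Real.sqrt (2*π) - 1/4) / 4 / Real.sqrt d
          ≤ marginV d n x (fun _ => 1) (fun z => ‖z‖⁻¹ • z) := by
        refine le_ciInf fun i => ?_
        rw [one_mul]
        exact main_est d hd (x i) (hx i)
      have hub : ∀ v : E d → E d,
          (⨆ _ : v ∈ FB d, marginV d n x (fun _ => 1) v) ≤ 1 := by
        intro v
        by_cases hv : v ∈ FB d
        · haveI : Nonempty (v ∈ FB d) := ⟨hv⟩
          rw [ciSup_const]
          have hle1 : marginV d n x (fun _ => 1) v
              ≤ (1:ℝ) * mIntegral d v (x ⟨0, hn⟩) := by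
            unfold marginV
            exact ciInf_le (Set.finite_range _).bddBelow (⟨0, hn⟩ : Fin n)
          rw [one_mul] at hle1
          exact le_trans hle1 (mIntegral_le_one d v hv (x ⟨0, hn⟩) (hx _))
        · haveI : IsEmpty (v ∈ FB d) := ⟨hv⟩
          rw [Real.iSup_of_isEmpty]
          norm_num
      have hBdd : BddAbove (Set.range fun v : E d → E d =>
          ⨆ _ : v ∈ FB d, marginV d n x (fun _ => 1) v) := by
        refine ⟨1, ?_⟩
        rintro y ⟨v, rfl⟩
        exact hub v
      have hle2 : (⨆ _ : (fun z : E d => ‖z‖⁻¹ • z) ∈ FB d,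
            marginV d n x (fun _ => 1) (fun z => ‖z‖⁻¹ • z))
          ≤ gammaM d n x (fun _ => 1) :=
        le_ciSup hBdd _
      haveI : Nonempty ((fun z : E d => ‖z‖⁻¹ • z) ∈ FB d) := ⟨hv0⟩
      calc ((1 - Real.exp (-8)) / Real.sqrt (2*π) - 1/4) / 4 / Real.sqrt d
          ≤ marginV d n x (fun _ => 1) (fun z => ‖z‖⁻¹ • z) := hmarg
      _ = ⨆ _ : (fun z : E d => ‖z‖⁻¹ • z) ∈ FB d,
            marginV d n x (fun _ => 1) (fun z => ‖z‖⁻¹ • z) := ciSup_const.symm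
      _ ≤ gammaM d n x (fun _ => 1) := hle2

end
end

section
/- Reduction to cone-constant witnesses (Lemma C.2): For any v̄ ∈ F_B there exists v̄′ ∈ F_B such that γ_{v̄′}(X,Y) = γ_{v̄}(X,Y) and v̄′ is constant on the cone C(U) for every U ⊆ [n]. -/
open MeasureTheory ProbabilityTheory
open scoped BigOperators ENNReal

noncomputable section

/-- The cone `C(U) = {z : ⟨z, x_i⟩ > 0 ↔ i ∈ U}`. -/
def coneC (d n : ℕ) (x : Fin n → E d) (U : Set (Fin n)) : Set (E d) :=
  {z | ∀ i, 0 < (inner ℝ (x i) z : ℝ) ↔ i ∈ U}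

/-! On each cone `C(U)` replace `v̄` by a vector `w_U` with `‖w_U‖ ≤ 1` whose inner products
reproduce the averages of `v̄` over the cone; since the indicator `𝟙[⟨x_i, z⟩ > 0]` is constant on
every cone, the integrals defining the margin do not change. As `v̄` need not be measurable, `w_U`
is obtained from the Riesz representation of `u ↦ ∫_{C(U)} ⟨v̄, u⟩` on the subspace of directions
`u` where this integral exists. If some integral `∫ ⟨v̄, x_i⟩ 𝟙[⟨x_i, z⟩ > 0]` does not exist, it
is `0` by convention, so the margin of `v̄` is nonpositive and lies between `min(γ_{v̄'}, 0)` and `0`;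
a rescaling `t v̄'` with `t ∈ [0, 1]` then has exactly this margin. -/

open scoped RealInnerProductSpace

section WeakAverage

variable {α E : Type*} [MeasurableSpace α] [NormedAddCommGroup E] [InnerProductSpace ℝ E]
  (μ : Measure α) (s : Set α) (f : α → E)

def integrableInnerDirections : Submodule ℝ E where
  carrier := {u | IntegrableOn (fun a => ⟪f a, u⟫) s μ}
  zero_mem' := by simp
  add_mem' hu hw := by
    change IntegrableOn _ s μ
    simp_rw [inner_add_right]
    exact hu.add hw
  smul_mem' c u hu := by
    change IntegrableOn _ s μ
    simp_rw [real_inner_smul_right]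
    exact hu.const_mul c

def setIntegralInner : integrableInnerDirections μ s f →ₗ[ℝ] ℝ where
  toFun u := ∫ a in s, ⟪f a, (u : E)⟫ ∂μ
  map_add' u w := by
    simp only [Submodule.coe_add, inner_add_right]
    exact integral_add u.2 w.2
  map_smul' c u := by
    simp only [Submodule.coe_smul, real_inner_smul_right, RingHom.id_apply, smul_eq_mul]
    exact integral_const_mul c _

variable {μ s f} [FiniteDimensional ℝ E] [IsFiniteMeasure μ]

theorem exists_norm_le_inner_eq_setIntegral_inner {C : ℝ} (hC : 0 ≤ C)
    (hf : ∀ a ∈ s, ‖f a‖ ≤ C) :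
    ∃ w : E, ‖w‖ ≤ C * μ.real s ∧
      ∀ u, IntegrableOn (fun a => ⟪f a, u⟫) s μ → ⟪w, u⟫ = ∫ a in s, ⟪f a, u⟫ ∂μ := by
  set K := integrableInnerDirections μ s f
  let ℓ : StrongDual ℝ K := LinearMap.toContinuousLinearMap (setIntegralInner μ s f)
  have hℓ : ‖ℓ‖ ≤ C * μ.real s := by
    refine ContinuousLinearMap.opNorm_le_bound _ (by positivity) fun u => ?_
    calc ‖ℓ u‖ ≤ (C * ‖(u : E)‖) * μ.real s :=
          norm_setIntegral_le_of_norm_le_const (measure_lt_top μ s) fun a ha => by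
            simpa only [Real.norm_eq_abs] using (abs_real_inner_le_norm _ _).trans
              (mul_le_mul_of_nonneg_right (hf a ha) (norm_nonneg _))
      _ = C * μ.real s * ‖u‖ := by rw [K.coe_norm]; ring
  refine ⟨(InnerProductSpace.toDual ℝ K).symm ℓ, ?_, fun u hu => ?_⟩
  · exact ((InnerProductSpace.toDual ℝ K).symm.norm_map ℓ).trans_le hℓ
  · exact (K.coe_inner _ ⟨u, hu⟩).symm.trans InnerProductSpace.toDual_symm_apply

theorem exists_norm_le_mul_inner_eq_setIntegral_inner {C : ℝ} (hC : 0 ≤ C)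
    (hf : ∀ a ∈ s, ‖f a‖ ≤ C) :
    ∃ w : E, ‖w‖ ≤ C ∧ ∀ u, IntegrableOn (fun a => ⟪f a, u⟫) s μ →
      μ.real s * ⟪w, u⟫ = ∫ a in s, ⟪f a, u⟫ ∂μ := by
  obtain ⟨w, hw, hwu⟩ := exists_norm_le_inner_eq_setIntegral_inner (μ := μ) hC hf
  by_cases hs : μ.real s = 0
  · refine ⟨0, by simpa using hC, fun u hu => ?_⟩
    rw [hs, mul_zero] at hw
    rw [← hwu u hu, norm_le_zero_iff.1 hw, inner_zero_left, mul_zero]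
  · refine ⟨(μ.real s)⁻¹ • w, ?_, fun u hu => ?_⟩
    · rw [norm_smul, norm_inv, Real.norm_of_nonneg measureReal_nonneg]
      exact inv_mul_le_of_le_mul₀ measureReal_nonneg hC (by linarith)
    · rw [real_inner_smul_left, mul_inv_cancel_left₀ hs, hwu u hu]

end WeakAverage

instance (d : ℕ) : IsProbabilityMeasure (stdGaussian d) :=
  Measure.isProbabilityMeasure_map (EuclideanSpace.equiv (Fin d) ℝ).symm.continuous.aemeasurable

section Cones

variable {d n : ℕ} {x : Fin n → E d}

def activeSet (x : Fin n → E d) (z : E d) : Set (Fin n) := {i | 0 < ⟪x i, z⟫}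

theorem mem_coneC_activeSet (z : E d) : z ∈ coneC d n x (activeSet x z) := fun _ => Iff.rfl

theorem activeSet_eq_of_mem_coneC {U : Set (Fin n)} {z : E d} (hz : z ∈ coneC d n x U) :
    activeSet x z = U :=
  Set.ext hz

theorem iUnion_coneC : ⋃ U, coneC d n x U = Set.univ :=
  Set.eq_univ_of_forall fun z => Set.mem_iUnion.2 ⟨_, mem_coneC_activeSet z⟩

theorem pairwise_disjoint_coneC : Pairwise (Function.onFun Disjoint (coneC d n x)) :=
  fun _ _ hUV => Set.disjoint_left.2 fun _ hU hV =>
    hUV ((activeSet_eq_of_mem_coneC hU).symm.trans (activeSet_eq_of_mem_coneC hV))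

theorem measurableSet_coneC (U : Set (Fin n)) : MeasurableSet (coneC d n x U) := by
  rw [coneC, Set.ofPred_forall]
  exact MeasurableSet.iInter fun i => measurableSet_setOfPred.2 <|
    (measurableSet_setOfPred.1 (measurableSet_lt measurable_const
      (measurable_const.inner measurable_id))).iff measurable_const

theorem integral_eq_sum_setIntegral_coneC {μ : Measure (E d)} {f : E d → ℝ}
    (hf : ∀ U, IntegrableOn f (coneC d n x U) μ) :
    ∫ z, f z ∂μ = ∑ U, ∫ z in coneC d n x U, f z ∂μ := by
  rw [← setIntegral_univ, ← iUnion_coneC (x := x),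
    integral_iUnion_fintype measurableSet_coneC pairwise_disjoint_coneC hf]

end Cones

section Witness

variable {d n : ℕ} {x : Fin n → E d}

def mIntegrand (d : ℕ) (v : E d → E d) (u : E d) (z : E d) : ℝ :=
  if 0 < ⟪u, z⟫ then ⟪v z, u⟫ else 0

theorem mIntegral_eq_integral_mIntegrand (v : E d → E d) (u : E d) :
    mIntegral d v u = ∫ z, mIntegrand d v u z ∂stdGaussian d :=
  rfl

open Classical in
theorem mIntegrand_eqOn_coneC (v : E d → E d) (i : Fin n) (U : Set (Fin n)) :
    Set.EqOn (mIntegrand d v (x i)) (fun z => if i ∈ U then ⟪v z, x i⟫ else 0)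
      (coneC d n x U) :=
  fun z hz => by simp only [mIntegrand, hz i]

theorem exists_coneConstant_mIntegral_eq {v : E d → E d} (hv : v ∈ FB d) :
    ∃ v' ∈ FB d,
      (∀ i, Integrable (mIntegrand d v (x i)) (stdGaussian d) →
        mIntegral d v' (x i) = mIntegral d v (x i)) ∧
      ∀ U : Set (Fin n), ∀ z₁ ∈ coneC d n x U, ∀ z₂ ∈ coneC d n x U, v' z₁ = v' z₂ := by
  classical
  choose w hw hw_inner using fun U : Set (Fin n) =>
    exists_norm_le_mul_inner_eq_setIntegral_inner (μ := stdGaussian d) (s := coneC d n x U)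
      zero_le_one fun z _ => hv z
  refine ⟨fun z => w (activeSet x z), fun z => hw _, fun i hi => ?_, fun U z₁ h₁ z₂ h₂ => ?_⟩
  · have hv'_eqOn : ∀ U, Set.EqOn (mIntegrand d (fun z => w (activeSet x z)) (x i))
        (fun _ => if i ∈ U then ⟪w U, x i⟫ else 0) (coneC d n x U) := fun U z hz => by
      simp only [mIntegrand_eqOn_coneC _ i U hz, activeSet_eq_of_mem_coneC hz]
    rw [mIntegral_eq_integral_mIntegrand, mIntegral_eq_integral_mIntegrand,
      integral_eq_sum_setIntegral_coneC fun U => (integrable_const _).integrableOn.congr_fun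
        (hv'_eqOn U).symm (measurableSet_coneC U),
      integral_eq_sum_setIntegral_coneC fun U => hi.integrableOn]
    refine Finset.sum_congr rfl fun U _ => ?_
    have hv_eqOn := mIntegrand_eqOn_coneC (x := x) v i U
    rw [setIntegral_congr_fun (measurableSet_coneC U) (hv'_eqOn U),
      setIntegral_congr_fun (measurableSet_coneC U) hv_eqOn, setIntegral_const, smul_eq_mul]
    by_cases hiU : i ∈ U
    · simp only [hiU, if_true] at hv_eqOn ⊢
      exact hw_inner U (x i) (hi.integrableOn.congr_fun hv_eqOn (measurableSet_coneC U))
    · simp only [hiU, if_false, mul_zero, integral_zero]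
  · simp only [activeSet_eq_of_mem_coneC h₁, activeSet_eq_of_mem_coneC h₂]

variable {y : Fin n → ℝ} {A v : E d → E d}

theorem mIntegral_smul (t : ℝ) (A : E d → E d) (u : E d) :
    mIntegral d (t • A) u = t * mIntegral d A u := by
  rw [mIntegral_eq_integral_mIntegrand, mIntegral_eq_integral_mIntegrand, ← integral_const_mul]
  congr 1 with z
  simp only [mIntegrand, Pi.smul_apply, real_inner_smul_left, mul_ite, mul_zero]

theorem marginV_smul {t : ℝ} (ht : 0 ≤ t) :
    marginV d n x y (t • A) = t * marginV d n x y A := by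
  simp only [marginV, mIntegral_smul, Real.mul_iInf_of_nonneg ht, mul_left_comm]

theorem smul_mem_FB {t : ℝ} (ht : |t| ≤ 1) (hA : A ∈ FB d) : t • A ∈ FB d := fun z => by
  rw [Pi.smul_apply, norm_smul, Real.norm_eq_abs]
  exact mul_le_one₀ ht (norm_nonneg _) (hA z)

theorem exists_marginV_smul_eq {γ : ℝ} (hγ : γ ≤ 0) (hAγ : min (marginV d n x y A) 0 ≤ γ) :
    ∃ t : ℝ, 0 ≤ t ∧ t ≤ 1 ∧ marginV d n x y (t • A) = γ := by
  rcases le_or_gt 0 (marginV d n x y A) with hA | hA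
  · refine ⟨0, le_rfl, zero_le_one, ?_⟩
    rw [marginV_smul le_rfl, zero_mul]
    linarith [min_eq_right hA]
  · have ht : 0 ≤ γ / marginV d n x y A := div_nonneg_of_nonpos hγ hA.le
    refine ⟨_, ht, (div_le_one_of_neg hA).2 (min_eq_left hA.le ▸ hAγ), ?_⟩
    rw [marginV_smul ht, div_mul_cancel₀ _ hA.ne]

theorem min_marginV_le_marginV
    (hAv : ∀ i, Integrable (mIntegrand d v (x i)) (stdGaussian d) →
      mIntegral d A (x i) = mIntegral d v (x i)) :
    min (marginV d n x y A) 0 ≤ marginV d n x y v := by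
  cases isEmpty_or_nonempty (Fin n)
  · simp only [marginV, Real.iInf_of_isEmpty, min_le_right]
  refine le_ciInf fun i => ?_
  by_cases hi : Integrable (mIntegrand d v (x i)) (stdGaussian d)
  · rw [← hAv i hi]
    exact (min_le_left _ _).trans (ciInf_le (Set.finite_range _).bddBelow i)
  · rw [mIntegral_eq_integral_mIntegrand, integral_undef hi, mul_zero]
    exact min_le_right _ _

end Witness

theorem cone_constant_witness_general (d n : ℕ) (x : Fin n → E d) (y : Fin n → ℝ)
    (v : E d → E d) (hv : v ∈ FB d) :
    ∃ v' ∈ FB d, marginV d n x y v' = marginV d n x y v ∧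
      ∀ U : Set (Fin n), ∀ z₁ ∈ coneC d n x U, ∀ z₂ ∈ coneC d n x U, v' z₁ = v' z₂ := by
  obtain ⟨A, hA, hAv, hA_const⟩ := exists_coneConstant_mIntegral_eq (x := x) hv
  by_cases hint : ∀ i, Integrable (mIntegrand d v (x i)) (stdGaussian d)
  · exact ⟨A, hA, iInf_congr fun i => by rw [hAv i (hint i)], hA_const⟩
  push Not at hint
  obtain ⟨j, hj⟩ := hint
  have hv_nonpos : marginV d n x y v ≤ 0 := by
    refine (ciInf_le (Set.finite_range _).bddBelow j).trans_eq ?_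
    rw [mIntegral_eq_integral_mIntegrand, integral_undef hj, mul_zero]
  obtain ⟨t, ht₀, ht₁, ht⟩ := exists_marginV_smul_eq hv_nonpos (min_marginV_le_marginV hAv)
  refine ⟨t • A, smul_mem_FB (abs_le.2 ⟨by linarith, ht₁⟩) hA, ht, fun U z₁ h₁ z₂ h₂ => ?_⟩
  simp only [Pi.smul_apply, hA_const U z₁ h₁ z₂ h₂]

/-- **Lemma C.2 (reduction to cone-constant witnesses).** For any `v̄ ∈ F_B` there is
`v̄' ∈ F_B` with the same margin that is constant on each cone `C(U)`, `U ⊆ [n]`. -/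
theorem cone_constant_witness (d n : ℕ) (x : Fin n → E d) (y : Fin n → ℝ)
    (hx : ∀ i, ‖x i‖ = 1) (hy : ∀ i, y i = 1 ∨ y i = -1)
    (v : E d → E d) (hv : v ∈ FB d) :
    ∃ v' ∈ FB d, marginV d n x y v' = marginV d n x y v ∧
      ∀ U : Set (Fin n), ∀ z₁ ∈ coneC d n x U, ∀ z₂ ∈ coneC d n x U, v' z₁ = v' z₂ :=
  cone_constant_witness_general d n x y v hv

end
end

section
/- Orthogonal decomposition, combination of witnesses (Lemma C.3, Part 1): Suppose ℝ^d = V_1 ⊕ ⋯ ⊕ V_s is a decomposition into pairwise orthogonal subspaces such that every data point x_i lies in some V_j. Assume for each j ∈ [s] there exist γ_j > 0 and v̄_j ∈ F_B such that y_i ∫ ⟨v̄_j(z), x_i⟩ 𝟙[⟨x_i, z⟩ > 0] dμ_N(z) ≥ γ_j for all i with x_i ∈ V_j. Then for each ρ ∈ ℝ^s with ρ_j ≥ 0 for all j and ‖ρ‖₂ = 1 there exists v̄ ∈ F_B with min_{i∈[n]} y_i ∫ ⟨v̄(z), x_i⟩ 𝟙[⟨x_i, z⟩ > 0] dμ_N(z)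 ≥ min_{j∈[s]} ρ_j γ_j. -/
open MeasureTheory ProbabilityTheory
open scoped BigOperators ENNReal

noncomputable section

/-- **Lemma C.3, Part 1 (orthogonal decomposition, combination of witnesses).** -/
theorem orthogonal_combination (d n s : ℕ) (x : Fin n → E d) (y : Fin n → ℝ)
    (hx : ∀ i, ‖x i‖ = 1) (hy : ∀ i, y i = 1 ∨ y i = -1)
    (V : Fin s → Submodule ℝ (E d))
    (horth : ∀ j k, j ≠ k → ∀ u ∈ V j, ∀ w ∈ V k, (inner ℝ u w : ℝ) = 0)
    (hspan : (⨆ j, V j) = ⊤)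
    (hmem : ∀ i, ∃ j, x i ∈ V j)
    (γ : Fin s → ℝ) (hγ : ∀ j, 0 < γ j)
    (vj : Fin s → (E d → E d)) (hvj : ∀ j, vj j ∈ FB d)
    (hmarg : ∀ j, ∀ i, x i ∈ V j → γ j ≤ y i * mIntegral d (vj j) (x i))
    (ρ : Fin s → ℝ) (hρ0 : ∀ j, 0 ≤ ρ j) (hρ : ∑ j, ρ j ^ 2 = 1) :
    ∃ v ∈ FB d, ∀ i, (⨅ j, ρ j * γ j) ≤ y i * mIntegral d v (x i) := by
  rcases Nat.eq_zero_or_pos s with hs | hs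
  · subst hs; simp at hρ
  have hne : Nonempty (Fin s) := ⟨⟨0, hs⟩⟩
  set w : E d → Fin s → E d := fun z j =>
    ρ j • ((Submodule.orthogonalProjectionOnto (V j) ((vj j) z)) : E d) with hw
  have hwmem : ∀ z j, w z j ∈ V j := fun z j =>
    (V j).smul_mem _ (SetLike.coe_mem _)
  have hwnorm : ∀ z j, ‖w z j‖ ≤ ρ j := by
    intro z j
    rw [hw, norm_smul, Real.norm_eq_abs, abs_of_nonneg (hρ0 j)]
    have h1 : ‖((Submodule.orthogonalProjectionOnto (V j) ((vj j) z)) : E d)‖ ≤ ‖(vj j) z‖ := by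
      calc ‖((Submodule.orthogonalProjectionOnto (V j) ((vj j) z)) : E d)‖
          ≤ ‖Submodule.orthogonalProjectionOnto (V j)‖ * ‖(vj j) z‖ :=
            (Submodule.orthogonalProjectionOnto (V j)).le_opNorm _
        _ ≤ 1 * ‖(vj j) z‖ := by
            apply mul_le_mul_of_nonneg_right (Submodule.orthogonalProjectionOnto_norm_le _) (norm_nonneg _)
        _ = ‖(vj j) z‖ := one_mul _
    have h2 := hvj j z
    nlinarith [hρ0 j]
  set v : E d → E d := fun z => ∑ j, w z j with hv
  refine ⟨v, ?_, ?_⟩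
  · intro z
    have hpy : (inner ℝ (v z) (v z) : ℝ) = ∑ j, (inner ℝ (w z j) (w z j) : ℝ) := by
      rw [hv]
      simp only [sum_inner]
      refine Finset.sum_congr rfl fun j _ => ?_
      rw [inner_sum, Finset.sum_eq_single j]
      · intro k _ hk
        exact horth j k (Ne.symm hk) _ (hwmem z j) _ (hwmem z k)
      · intro h; exact absurd (Finset.mem_univ j) h
    have hsq : ‖v z‖ ^ 2 ≤ 1 := by
      have : ‖v z‖ ^ 2 = ∑ j, ‖w z j‖ ^ 2 := by
        rw [← real_inner_self_eq_norm_sq, hpy]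
        exact Finset.sum_congr rfl fun j _ => real_inner_self_eq_norm_sq _
      rw [this, ← hρ]
      refine Finset.sum_le_sum fun j _ => ?_
      have := hwnorm z j
      nlinarith [norm_nonneg (w z j)]
    have := norm_nonneg (v z)
    nlinarith
  · intro i
    obtain ⟨j0, hj0⟩ := hmem i
    have hinner : ∀ z, (inner ℝ (v z) (x i) : ℝ) = ρ j0 * (inner ℝ ((vj j0) z) (x i) : ℝ) := by
      intro z
      rw [hv]
      simp only [sum_inner]
      rw [Finset.sum_eq_single j0]
      · rw [hw]
        simp only [real_inner_smul_left]
        congr 1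
        rw [← Submodule.starProjection_apply, Submodule.inner_starProjection_left_eq_right,
          Submodule.starProjection_eq_self_iff.2 hj0]
      · intro k _ hk
        exact horth k j0 hk _ (hwmem z k) _ hj0
      · intro h; exact absurd (Finset.mem_univ j0) h
    have hInt : mIntegral d v (x i) = ρ j0 * mIntegral d (vj j0) (x i) := by
      unfold mIntegral
      rw [← integral_const_mul]
      congr 1
      funext z
      rw [hinner z]
      split <;> simp
    have hle : ρ j0 * γ j0 ≤ y i * mIntegral d v (x i) := by
      rw [hInt]
      have := hmarg j0 i hj0
      calc ρ j0 * γ j0 ≤ ρ j0 * (y i * mIntegral d (vj j0) (x i)) :=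
            mul_le_mul_of_nonneg_left this (hρ0 j0)
        _ = y i * (ρ j0 * mIntegral d (vj j0) (x i)) := by ring
    refine le_trans (ciInf_le ?_ j0) hle
    exact (Set.finite_range _).bddBelow

end
end

section
/- Hypercube with parity labels, even dimension (Lemma C.7, part 2): For the hypercube data set X = {−1/√d, +1/√d}^d with parity labels y_x = (−1)^{σ(x)}, if d is even then γ(X,Y) > 0; that is, there exists v̄ ∈ F_B such that y_x ∫ ⟨v̄(z), x⟩ 𝟙[⟨x, z⟩ > 0] dμ_N(z) > 0 for every x ∈ X. -/
open MeasureTheory ProbabilityTheory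
open scoped BigOperators ENNReal

noncomputable section

/-- The hypercube point `x_ε ∈ {−1/√d, +1/√d}^d` indexed by `ε : Fin d → Bool`. -/
def hcPoint (d : ℕ) (ε : Fin d → Bool) : E d :=
  (EuclideanSpace.equiv (Fin d) ℝ).symm
    (fun i => if ε i then -(Real.sqrt d)⁻¹ else (Real.sqrt d)⁻¹)

/-- The parity label `y_x = (−1)^{σ(x)}`. -/
def hcLabel (d : ℕ) (ε : Fin d → Bool) : ℝ :=
  (-1) ^ (Finset.univ.filter fun i => ε i = true).card

/-- The NTK margin `γ(X,Y)` for the hypercube with parity labels. -/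
def gammaHC (d : ℕ) : ℝ :=
  ⨆ v ∈ FB d, ⨅ ε : Fin d → Bool, hcLabel d ε * mIntegral d v (hcPoint d ε)

noncomputable section
namespace HPE

open MeasureTheory ProbabilityTheory Finset
open scoped ENNReal NNReal

/-! ### Combinatorial lemmas -/

lemma key_ident (e j : ℕ) :
    ((e:ℤ) + 1 - 2*(j+1)) * ((e+1).choose (j+1)) = (e+1) * ((e.choose (j+1) : ℤ) - e.choose j) := by
  have hA : ((e:ℤ)+1) * e.choose j = (e+1).choose (j+1) * (j+1) := by
    exact_mod_cast congrArg (Nat.cast : ℕ → ℤ) (Nat.add_one_mul_choose_eq e j)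
  have hP : ((e+1).choose (j+1) : ℤ) = e.choose j + e.choose (j+1) := by
    exact_mod_cast congrArg (Nat.cast : ℕ → ℤ) (Nat.choose_succ_succ e j)
  nlinarith [hA, hP]

def Tsum (d J : ℕ) : ℤ := ∑ k ∈ range J, (-1:ℤ)^k * (d.choose k) * ((d:ℤ) - 2*k)

lemma closed_form (n : ℕ) : ∀ j : ℕ,
    Tsum (n+2) (j+2) = ((n:ℤ)+2) * (-1)^(j+1) * ((n.choose (j+1) : ℤ) - n.choose j) := by
  intro j
  induction j with
  | zero =>
    simp [Tsum, Finset.sum_range_succ]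
    ring
  | succ j ih =>
    have hstep : Tsum (n+2) (j+3) = Tsum (n+2) (j+2)
        + (-1:ℤ)^(j+2) * ((n+2).choose (j+2)) * ((n:ℤ)+2 - 2*(j+2)) := by
      simp only [Tsum, Finset.sum_range_succ]
      push_cast
      ring
    have hk : ((n:ℤ)+2 - 2*(j+2)) * ((n+2).choose (j+2)) = ((n:ℤ)+2) * ((n.choose (j+2) : ℤ) - n.choose j) := by
      have h1 := key_ident (n+1) (j+1)
      have hP1 : ((n+1).choose (j+2) : ℤ) = n.choose (j+1) + n.choose (j+2) := by
        exact_mod_cast congrArg (Nat.cast : ℕ → ℤ) (Nat.choose_succ_succ n (j+1))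
      have hP2 : ((n+1).choose (j+1) : ℤ) = n.choose j + n.choose (j+1) := by
        exact_mod_cast congrArg (Nat.cast : ℕ → ℤ) (Nat.choose_succ_succ n j)
      push_cast at h1 ⊢
      nlinarith [h1, hP1, hP2]
    rw [hstep, ih]
    linear_combination ((-1:ℤ)^(j+2)) * hk

lemma central_ne (i : ℕ) : ((2*i+2).choose (i+1) : ℤ) ≠ (2*i+2).choose i := by
  intro h
  have hs : (2*i+2).choose (i+1) * (i+1) = (2*i+2).choose i * (2*i+2 - i) := Nat.choose_succ_right_eq (2*i+2) i
  have hsub : 2*i+2 - i = i + 2 := by omega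
  rw [hsub] at hs
  have hI : ((2*i+2).choose (i+1) : ℤ) * (i+1) = ((2*i+2).choose i : ℤ) * (i+2) := by exact_mod_cast hs
  rw [h] at hI
  have hpos : 0 < ((2*i+2).choose i : ℤ) := by exact_mod_cast Nat.choose_pos (by omega)
  nlinarith

lemma Tsum_ne_zero (m : ℕ) : Tsum (2*m+2) (m+1) ≠ 0 := by
  cases m with
  | zero => simp [Tsum]
  | succ i =>
    have h := closed_form (2*i+2) i
    rw [show 2*(i+1)+2 = (2*i+2)+2 from by ring, show (i+1)+1 = i+2 from rfl]
    rw [show i + 2 = i + 2 from rfl, h]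
    have hne := central_ne i
    intro hc
    have h4 : ((2*i+2:ℕ):ℤ) + 2 ≠ 0 := by positivity
    have h5 : (-1:ℤ)^(i+1) ≠ 0 := by simp
    exact (mul_ne_zero (mul_ne_zero h4 h5) (sub_ne_zero.mpr hne)) hc

/-! ### Counting lemma -/

def boolFinsetEquiv (d : ℕ) : (Fin d → Bool) ≃ Finset (Fin d) where
  toFun η := Finset.univ.filter (fun i => η i = true)
  invFun s := fun i => i ∈ s
  left_inv η := by funext i; simp
  right_inv s := by ext i; simp

lemma sum_bool_weight {M : Type*} [AddCommMonoid M] (d : ℕ) (f : ℕ → M) :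
    ∑ η : Fin d → Bool, f ((Finset.univ.filter fun i => η i = true).card)
      = ∑ k ∈ range (d+1), (d.choose k) • f k := by
  rw [← Equiv.sum_comp (boolFinsetEquiv d).symm (fun η => f ((Finset.univ.filter fun i => η i = true).card))]
  have : ∀ s : Finset (Fin d),
      (Finset.univ.filter fun i => (boolFinsetEquiv d).symm s i = true).card = s.card := by
    intro s
    congr 1
    ext i
    simp [boolFinsetEquiv]
  simp_rw [this]
  rw [← Finset.powerset_univ, Finset.sum_powerset_apply_card]
  simp

/-! ### Measure lemmas -/

lemma coe_eq (d : ℕ) : ⇑(EuclideanSpace.equiv (Fin d) ℝ).symm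
    = ⇑(MeasurableEquiv.toLp 2 (Fin d → ℝ)) := rfl

instance (d : ℕ) : IsProbabilityMeasure (stdGaussian d) := by
  rw [_root_.stdGaussian, coe_eq]
  exact Measure.isProbabilityMeasure_map (MeasurableEquiv.toLp 2 (Fin d → ℝ)).measurable.aemeasurable

lemma stdGaussian_box (d : ℕ) (s : Fin d → Set ℝ) :
    stdGaussian d {z : E d | ∀ i, z i ∈ s i} = ∏ i, gaussianReal 0 1 (s i) := by
  rw [_root_.stdGaussian, coe_eq, MeasurableEquiv.map_apply]
  have : (MeasurableEquiv.toLp 2 (Fin d → ℝ)) ⁻¹' {z : E d | ∀ i, z i ∈ s i}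
      = Set.univ.pi s := by
    ext u; simp [Set.mem_pi, MeasurableEquiv.coe_toLp]
  rw [this, Measure.pi_pi]

lemma gaussian_Ioo_symm (x y : ℝ) :
    gaussianReal 0 1 (Set.Ioo (-y) (-x)) = gaussianReal 0 1 (Set.Ioo x y) := by
  have h := @gaussianReal_map_const_mul 0 1 (-1 : ℝ)
  have h1 : (⟨(-1:ℝ)^2, sq_nonneg _⟩ : ℝ≥0) * 1 = 1 := by
    ext
    norm_num
  replace h : (gaussianReal 0 1).map (fun x => (-1:ℝ) * x) = gaussianReal 0 1 :=
    h.trans (by rw [mul_zero]; congr 1)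
  have h2 : (gaussianReal 0 1).map (fun x => (-1:ℝ) * x) (Set.Ioo (-y) (-x))
      = gaussianReal 0 1 ((fun x => (-1:ℝ) * x) ⁻¹' Set.Ioo (-y) (-x)) :=
    Measure.map_apply (by fun_prop) measurableSet_Ioo
  rw [h] at h2
  rw [h2]
  congr 1
  ext t
  simp only [Set.mem_preimage, Set.mem_Ioo]
  constructor <;> intro ht <;> constructor <;> linarith [ht.1, ht.2]

lemma gaussian_Ioo_pos (x y : ℝ) (hxy : x < y) : 0 < gaussianReal 0 1 (Set.Ioo x y) := by
  rw [gaussianReal_of_var_ne_zero 0 one_ne_zero, withDensity_apply _ measurableSet_Ioo]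
  by_contra h
  push_neg at h
  have h0 : ∫⁻ t in Set.Ioo x y, gaussianPDF 0 1 t ∂volume = 0 := le_antisymm (by simpa using h) zero_le
  rw [lintegral_eq_zero_iff (measurable_gaussianPDF 0 1)] at h0
  have hsupp : ∀ t, gaussianPDF 0 1 t ≠ 0 := fun t => (gaussianPDF_pos 0 one_ne_zero t).ne'
  have hz : (volume.restrict (Set.Ioo x y)) Set.univ = 0 := by
    have h3 := h0
    rw [Filter.EventuallyEq, ae_iff] at h3
    simpa [hsupp] using h3
  rw [Measure.restrict_apply MeasurableSet.univ, Set.univ_inter] at hz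
  simp only [Real.volume_Ioo] at hz
  exact absurd hz (by simp [ENNReal.ofReal_eq_zero, hxy, not_le])

/-! ### Geometry of the hypercube and boxes -/

variable (d : ℕ)

def aa : ℝ := (Real.sqrt d)⁻¹
def rr : ℝ := ((d:ℝ)^2)⁻¹
def ctr (b : Bool) : ℝ := if b then -(aa d) else aa d
def II (b : Bool) : Set ℝ := Set.Ioo (ctr d b - rr d) (ctr d b + rr d)
def B (ε : Fin d → Bool) : Set (E d) := {z | ∀ i, z i ∈ II d (ε i)}

variable {d}

lemma hcPoint_apply (ε : Fin d → Bool) (i : Fin d) : hcPoint d ε i = ctr d (ε i) := by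
  by_cases h : ε i <;> simp [hcPoint, ctr, aa, h, EuclideanSpace.equiv]

lemma aa_pos (hd0 : 0 < d) : 0 < aa d := by
  have : (0:ℝ) < Real.sqrt d := Real.sqrt_pos.mpr (by exact_mod_cast hd0)
  exact inv_pos.mpr this

lemma aa_nonneg : 0 ≤ aa d := by rw [aa]; positivity

lemma aa_le_one (hd0 : 0 < d) : aa d ≤ 1 := by
  rw [aa]
  have h1 : (1:ℝ) ≤ Real.sqrt d := by
    rw [show (1:ℝ) = Real.sqrt 1 from (Real.sqrt_one).symm]
    exact Real.sqrt_le_sqrt (by exact_mod_cast hd0)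
  exact inv_le_one_of_one_le₀ h1

lemma rr_pos (hd0 : 0 < d) : 0 < rr d := by
  have : (0:ℝ) < (d:ℝ)^2 := by positivity
  exact inv_pos.mpr this

lemma rr_le_aa (hd0 : 0 < d) : rr d ≤ aa d := by
  rw [rr, aa]
  apply inv_anti₀
  · exact Real.sqrt_pos.mpr (by exact_mod_cast hd0)
  · have h1 : (1:ℝ) ≤ (d:ℝ) := by exact_mod_cast hd0
    rw [show ((d:ℝ)^2) = Real.sqrt (((d:ℝ)^2)^2) from (Real.sqrt_sq (by positivity)).symm]
    apply Real.sqrt_le_sqrt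
    nlinarith [sq_nonneg ((d:ℝ)^2 - (d:ℝ)), sq_nonneg ((d:ℝ) - 1), sq_nonneg (d:ℝ)]

lemma abs_ctr (b : Bool) : |ctr d b| = aa d := by
  cases b <;> simp [ctr, abs_of_nonneg (aa_nonneg (d := d))]

lemma norm_hcPoint (hd0 : 0 < d) (ε : Fin d → Bool) : ‖hcPoint d ε‖ = 1 := by
  rw [EuclideanSpace.norm_eq]
  have h : ∀ i, ‖hcPoint d ε i‖^2 = (d:ℝ)⁻¹ := by
    intro i
    rw [hcPoint_apply]
    have hsq : ctr d (ε i) ^ 2 = aa d ^ 2 := by cases (ε i) <;> simp [ctr]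
    rw [Real.norm_eq_abs, sq_abs, hsq, aa]
    rw [← Real.sqrt_inv, Real.sq_sqrt (by positivity)]
  simp_rw [h]
  rw [Finset.sum_const, Finset.card_univ, Fintype.card_fin, nsmul_eq_mul]
  rw [mul_inv_cancel₀ (by exact_mod_cast hd0.ne'), Real.sqrt_one]

lemma inner_hcPoint (hd0 : 0 < d) (ε δ : Fin d → Bool) :
    (inner ℝ (hcPoint d ε) (hcPoint d δ) : ℝ)
      = ((d:ℝ) - 2 * (Finset.univ.filter fun i => ε i ≠ δ i).card) / d := by
  rw [PiLp.inner_apply]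
  have ha : aa d * aa d = (d:ℝ)⁻¹ := by
    rw [aa, ← mul_inv]
    congr 1
    exact Real.mul_self_sqrt (by positivity)
  have h : ∀ i : Fin d, (starRingEnd ℝ) (hcPoint d ε i) * hcPoint d δ i
      = (d:ℝ)⁻¹ - 2 * (d:ℝ)⁻¹ * (if ε i ≠ δ i then 1 else 0) := by
    intro i
    simp only [conj_trivial, hcPoint_apply]
    cases hε : ε i <;> cases hδ : δ i <;> norm_num [ctr] <;> linarith [ha]
  simp_rw [RCLike.inner_apply', h]
  rw [Finset.sum_sub_distrib, Finset.sum_const, Finset.card_univ, Fintype.card_fin]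
  rw [← Finset.mul_sum, Finset.sum_boole]
  have hd' : (d:ℝ) ≠ 0 := by exact_mod_cast hd0.ne'
  rw [nsmul_eq_mul]
  field_simp

lemma inner_box_bound (hd0 : 0 < d) (ε δ : Fin d → Bool) {z : E d} (hz : z ∈ B d ε) :
    |(inner ℝ (hcPoint d δ) z : ℝ) - (inner ℝ (hcPoint d δ) (hcPoint d ε) : ℝ)| ≤ (d:ℝ)⁻¹ := by
  have ha := aa_pos hd0
  have hr := rr_pos hd0
  rw [PiLp.inner_apply, PiLp.inner_apply]
  simp only [RCLike.inner_apply', conj_trivial, hcPoint_apply]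
  rw [← Finset.sum_sub_distrib]
  calc |∑ i : Fin d, (ctr d (δ i) * z i - ctr d (δ i) * ctr d (ε i))|
      ≤ ∑ i : Fin d, |ctr d (δ i) * z i - ctr d (δ i) * ctr d (ε i)| := Finset.abs_sum_le_sum_abs _ _
    _ ≤ ∑ _i : Fin d, aa d * rr d := by
        apply Finset.sum_le_sum
        intro i _
        rw [← mul_sub, abs_mul, abs_ctr]
        apply mul_le_mul_of_nonneg_left _ (le_of_lt ha)
        have h1 := hz i
        rw [II, Set.mem_Ioo] at h1
        rw [abs_le]
        constructor <;> linarith [h1.1, h1.2]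
    _ ≤ (d:ℝ)⁻¹ := by
        rw [Finset.sum_const, Finset.card_univ, Fintype.card_fin, nsmul_eq_mul]
        have h1 : aa d * rr d ≤ rr d := by
          nlinarith [aa_le_one hd0]
        have hd' : (0:ℝ) < (d:ℝ) := by exact_mod_cast hd0
        calc (d:ℝ) * (aa d * rr d) ≤ (d:ℝ) * rr d := by nlinarith
          _ = (d:ℝ)⁻¹ := by rw [rr]; field_simp

lemma B_inner_pos (hd : Even d) (hd0 : 0 < d) (ε δ : Fin d → Bool)
    (hw : 2 * (Finset.univ.filter fun i => ε i ≠ δ i).card < d) {z : E d} (hz : z ∈ B d ε) :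
    0 < (inner ℝ (hcPoint d δ) z : ℝ) := by
  have hbd := inner_box_bound hd0 ε δ hz
  have hip : (inner ℝ (hcPoint d δ) (hcPoint d ε) : ℝ)
      = ((d:ℝ) - 2 * (Finset.univ.filter fun i => ε i ≠ δ i).card) / d := by
    rw [real_inner_comm]
    exact inner_hcPoint hd0 ε δ
  set w := (Finset.univ.filter fun i => ε i ≠ δ i).card with hwdef
  have hnat : 2 * w + 2 ≤ d := by
    obtain ⟨c, hc⟩ := hd
    omega
  have hd' : (0:ℝ) < (d:ℝ) := by exact_mod_cast hd0
  have hge : (2:ℝ)/d ≤ (inner ℝ (hcPoint d δ) (hcPoint d ε) : ℝ) := by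
    rw [hip]
    gcongr
    have : ((2 * w + 2 : ℕ) : ℝ) ≤ (d:ℝ) := by exact_mod_cast hnat
    push_cast at this
    linarith
  have habs := abs_le.mp hbd
  have hinv : (d:ℝ)⁻¹ = 1/d := (one_div _).symm
  have h1d : (0:ℝ) < 1/d := by positivity
  have hr : (2:ℝ)/d - 1/d = 1/d := by ring
  linarith [habs.1]

lemma B_inner_neg (hd : Even d) (hd0 : 0 < d) (ε δ : Fin d → Bool)
    (hw : d < 2 * (Finset.univ.filter fun i => ε i ≠ δ i).card) {z : E d} (hz : z ∈ B d ε) :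
    (inner ℝ (hcPoint d δ) z : ℝ) < 0 := by
  have hbd := inner_box_bound hd0 ε δ hz
  have hip : (inner ℝ (hcPoint d δ) (hcPoint d ε) : ℝ)
      = ((d:ℝ) - 2 * (Finset.univ.filter fun i => ε i ≠ δ i).card) / d := by
    rw [real_inner_comm]
    exact inner_hcPoint hd0 ε δ
  set w := (Finset.univ.filter fun i => ε i ≠ δ i).card with hwdef
  have hnat : d + 2 ≤ 2 * w := by
    obtain ⟨c, hc⟩ := hd
    omega
  have hd' : (0:ℝ) < (d:ℝ) := by exact_mod_cast hd0
  have hle : (inner ℝ (hcPoint d δ) (hcPoint d ε) : ℝ) ≤ -(2/d) := by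
    rw [hip]
    have h2 : ((d:ℝ)) - 2 * w ≤ -2 := by
      have : ((d + 2 : ℕ) : ℝ) ≤ ((2 * w : ℕ) : ℝ) := by exact_mod_cast hnat
      push_cast at this
      linarith
    rw [div_le_iff₀ hd']
    have he : (-(2/(d:ℝ))) * d = -2 := by field_simp
    linarith
  have habs := abs_le.mp hbd
  have hinv : (d:ℝ)⁻¹ = 1/d := (one_div _).symm
  have h1d : (0:ℝ) < 1/d := by positivity
  have hr : -((2:ℝ)/d) + 1/d = -(1/d) := by ring
  linarith [habs.2]

lemma B_disjoint (hd0 : 0 < d) {ε ε' : Fin d → Bool} (h : ε ≠ ε') {z : E d}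
    (hz : z ∈ B d ε) (hz' : z ∈ B d ε') : False := by
  obtain ⟨i, hi⟩ := Function.ne_iff.mp h
  have h1 := hz i
  have h2 := hz' i
  have hra := rr_le_aa hd0
  have hrp := rr_pos hd0
  rw [II, Set.mem_Ioo] at h1 h2
  cases hb : ε i <;> cases hb' : ε' i
  · exact hi (hb.trans hb'.symm)
  · rw [hb] at h1; rw [hb'] at h2
    have g1 : ctr d false = aa d := rfl
    have g2 : ctr d true = -(aa d) := rfl
    rw [g1] at h1; rw [g2] at h2
    linarith [h1.1, h1.2, h2.1, h2.2]
  · rw [hb] at h1; rw [hb'] at h2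
    have g1 : ctr d false = aa d := rfl
    have g2 : ctr d true = -(aa d) := rfl
    rw [g2] at h1; rw [g1] at h2
    linarith [h1.1, h1.2, h2.1, h2.2]
  · exact hi (hb.trans hb'.symm)

/-! ### Labels -/

lemma hcLabel_prod (ε : Fin d → Bool) :
    hcLabel d ε = ∏ i, (if ε i = true then (-1:ℝ) else 1) := by
  rw [hcLabel, Finset.prod_ite, Finset.prod_const, Finset.prod_const_one, mul_one]

lemma hcLabel_flip (δ η : Fin d → Bool) :
    hcLabel d (fun i => xor (η i) (δ i)) = hcLabel d η * hcLabel d δ := by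
  rw [hcLabel_prod, hcLabel_prod, hcLabel_prod, ← Finset.prod_mul_distrib]
  apply Finset.prod_congr rfl
  intro i _
  cases η i <;> cases δ i <;> norm_num

lemma hcLabel_sq (ε : Fin d → Bool) : hcLabel d ε * hcLabel d ε = 1 := by
  rw [hcLabel, ← pow_add]
  exact Even.neg_one_pow ⟨_, rfl⟩

lemma abs_hcLabel (ε : Fin d → Bool) : |hcLabel d ε| = 1 := by
  rw [hcLabel, abs_pow, abs_neg, abs_one, one_pow]

lemma flip_dist (δ η : Fin d → Bool) :
    (Finset.univ.filter fun i => (xor (η i) (δ i)) ≠ δ i).card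
      = (Finset.univ.filter fun i => η i = true).card := by
  congr 1
  apply Finset.filter_congr
  intro i _
  cases η i <;> cases δ i <;> simp

def flipEquiv (δ : Fin d → Bool) : (Fin d → Bool) ≃ (Fin d → Bool) where
  toFun η := fun i => xor (η i) (δ i)
  invFun η := fun i => xor (η i) (δ i)
  left_inv η := by funext i; simp
  right_inv η := by funext i; simp

/-! ### The vector field -/

variable (d)

def TT : ℤ := Tsum d (d/2)
def sgn : ℝ := if 0 < TT d then 1 else -1
def MM : ℝ≥0∞ := gaussianReal 0 1 (II d false)
def vv : E d → E d := fun z =>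
  ∑ ε : Fin d → Bool, Set.indicator (B d ε) (fun _ => sgn d * hcLabel d ε) z • hcPoint d ε
def GG (k : ℕ) : ℝ :=
  if 2*k < d then (-1:ℝ)^k * (((d:ℝ) - 2*k)/d) * ((MM d)^d).toReal else 0

variable {d}

lemma abs_sgn : |sgn d| = 1 := by rw [sgn]; split <;> simp

lemma vv_mem (hd0 : 0 < d) : vv d ∈ FB d := by
  intro z
  by_cases hex : ∃ ε, z ∈ B d ε
  · obtain ⟨ε₀, hε₀⟩ := hex
    rw [vv, Finset.sum_eq_single ε₀]
    · rw [Set.indicator_of_mem hε₀, norm_smul, norm_hcPoint hd0, mul_one]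
      rw [Real.norm_eq_abs, abs_mul, abs_sgn, abs_hcLabel, mul_one]
    · intro b _ hb
      rw [Set.indicator_of_notMem, zero_smul]
      intro hzb
      exact B_disjoint hd0 hb hzb hε₀
    · intro h
      exact absurd (Finset.mem_univ ε₀) h
  · push_neg at hex
    rw [vv]
    rw [Finset.sum_congr rfl (fun ε _ => by rw [Set.indicator_of_notMem (hex ε), zero_smul])]
    simp

/-! ### Measurability -/

lemma measurable_coord (i : Fin d) : Measurable (fun z : E d => z i) :=
  (measurable_pi_apply i).comp (MeasurableEquiv.toLp 2 (Fin d → ℝ)).symm.measurable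

lemma measurableSet_B (ε : Fin d → Bool) : MeasurableSet (B d ε) := by
  have h : B d ε = ⋂ i, (fun z : E d => z i) ⁻¹' (II d (ε i)) := by
    ext z
    simp only [B, Set.mem_setOf_eq, Set.mem_iInter, Set.mem_preimage]
  rw [h]
  exact MeasurableSet.iInter fun i => (measurable_coord i) (by rw [II]; exact measurableSet_Ioo)

lemma measurableSet_H (x : E d) : MeasurableSet {z : E d | 0 < (inner ℝ x z : ℝ)} := by
  have hc : Continuous (fun z : E d => (inner ℝ x z : ℝ)) :=
    Continuous.inner continuous_const continuous_id
  exact measurableSet_lt measurable_const hc.measurable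

/-! ### Box measures -/

lemma gauss_II (b : Bool) : gaussianReal 0 1 (II d b) = MM d := by
  cases b
  · rfl
  · have h1 : II d true = Set.Ioo (-(aa d + rr d)) (-(aa d - rr d)) := by
      rw [II]
      have : ctr d true = -(aa d) := rfl
      rw [this]
      congr 1 <;> ring
    have h2 : II d false = Set.Ioo (aa d - rr d) (aa d + rr d) := by
      rw [II]
      have : ctr d false = aa d := rfl
      rw [this]
    rw [h1, MM, h2, gaussian_Ioo_symm]

lemma stdGaussian_B (ε : Fin d → Bool) : stdGaussian d (B d ε) = (MM d)^d := by
  have h : B d ε = {z : E d | ∀ i, z i ∈ II d (ε i)} := rfl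
  rw [h, stdGaussian_box]
  simp [gauss_II]

lemma massd_pos (hd0 : 0 < d) : 0 < ((MM d)^d).toReal := by
  have hpos : 0 < MM d := by
    rw [MM]
    apply gaussian_Ioo_pos
    have := rr_pos hd0
    linarith
  have hlt : MM d < ⊤ := lt_of_le_of_lt (measure_mono (Set.subset_univ _)) (by
    rw [measure_univ]; exact ENNReal.one_lt_top)
  apply ENNReal.toReal_pos
  · exact (ENNReal.pow_pos hpos d).ne'
  · exact (ENNReal.pow_ne_top hlt.ne)

/-! ### The main margin computation -/

lemma margin_eq (hd : Even d) (hd0 : 0 < d) (δ : Fin d → Bool) :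
    hcLabel d δ * mIntegral d (vv d) (hcPoint d δ)
      = sgn d * ((((MM d)^d).toReal / d) * (TT d : ℝ)) := by
  have hfun : (fun z => if 0 < (inner ℝ (hcPoint d δ) z : ℝ) then (inner ℝ (vv d z) (hcPoint d δ) : ℝ) else 0)
      = fun z => ∑ ε : Fin d → Bool,
          Set.indicator (B d ε ∩ {w : E d | 0 < (inner ℝ (hcPoint d δ) w : ℝ)})
            (fun _ => sgn d * hcLabel d ε * (inner ℝ (hcPoint d ε) (hcPoint d δ) : ℝ)) z := by
    funext z
    by_cases hz : 0 < (inner ℝ (hcPoint d δ) z : ℝ)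
    · rw [if_pos hz, vv, sum_inner]
      apply Finset.sum_congr rfl
      intro ε _
      rw [real_inner_smul_left]
      by_cases hzB : z ∈ B d ε
      · rw [Set.indicator_of_mem hzB, Set.indicator_of_mem (Set.mem_inter hzB hz)]
      · rw [Set.indicator_of_notMem hzB, Set.indicator_of_notMem (fun hc => hzB hc.1), zero_mul]
    · rw [if_neg hz]
      symm
      apply Finset.sum_eq_zero
      intro ε _
      exact Set.indicator_of_notMem (fun hc => hz hc.2) _
  rw [mIntegral, hfun]
  rw [integral_finset_sum _ (fun ε _ =>
    ((integrable_const _).indicator ((measurableSet_B ε).inter (measurableSet_H _))))]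
  have hIc : ∀ ε : Fin d → Bool,
      (∫ z, Set.indicator (B d ε ∩ {w : E d | 0 < (inner ℝ (hcPoint d δ) w : ℝ)})
        (fun _ => sgn d * hcLabel d ε * (inner ℝ (hcPoint d ε) (hcPoint d δ) : ℝ)) z ∂(stdGaussian d))
      = ((stdGaussian d) (B d ε ∩ {w : E d | 0 < (inner ℝ (hcPoint d δ) w : ℝ)})).toReal
          • (sgn d * hcLabel d ε * (inner ℝ (hcPoint d ε) (hcPoint d δ) : ℝ)) := by
    intro ε
    exact integral_indicator_const _ ((measurableSet_B ε).inter (measurableSet_H _))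
  rw [Finset.sum_congr rfl (fun ε _ => hIc ε), Finset.mul_sum]
  rw [← Equiv.sum_comp (flipEquiv δ) (fun ε =>
    hcLabel d δ * (((stdGaussian d) (B d ε ∩ {w : E d | 0 < (inner ℝ (hcPoint d δ) w : ℝ)})).toReal
      • (sgn d * hcLabel d ε * (inner ℝ (hcPoint d ε) (hcPoint d δ) : ℝ))))]
  have hterm : ∀ η : Fin d → Bool,
      hcLabel d δ * (((stdGaussian d) (B d (flipEquiv δ η) ∩ {w : E d | 0 < (inner ℝ (hcPoint d δ) w : ℝ)})).toReal
        • (sgn d * hcLabel d (flipEquiv δ η) * (inner ℝ (hcPoint d (flipEquiv δ η)) (hcPoint d δ) : ℝ)))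
      = sgn d * GG d ((Finset.univ.filter fun i => η i = true).card) := by
    intro η
    have hflip : flipEquiv δ η = fun i => xor (η i) (δ i) := rfl
    set w := (Finset.univ.filter fun i => η i = true).card with hwdef
    have hwd : (Finset.univ.filter fun i => (flipEquiv δ η) i ≠ δ i).card = w := by
      rw [hflip]
      exact flip_dist δ η
    have hip : (inner ℝ (hcPoint d (flipEquiv δ η)) (hcPoint d δ) : ℝ) = ((d:ℝ) - 2 * w) / d := by
      rw [inner_hcPoint hd0, hwd]
    have hlab : hcLabel d δ * hcLabel d (flipEquiv δ η) = hcLabel d η := by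
      rw [hflip, hcLabel_flip, mul_comm (hcLabel d η), ← mul_assoc, hcLabel_sq, one_mul]
    rcases lt_trichotomy (2 * w) d with h1 | h2 | h3
    · -- positive inner product: box inside halfspace
      have hsub : B d (flipEquiv δ η) ∩ {w : E d | 0 < (inner ℝ (hcPoint d δ) w : ℝ)}
          = B d (flipEquiv δ η) := by
        apply Set.inter_eq_left.mpr
        intro z hz
        exact B_inner_pos hd hd0 (flipEquiv δ η) δ (by rw [hwd]; exact h1) hz
      rw [hsub, stdGaussian_B, hip, GG, if_pos h1]
      rw [smul_eq_mul]
      have hη : hcLabel d η = (-1:ℝ)^w := rfl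
      calc hcLabel d δ * (((MM d)^d).toReal * (sgn d * hcLabel d (flipEquiv δ η) * (((d:ℝ) - 2*w)/d)))
          = (hcLabel d δ * hcLabel d (flipEquiv δ η)) * (((MM d)^d).toReal * (sgn d * (((d:ℝ) - 2*w)/d))) := by ring
        _ = sgn d * ((-1:ℝ)^w * (((d:ℝ) - 2*w)/d) * ((MM d)^d).toReal) := by rw [hlab, hη]; ring
    · -- orthogonal: inner product is zero
      have hzero : (inner ℝ (hcPoint d (flipEquiv δ η)) (hcPoint d δ) : ℝ) = 0 := by
        rw [hip, ← h2]
        push_cast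
        ring_nf
      rw [hzero, GG, if_neg (by omega)]
      simp
    · -- negative inner product: box misses halfspace
      have hempty : B d (flipEquiv δ η) ∩ {w : E d | 0 < (inner ℝ (hcPoint d δ) w : ℝ)} = ∅ := by
        apply Set.eq_empty_iff_forall_notMem.mpr
        intro z hz
        exact absurd hz.2 (not_lt.mpr (le_of_lt (B_inner_neg hd hd0 (flipEquiv δ η) δ (by rw [hwd]; exact h3) hz.1)))
      rw [hempty, GG, if_neg (by omega)]
      simp
  rw [Finset.sum_congr rfl (fun η _ => hterm η)]
  rw [← Finset.mul_sum]
  congr 1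
  rw [sum_bool_weight d (GG d)]
  have hsub : range (d/2) ⊆ range (d+1) := by
    intro k hk
    rw [Finset.mem_range] at *
    omega
  rw [← Finset.sum_subset hsub (fun k _ hk => by
    rw [Finset.mem_range, not_lt] at hk
    have h2k : ¬ (2*k < d) := by
      obtain ⟨c, hc⟩ := hd
      omega
    rw [GG, if_neg h2k, smul_zero])]
  rw [TT, Tsum]
  push_cast
  rw [Finset.mul_sum]
  apply Finset.sum_congr rfl
  intro k hk
  rw [Finset.mem_range] at hk
  have h2k : 2*k < d := by
    obtain ⟨c, hc⟩ := hd
    omega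
  rw [GG, if_pos h2k, nsmul_eq_mul]
  have hd' : (d:ℝ) ≠ 0 := by exact_mod_cast hd0.ne'
  field_simp

lemma kappa_pos (hd : Even d) (hd0 : 0 < d) :
    0 < sgn d * ((((MM d)^d).toReal / d) * (TT d : ℝ)) := by
  have hT : TT d ≠ 0 := by
    obtain ⟨c, hc⟩ := hd
    have hc1 : 1 ≤ c := by omega
    have h3 : d/2 = (c-1)+1 := by omega
    have h2 : d = 2*(c-1)+2 := by omega
    rw [TT, h3, h2]
    exact Tsum_ne_zero (c-1)
  have hmass := massd_pos hd0
  have hd' : (0:ℝ) < (d:ℝ) := by exact_mod_cast hd0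
  rcases lt_or_gt_of_ne hT with h | h
  · have hs : sgn d = -1 := by rw [sgn, if_neg (not_lt.mpr (le_of_lt h))]
    have hTr : (TT d : ℝ) < 0 := by exact_mod_cast h
    rw [hs]
    have : ((MM d)^d).toReal / d > 0 := by positivity
    nlinarith
  · have hs : sgn d = 1 := by rw [sgn, if_pos h]
    have hTr : (0:ℝ) < (TT d : ℝ) := by exact_mod_cast h
    rw [hs, one_mul]
    have : ((MM d)^d).toReal / d > 0 := by positivity
    nlinarith

lemma margin_bound (hd0 : 0 < d) (v : E d → E d) (hv : v ∈ FB d) (ε : Fin d → Bool) :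
    hcLabel d ε * mIntegral d v (hcPoint d ε) ≤ 1 := by
  have hInt : |mIntegral d v (hcPoint d ε)| ≤ 1 := by
    rw [mIntegral, ← Real.norm_eq_abs]
    have hb : ∀ᵐ z ∂(stdGaussian d),
        ‖if 0 < (inner ℝ (hcPoint d ε) z : ℝ) then (inner ℝ (v z) (hcPoint d ε) : ℝ) else 0‖ ≤ 1 := by
      apply Filter.Eventually.of_forall
      intro z
      split
      · rw [Real.norm_eq_abs]
        calc |(inner ℝ (v z) (hcPoint d ε) : ℝ)| ≤ ‖v z‖ * ‖hcPoint d ε‖ := abs_real_inner_le_norm _ _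
          _ ≤ 1 * 1 := by
              apply mul_le_mul (hv z) (le_of_eq (norm_hcPoint hd0 ε)) (norm_nonneg _) zero_le_one
          _ = 1 := by norm_num
      · simp
    calc ‖∫ z, (if 0 < (inner ℝ (hcPoint d ε) z : ℝ) then (inner ℝ (v z) (hcPoint d ε) : ℝ) else 0) ∂(stdGaussian d)‖
        ≤ 1 * ((stdGaussian d) Set.univ).toReal := norm_integral_le_of_norm_le_const hb
      _ = 1 := by rw [measure_univ]; norm_num
  calc hcLabel d ε * mIntegral d v (hcPoint d ε)
      ≤ |hcLabel d ε * mIntegral d v (hcPoint d ε)| := le_abs_self _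
    _ = |hcLabel d ε| * |mIntegral d v (hcPoint d ε)| := abs_mul _ _
    _ ≤ 1 * 1 := by
        rw [abs_hcLabel]
        exact mul_le_mul_of_nonneg_left hInt zero_le_one
    _ = 1 := by norm_num

end HPE


/-- **Lemma C.7, part 2 (hypercube with parity labels, even dimension).** If `d` is even (and
positive) then `γ(X,Y) > 0`: there is `v̄ ∈ F_B` whose value is positive at every point. -/
theorem hypercube_parity_even (d : ℕ) (hd : Even d) (hd0 : 0 < d) :
    0 < gammaHC d ∧
    ∃ v ∈ FB d, ∀ ε : Fin d → Bool, 0 < hcLabel d ε * mIntegral d v (hcPoint d ε) := by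
  have hκpos := HPE.kappa_pos hd hd0
  have hmem := HPE.vv_mem hd0
  have hmargin := HPE.margin_eq hd hd0
  constructor
  · rw [gammaHC]
    have h1 : HPE.sgn d * ((((HPE.MM d)^d).toReal / d) * (HPE.TT d : ℝ))
        ≤ ⨅ ε : Fin d → Bool, hcLabel d ε * mIntegral d (HPE.vv d) (hcPoint d ε) :=
      le_ciInf fun ε => le_of_eq (hmargin ε).symm
    have hbdd : ∀ v : E d → E d,
        (⨆ _ : v ∈ FB d, ⨅ ε : Fin d → Bool, hcLabel d ε * mIntegral d v (hcPoint d ε)) ≤ 1 := by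
      intro v
      by_cases hv : v ∈ FB d
      · rw [ciSup_pos hv]
        refine le_trans (ciInf_le (Set.finite_range _).bddBelow (fun _ => false)) ?_
        exact HPE.margin_bound hd0 v hv _
      · haveI : IsEmpty (v ∈ FB d) := ⟨hv⟩
        rw [Real.iSup_of_isEmpty]
        norm_num
    have h2 : (⨆ _ : HPE.vv d ∈ FB d,
          ⨅ ε : Fin d → Bool, hcLabel d ε * mIntegral d (HPE.vv d) (hcPoint d ε))
        ≤ ⨆ v, ⨆ _ : v ∈ FB d, ⨅ ε : Fin d → Bool, hcLabel d ε * mIntegral d v (hcPoint d ε) := by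
      apply le_ciSup (f := fun v : E d → E d =>
        ⨆ _ : v ∈ FB d, ⨅ ε : Fin d → Bool, hcLabel d ε * mIntegral d v (hcPoint d ε))
      exact ⟨1, by rintro x ⟨v, rfl⟩; exact hbdd v⟩
    calc (0:ℝ) < HPE.sgn d * ((((HPE.MM d)^d).toReal / d) * (HPE.TT d : ℝ)) := hκpos
      _ ≤ ⨅ ε : Fin d → Bool, hcLabel d ε * mIntegral d (HPE.vv d) (hcPoint d ε) := h1
      _ = ⨆ _ : HPE.vv d ∈ FB d,
            ⨅ ε : Fin d → Bool, hcLabel d ε * mIntegral d (HPE.vv d) (hcPoint d ε) :=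
          (ciSup_pos (f := fun _ : HPE.vv d ∈ FB d =>
            ⨅ ε : Fin d → Bool, hcLabel d ε * mIntegral d (HPE.vv d) (hcPoint d ε)) hmem).symm
      _ ≤ _ := h2
  · exact ⟨HPE.vv d, hmem, fun ε => by rw [hmargin ε]; exact hκpos⟩

end
end
end

section
/- Unconditional width lower bound (Lemma D.4): Let ε ∈ [0,1). For the alternating-points-on-the-circle data set with n divisible by 4, any two-layer ReLU network output function f(x) = (1/√m) Σ_{s=1}^m a_s φ(⟨w_s, x⟩) with width m < (1−ε)n/6 − 2 (for any choice of a ∈ ℝ^m and W ∈ ℝ^{m×2}) misclassifies strictly more than εn/3 of the n points; i.e., #{i ∈ [n] : y_i f(x_i) ≤ 0} > εn/3. -/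
open MeasureTheory ProbabilityTheory
open scoped BigOperators ENNReal

noncomputable section

/-- The `k`-th point of the alternating-points-on-the-circle data set,
`x_k = (cos(2kπ/n), sin(2kπ/n))`. -/
def circPt (n : ℕ) (k : ℕ) : E 2 :=
  (EuclideanSpace.equiv (Fin 2) ℝ).symm
    ![Real.cos (2 * k * Real.pi / n), Real.sin (2 * k * Real.pi / n)]

/-- The label `y_k = (−1)^k`. -/
def circLab (k : ℕ) : ℝ := (-1) ^ k

namespace AuxD4

open Real

def thet (n : ℕ) (j : ℤ) : ℝ := 2 * j * π / n
def gl (A B : ℝ) (θ : ℝ) : ℝ := A * Real.cos θ + B * Real.sin θ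

def iota (n : ℕ) (hn : 0 < n) (j : ℤ) : Fin n :=
  ⟨(j % n).toNat, by
    have h1 : (0:ℤ) < n := by exact_mod_cast hn
    have h2 := Int.emod_nonneg j (by exact_mod_cast hn.ne' : (n:ℤ) ≠ 0)
    have h3 := Int.emod_lt_of_pos j h1
    omega⟩

lemma iota_coe (n : ℕ) (hn : 0 < n) (j : ℤ) : ((iota n hn j : Fin n) : ℤ) = j % n := by
  simp [iota]
  have h2 := Int.emod_nonneg j (by exact_mod_cast hn.ne' : (n:ℤ) ≠ 0)
  omega

lemma iota_congr (n : ℕ) (hn : 0 < n) {j j' : ℤ} (h : j % n = j' % n) :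
    iota n hn j = iota n hn j' := by
  apply Fin.ext; simp [iota, h]

lemma iota_coe_self (n : ℕ) (hn : 0 < n) (i : Fin n) : iota n hn ((i : ℤ)) = i := by
  apply Fin.ext
  simp [iota]
  have : ((i:ℤ) % n) = (i:ℤ) := Int.emod_eq_of_lt (by positivity) (by exact_mod_cast i.isLt)
  omega

lemma thet_add (n : ℕ) (j e : ℤ) : thet n (j + e) = thet n j + e * (2 * π / n) := by
  unfold thet; push_cast; ring

lemma thet_period (n : ℕ) (hn : (n:ℝ) ≠ 0) (j t : ℤ) :
    thet n (j + t * n) = thet n j + t * (2 * π) := by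
  unfold thet; push_cast; field_simp

lemma gl_period (n : ℕ) (hn : (n:ℝ) ≠ 0) (A B : ℝ) (j t : ℤ) :
    gl A B (thet n (j + t * n)) = gl A B (thet n j) := by
  rw [thet_period n hn j t]
  unfold gl
  rw [Real.cos_add_int_mul_two_pi, Real.sin_add_int_mul_two_pi]

lemma gl_ident (n : ℕ) (A B : ℝ) (j : ℤ) :
    gl A B (thet n (j - 1)) + gl A B (thet n (j + 1))
      = 2 * Real.cos (2 * π / n) * gl A B (thet n j) := by
  have h1 : thet n (j + 1) = thet n j + 2 * π / n := by
    have := thet_add n j 1; simpa using this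
  have h2 : thet n (j - 1) = thet n j - 2 * π / n := by
    have := thet_add n j (-1); push_cast at this; rw [sub_eq_add_neg]; rw [this]; ring
  rw [h1, h2]
  unfold gl
  rw [Real.cos_add, Real.cos_sub, Real.sin_add, Real.sin_sub]
  ring

lemma zeros_rel {A B z z' : ℝ} (hAB : ¬(A = 0 ∧ B = 0))
    (hz : gl A B z = 0) (hz' : gl A B z' = 0) : ∃ t : ℤ, z' = z + t * π := by
  unfold gl at hz hz'
  have hS : Real.sin (z' - z) = 0 := by
    have hA : A * (Real.sin z' * Real.cos z - Real.cos z' * Real.sin z) = 0 := by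
      linear_combination Real.sin z' * hz - Real.sin z * hz'
    have hB : B * (Real.sin z' * Real.cos z - Real.cos z' * Real.sin z) = 0 := by
      linear_combination (-(Real.cos z')) * hz + Real.cos z * hz'
    rw [Real.sin_sub]
    rcases mul_eq_zero.1 hA with h | h
    · rcases mul_eq_zero.1 hB with h' | h'
      · exact absurd ⟨h, h'⟩ hAB
      · exact h'
    · exact h
  obtain ⟨t, ht⟩ := Real.sin_eq_zero_iff.1 hS
  exact ⟨t, by linarith⟩

lemma zero_of_mixed {n : ℕ} {A B : ℝ} {j : ℤ} (hn : 0 < n)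
    (h : ∃ e1 e2 : ℤ, |e1| ≤ 1 ∧ |e2| ≤ 1 ∧ 0 < gl A B (thet n (j + e1))
      ∧ gl A B (thet n (j + e2)) < 0) :
    ∃ z : ℝ, gl A B z = 0 ∧ |z - thet n j| ≤ 2 * π / n := by
  obtain ⟨e1, e2, he1, he2, hp, hm⟩ := h
  set δ := 2 * π / n with hδ
  have hδ0 : 0 < δ := by positivity
  have hcont : Continuous (gl A B) := by unfold gl; fun_prop
  have hmem : ∀ e : ℤ, |e| ≤ 1 → thet n (j + e) ∈ Set.Icc (thet n j - δ) (thet n j + δ) := by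
    intro e he
    rw [thet_add]
    have h1 : (-1 : ℝ) ≤ (e:ℝ) := by exact_mod_cast neg_le_of_abs_le he
    have h2 : (e:ℝ) ≤ 1 := by exact_mod_cast le_of_abs_le he
    constructor <;> nlinarith
  have h0 : (0:ℝ) ∈ Set.uIcc (gl A B (thet n (j + e1))) (gl A B (thet n (j + e2))) := by
    rw [Set.mem_uIcc]; right; constructor <;> linarith
  have := intermediate_value_uIcc (a := thet n (j+e1)) (b := thet n (j+e2)) hcont.continuousOn
  obtain ⟨z, hz, hz0⟩ := this h0
  refine ⟨z, hz0, ?_⟩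
  have hsub := Set.uIcc_subset_Icc (hmem e1 he1) (hmem e2 he2)
  have := hsub hz
  rw [Set.mem_Icc] at this
  rw [abs_le]; constructor <;> linarith

lemma card_le_six (a b c d e f : ℤ) : ({a, b, c, d, e, f} : Finset ℤ).card ≤ 6 := by
  apply le_trans (Finset.card_insert_le _ _)
  apply Nat.succ_le_succ
  apply le_trans (Finset.card_insert_le _ _)
  apply Nat.succ_le_succ
  apply le_trans (Finset.card_insert_le _ _)
  apply Nat.succ_le_succ
  apply le_trans (Finset.card_insert_le _ _)
  apply Nat.succ_le_succ
  apply le_trans (Finset.card_insert_le _ _)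
  apply Nat.succ_le_succ
  exact le_of_eq (Finset.card_singleton _)

set_option maxHeartbeats 1000000 in
open scoped Classical in
lemma card_mixed_le (n : ℕ) (hn4 : 4 ≤ n) (h2 : 2 ∣ n) (A B : ℝ) :
    (Finset.univ.filter fun k : Fin n => ∃ e1 e2 : ℤ, |e1| ≤ 1 ∧ |e2| ≤ 1 ∧
      0 < gl A B (thet n ((k:ℤ) + e1)) ∧ gl A B (thet n ((k:ℤ) + e2)) < 0).card ≤ 6 := by
  have hn : 0 < n := by omega
  obtain ⟨n2, hn2eq⟩ := h2
  rcases (Finset.univ.filter fun k : Fin n => ∃ e1 e2 : ℤ, |e1| ≤ 1 ∧ |e2| ≤ 1 ∧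
      0 < gl A B (thet n ((k:ℤ) + e1)) ∧ gl A B (thet n ((k:ℤ) + e2)) < 0).eq_empty_or_nonempty
    with he | ⟨k0, hk0⟩
  · rw [he]; simp
  · have hmix0 := (Finset.mem_filter.1 hk0).2
    have hAB : ¬(A = 0 ∧ B = 0) := by
      rintro ⟨hA, hB⟩
      obtain ⟨e1, e2, _, _, hp, _⟩ := hmix0
      simp [gl, hA, hB] at hp
    obtain ⟨z0, hz0, -⟩ := zero_of_mixed hn hmix0
    have hδ0 : 0 < 2 * π / n := by positivity
    obtain ⟨u, hu⟩ : ∃ u : ℝ, u = z0 / (2 * π / n) := ⟨_, rfl⟩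
    obtain ⟨q, hq⟩ : ∃ q : ℤ, q = ⌊u⌋ := ⟨_, rfl⟩
    have hn2pos : 0 < n2 := by omega
    have hn2 : (n2 : ℝ) * (2 * π / n) = π := by
      have h2n : (n:ℝ) = 2 * (n2:ℝ) := by exact_mod_cast hn2eq
      have hne2 : (n2:ℝ) ≠ 0 := by positivity
      rw [h2n]; field_simp
    have h2nZ : (n : ℤ) = 2 * (n2 : ℤ) := by exact_mod_cast hn2eq
    have hsub : (Finset.univ.filter fun k : Fin n => ∃ e1 e2 : ℤ, |e1| ≤ 1 ∧ |e2| ≤ 1 ∧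
        0 < gl A B (thet n ((k:ℤ) + e1)) ∧ gl A B (thet n ((k:ℤ) + e2)) < 0) ⊆
        Finset.image (iota n hn)
          {q - 1, q, q + 1, q - 1 + (n2:ℤ), q + (n2:ℤ), q + 1 + (n2:ℤ)} := by
      intro k hk
      have hmix := (Finset.mem_filter.1 hk).2
      obtain ⟨z, hz, hzd⟩ := zero_of_mixed hn hmix
      obtain ⟨t, ht⟩ := zeros_rel hAB hz0 hz
      have hth : thet n ((k:ℤ)) = (k:ℝ) * (2 * π / n) := by
        unfold thet; push_cast; ring
      have hu0 : z0 = u * (2 * π / n) := by rw [hu]; field_simp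
      have hkey : |(k:ℝ) - u - (t:ℝ) * (n2:ℝ)| ≤ 1 := by
        have h1 : z - thet n (k:ℤ) = (2 * π / n) * (u + (t:ℝ) * (n2:ℝ) - (k:ℝ)) := by
          rw [ht, hth]
          nth_rewrite 1 [hu0]
          rw [show (t:ℝ) * π = (t:ℝ) * ((n2:ℝ) * (2 * π / n)) by rw [hn2]]
          ring
        have h2' := hzd
        rw [h1, abs_mul, abs_of_pos hδ0] at h2'
        have h3 : |u + (t:ℝ) * (n2:ℝ) - (k:ℝ)| ≤ 1 := by nlinarith
        calc |(k:ℝ) - u - (t:ℝ) * (n2:ℝ)|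
            = |u + (t:ℝ) * (n2:ℝ) - (k:ℝ)| := by rw [abs_sub_comm]; ring_nf
          _ ≤ 1 := h3
      have hbounds : q - 1 ≤ (k:ℤ) - t * (n2:ℤ) ∧ (k:ℤ) - t * (n2:ℤ) ≤ q + 1 := by
        rw [abs_le] at hkey
        have hql : ((q:ℤ):ℝ) ≤ u := by rw [hq]; exact Int.floor_le u
        have hqu : u < ((q:ℤ):ℝ) + 1 := by rw [hq]; exact Int.lt_floor_add_one u
        constructor
        · have : ((q - 1 : ℤ) : ℝ) ≤ (((k:ℤ) - t * (n2:ℤ)) : ℝ) := by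
            push_cast; linarith [hkey.1]
          exact_mod_cast this
        · have h5 : (((k:ℤ) - t * (n2:ℤ)) : ℝ) < ((q + 2 : ℤ) : ℝ) := by
            push_cast; linarith [hkey.2]
          have h4 : (k:ℤ) - t * (n2:ℤ) < q + 2 := by exact_mod_cast h5
          omega
      have hr01 : t % 2 = 0 ∨ t % 2 = 1 := by omega
      have ht2 : t = 2 * (t / 2) + t % 2 := by omega
      have hkeq : (k:ℤ) = (((k:ℤ) - t * (n2:ℤ)) + (t % 2) * (n2:ℤ)) + (n:ℤ) * (t / 2) := by
        rw [h2nZ]; linear_combination (n2:ℤ) * ht2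
      rw [Finset.mem_image]
      refine ⟨((k:ℤ) - t * (n2:ℤ)) + (t % 2) * (n2:ℤ), ?_, ?_⟩
      · simp only [Finset.mem_insert, Finset.mem_singleton]
        rcases hr01 with h | h <;> rw [h] <;> rcases hbounds with ⟨hb1, hb2⟩ <;> omega
      · have hdvd : (n:ℤ) ∣ ((k:ℤ) - (((k:ℤ) - t * (n2:ℤ)) + (t % 2) * (n2:ℤ))) :=
          ⟨t / 2, by linear_combination hkeq⟩
        have hmod : (((k:ℤ) - t * (n2:ℤ)) + (t % 2) * (n2:ℤ)) % (n:ℤ) = ((k:ℤ)) % (n:ℤ) :=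
          Int.modEq_iff_dvd.2 hdvd
        have heq : iota n hn (((k:ℤ) - t * (n2:ℤ)) + (t % 2) * (n2:ℤ))
            = iota n hn ((k:ℤ)) := iota_congr n hn hmod
        rw [heq, iota_coe_self]
    calc (Finset.univ.filter fun k : Fin n => ∃ e1 e2 : ℤ, |e1| ≤ 1 ∧ |e2| ≤ 1 ∧
        0 < gl A B (thet n ((k:ℤ) + e1)) ∧ gl A B (thet n ((k:ℤ) + e2)) < 0).card
        ≤ (Finset.image (iota n hn)
            {q - 1, q, q + 1, q - 1 + (n2:ℤ), q + (n2:ℤ), q + 1 + (n2:ℤ)}).card :=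
          Finset.card_le_card hsub
      _ ≤ ({q - 1, q, q + 1, q - 1 + (n2:ℤ), q + (n2:ℤ), q + 1 + (n2:ℤ)} : Finset ℤ).card :=
          Finset.card_image_le
      _ ≤ 6 := card_le_six _ _ _ _ _ _

end AuxD4

namespace AuxD4
open Real

def lab (j : ℤ) : ℝ := (-1 : ℝ) ^ j

lemma lab_add_one (j : ℤ) : lab (j + 1) = - lab j := by
  unfold lab
  rw [zpow_add_one₀ (by norm_num : (-1:ℝ) ≠ 0)]
  ring

lemma lab_sub_one (j : ℤ) : lab (j - 1) = - lab j := by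
  unfold lab
  rw [zpow_sub_one₀ (by norm_num : (-1:ℝ) ≠ 0)]
  norm_num

lemma lab_period (n : ℕ) (h2 : 2 ∣ n) (j t : ℤ) : lab (j + t * n) = lab j := by
  unfold lab
  rw [zpow_add₀ (by norm_num : (-1:ℝ) ≠ 0), mul_comm t ((n:ℤ)), zpow_mul, zpow_natCast]
  have he : Even n := by obtain ⟨r, hr⟩ := h2; exact ⟨r, by omega⟩
  rw [he.neg_one_pow, one_zpow, mul_one]

lemma iota_add_shift (n : ℕ) (hn : 0 < n) (j e : ℤ) :
    iota n hn (((iota n hn j : Fin n) : ℤ) + e) = iota n hn (j + e) := by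
  apply iota_congr
  rw [iota_coe]
  have hm : (j % (n:ℤ)) % (n:ℤ) = j % (n:ℤ) := Int.emod_emod_of_dvd j dvd_rfl
  exact Int.ModEq.add_right e hm

end AuxD4

set_option maxHeartbeats 2000000 in
/-- **Lemma D.4 (unconditional width lower bound).** For the alternating points on the circle,
any two-layer ReLU network of width `m < (1−ε)n/6 − 2` misclassifies strictly more than
`εn/3` of the `n` points. -/
theorem unconditional_width_lower_bound (n : ℕ) (h4 : 4 ∣ n)
    (ε : ℝ) (hε0 : 0 ≤ ε) (hε1 : ε < 1)
    (m : ℕ) (hm : (m : ℝ) < (1 - ε) * n / 6 - 2)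
    (a : Fin m → ℝ) (W : Fin m → E 2) :
    ε * n / 3 < ((Finset.univ.filter fun i : Fin n =>
      circLab i * ((Real.sqrt m)⁻¹ *
        ∑ s, a s * max 0 (inner ℝ (W s) (circPt n i) : ℝ)) ≤ 0).card : ℝ) := by
  classical
  have hmnn : (0:ℝ) ≤ m := Nat.cast_nonneg m
  have hnnn : (0:ℝ) ≤ n := Nat.cast_nonneg n
  have hn12 : (12:ℝ) < n := by nlinarith [mul_nonneg hε0 hnnn]
  have hn4 : 4 ≤ n := by
    have h' : (12:ℕ) < n := by exact_mod_cast hn12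
    omega
  have hn : 0 < n := by omega
  have h2 : 2 ∣ n := by omega
  have hne : (n:ℝ) ≠ 0 := by positivity
  set c : ℝ := (Real.sqrt m)⁻¹ with hc
  set F : ℤ → ℝ :=
    fun j => c * ∑ s, a s * max 0 (AuxD4.gl (W s 0) (W s 1) (AuxD4.thet n j)) with hF
  -- inner-product bridge
  have hinner : ∀ (s : Fin m) (i : Fin n), (inner ℝ (W s) (circPt n (i:ℕ)) : ℝ)
      = AuxD4.gl (W s 0) (W s 1) (AuxD4.thet n ((i:ℕ):ℤ)) := by
    intro s i
    simp [circPt, PiLp.inner_apply, Fin.sum_univ_two, RCLike.inner_apply,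
      EuclideanSpace.equiv, AuxD4.gl, AuxD4.thet, mul_comm]
  have hprod : ∀ i : Fin n,
      circLab (i:ℕ) * (c * ∑ s, a s * max 0 (inner ℝ (W s) (circPt n (i:ℕ)) : ℝ))
      = AuxD4.lab ((i:ℕ):ℤ) * F ((i:ℕ):ℤ) := by
    intro i
    have hsum : (∑ s, a s * max 0 (inner ℝ (W s) (circPt n (i:ℕ)) : ℝ))
        = ∑ s, a s * max 0 (AuxD4.gl (W s 0) (W s 1) (AuxD4.thet n ((i:ℕ):ℤ))) :=
      Finset.sum_congr rfl fun s _ => by rw [hinner s i]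
    simp only [hF]
    rw [hsum]
    unfold circLab AuxD4.lab
    rw [zpow_natCast]
  set Bad := Finset.univ.filter (fun i : Fin n =>
      circLab (i:ℕ) * (c * ∑ s, a s * max 0 (inner ℝ (W s) (circPt n (i:ℕ)) : ℝ)) ≤ 0)
    with hBad
  have hGood : ∀ i : Fin n, i ∉ Bad ↔ 0 < AuxD4.lab ((i:ℕ):ℤ) * F ((i:ℕ):ℤ) := by
    intro i
    rw [hBad]
    simp only [Finset.mem_filter, Finset.mem_univ, true_and, not_le]
    rw [hprod i]
  have hFper : ∀ j t : ℤ, F (j + t * n) = F j := by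
    intro j t
    simp only [hF]
    congr 1
    refine Finset.sum_congr rfl fun s _ => ?_
    rw [AuxD4.gl_period n hne _ _ j t]
  have hGmod : ∀ j : ℤ, (0 < AuxD4.lab (j % (n:ℤ)) * F (j % (n:ℤ))) ↔
      (0 < AuxD4.lab j * F j) := by
    intro j
    have hj : j % (n:ℤ) + (j / (n:ℤ)) * (n:ℤ) = j := Int.emod_add_ediv_mul j n
    conv_rhs => rw [← hj]
    rw [hFper, AuxD4.lab_period n h2]
  have hGood' : ∀ j : ℤ, (0 < AuxD4.lab j * F j) ↔ AuxD4.iota n hn j ∉ Bad := by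
    intro j
    rw [hGood (AuxD4.iota n hn j), AuxD4.iota_coe n hn j, hGmod j]
  have hcos : 0 ≤ Real.cos (2 * Real.pi / n) := by
    have hpi := Real.pi_pos
    have hn4' : (4:ℝ) ≤ n := by exact_mod_cast hn4
    apply Real.cos_nonneg_of_mem_Icc
    constructor
    · have : (0:ℝ) ≤ 2 * Real.pi / n := by positivity
      linarith
    · rw [div_le_iff₀ (by positivity : (0:ℝ) < (n:ℝ))]
      nlinarith
  -- key step: three consecutive good points force a mixed neuron
  have hkey : ∀ j : ℤ, 0 < AuxD4.lab (j-1) * F (j-1) → 0 < AuxD4.lab j * F j →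
      0 < AuxD4.lab (j+1) * F (j+1) →
      ∃ s : Fin m, ∃ e1 e2 : ℤ, |e1| ≤ 1 ∧ |e2| ≤ 1 ∧
        0 < AuxD4.gl (W s 0) (W s 1) (AuxD4.thet n (j + e1)) ∧
        AuxD4.gl (W s 0) (W s 1) (AuxD4.thet n (j + e2)) < 0 := by
    intro j h1 h2' h3
    by_contra hcon
    push_neg at hcon
    have hs : ∀ s : Fin m,
        max 0 (AuxD4.gl (W s 0) (W s 1) (AuxD4.thet n (j-1)))
          + max 0 (AuxD4.gl (W s 0) (W s 1) (AuxD4.thet n (j+1)))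
        = 2 * Real.cos (2 * Real.pi / n)
          * max 0 (AuxD4.gl (W s 0) (W s 1) (AuxD4.thet n j)) := by
      intro s
      by_cases hpos : ∃ e : ℤ, |e| ≤ 1 ∧ 0 < AuxD4.gl (W s 0) (W s 1) (AuxD4.thet n (j + e))
      · obtain ⟨e0, he0, hp0⟩ := hpos
        have hall : ∀ e : ℤ, |e| ≤ 1 → 0 ≤ AuxD4.gl (W s 0) (W s 1) (AuxD4.thet n (j + e)) :=
          fun e he => hcon s e0 e he0 he hp0
        have hm1 := hall (-1) (by norm_num)
        have h00 := hall 0 (by norm_num)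
        have hp1 := hall 1 (by norm_num)
        rw [show j + (-1) = j - 1 by ring] at hm1
        rw [add_zero] at h00
        rw [max_eq_right hm1, max_eq_right hp1, max_eq_right h00]
        exact AuxD4.gl_ident n _ _ j
      · push_neg at hpos
        have hm1 := hpos (-1) (by norm_num)
        have h00 := hpos 0 (by norm_num)
        have hp1 := hpos 1 (by norm_num)
        rw [show j + (-1) = j - 1 by ring] at hm1
        rw [add_zero] at h00
        rw [max_eq_left hm1, max_eq_left hp1, max_eq_left h00]
        ring
    have hFeq : F (j-1) + F (j+1) = 2 * Real.cos (2 * Real.pi / n) * F j := by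
      simp only [hF]
      rw [← mul_add, ← Finset.sum_add_distrib]
      have hsum2 : (∑ s, (a s * max 0 (AuxD4.gl (W s 0) (W s 1) (AuxD4.thet n (j-1)))
            + a s * max 0 (AuxD4.gl (W s 0) (W s 1) (AuxD4.thet n (j+1)))))
          = ∑ s, 2 * Real.cos (2 * Real.pi / n)
              * (a s * max 0 (AuxD4.gl (W s 0) (W s 1) (AuxD4.thet n j))) :=
        Finset.sum_congr rfl fun s _ => by linear_combination a s * hs s
      rw [hsum2, ← Finset.mul_sum]
      ring
    have hl1 : AuxD4.lab (j+1) = - AuxD4.lab j := AuxD4.lab_add_one j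
    have hl2 : AuxD4.lab (j-1) = - AuxD4.lab j := AuxD4.lab_sub_one j
    rw [hl2] at h1
    rw [hl1] at h3
    have h4 : AuxD4.lab j * F (j-1) + AuxD4.lab j * F (j+1)
        = 2 * Real.cos (2 * Real.pi / n) * (AuxD4.lab j * F j) := by
      linear_combination AuxD4.lab j * hFeq
    nlinarith [mul_nonneg hcos h2'.le]
  -- the set of triple-good indices
  set K := Finset.univ.filter (fun k : Fin n =>
      0 < AuxD4.lab (((k:ℕ):ℤ) - 1) * F (((k:ℕ):ℤ) - 1) ∧
      0 < AuxD4.lab ((k:ℕ):ℤ) * F ((k:ℕ):ℤ) ∧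
      0 < AuxD4.lab (((k:ℕ):ℤ) + 1) * F (((k:ℕ):ℤ) + 1)) with hK
  have hK6 : K.card ≤ 6 * m := by
    have hsub : K ⊆ Finset.univ.biUnion (fun s : Fin m =>
        Finset.univ.filter fun k : Fin n => ∃ e1 e2 : ℤ, |e1| ≤ 1 ∧ |e2| ≤ 1 ∧
          0 < AuxD4.gl (W s 0) (W s 1) (AuxD4.thet n (((k:ℕ):ℤ) + e1)) ∧
          AuxD4.gl (W s 0) (W s 1) (AuxD4.thet n (((k:ℕ):ℤ) + e2)) < 0) := by
      intro k hkk
      rw [hK] at hkk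
      have hp := (Finset.mem_filter.1 hkk).2
      obtain ⟨s, hmix⟩ := hkey ((k:ℕ):ℤ) hp.1 hp.2.1 hp.2.2
      exact Finset.mem_biUnion.2 ⟨s, Finset.mem_univ s,
        Finset.mem_filter.2 ⟨Finset.mem_univ k, hmix⟩⟩
    calc K.card ≤ _ := Finset.card_le_card hsub
      _ ≤ ∑ s : Fin m, (Finset.univ.filter fun k : Fin n => ∃ e1 e2 : ℤ,
            |e1| ≤ 1 ∧ |e2| ≤ 1 ∧
            0 < AuxD4.gl (W s 0) (W s 1) (AuxD4.thet n (((k:ℕ):ℤ) + e1)) ∧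
            AuxD4.gl (W s 0) (W s 1) (AuxD4.thet n (((k:ℕ):ℤ) + e2)) < 0).card :=
          Finset.card_biUnion_le
      _ ≤ ∑ _s : Fin m, 6 :=
          Finset.sum_le_sum fun s _ => AuxD4.card_mixed_le n hn4 h2 (W s 0) (W s 1)
      _ = 6 * m := by simp [Finset.sum_const, Finset.card_univ, mul_comm]
  have hKc : n ≤ K.card + 3 * Bad.card := by
    have hcsub : (Finset.univ.filter (fun k : Fin n =>
        ¬(0 < AuxD4.lab (((k:ℕ):ℤ) - 1) * F (((k:ℕ):ℤ) - 1) ∧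
          0 < AuxD4.lab ((k:ℕ):ℤ) * F ((k:ℕ):ℤ) ∧
          0 < AuxD4.lab (((k:ℕ):ℤ) + 1) * F (((k:ℕ):ℤ) + 1)))) ⊆
        ((Bad.image fun b : Fin n => AuxD4.iota n hn (((b:ℕ):ℤ) + 1)) ∪ Bad)
          ∪ (Bad.image fun b : Fin n => AuxD4.iota n hn (((b:ℕ):ℤ) + (-1))) := by
      intro k hkk
      have hnk := (Finset.mem_filter.1 hkk).2
      by_cases hP : 0 < AuxD4.lab (((k:ℕ):ℤ) - 1) * F (((k:ℕ):ℤ) - 1)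
      · by_cases hQ : 0 < AuxD4.lab ((k:ℕ):ℤ) * F ((k:ℕ):ℤ)
        · have hR : ¬ (0 < AuxD4.lab (((k:ℕ):ℤ) + 1) * F (((k:ℕ):ℤ) + 1)) := by
            tauto
          have hb : AuxD4.iota n hn (((k:ℕ):ℤ) + 1) ∈ Bad := by
            by_contra hnb
            exact hR ((hGood' _).2 hnb)
          apply Finset.mem_union_right
          rw [Finset.mem_image]
          refine ⟨_, hb, ?_⟩
          rw [AuxD4.iota_add_shift n hn (((k:ℕ):ℤ) + 1) (-1),
            show ((k:ℕ):ℤ) + 1 + (-1) = ((k:ℕ):ℤ) by ring, AuxD4.iota_coe_self n hn k]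
        · have hb : AuxD4.iota n hn ((k:ℕ):ℤ) ∈ Bad := by
            by_contra hnb
            exact hQ ((hGood' _).2 hnb)
          rw [AuxD4.iota_coe_self n hn k] at hb
          exact Finset.mem_union_left _ (Finset.mem_union_right _ hb)
      · have hb : AuxD4.iota n hn (((k:ℕ):ℤ) - 1) ∈ Bad := by
          by_contra hnb
          exact hP ((hGood' _).2 hnb)
        apply Finset.mem_union_left
        apply Finset.mem_union_left
        rw [Finset.mem_image]
        refine ⟨_, hb, ?_⟩
        rw [AuxD4.iota_add_shift n hn (((k:ℕ):ℤ) - 1) 1,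
          show ((k:ℕ):ℤ) - 1 + 1 = ((k:ℕ):ℤ) by ring, AuxD4.iota_coe_self n hn k]
    have hsplit := Finset.card_filter_add_card_filter_not (s := (Finset.univ : Finset (Fin n)))
      (p := fun k : Fin n =>
        0 < AuxD4.lab (((k:ℕ):ℤ) - 1) * F (((k:ℕ):ℤ) - 1) ∧
        0 < AuxD4.lab ((k:ℕ):ℤ) * F ((k:ℕ):ℤ) ∧
        0 < AuxD4.lab (((k:ℕ):ℤ) + 1) * F (((k:ℕ):ℤ) + 1))
    have hcc := Finset.card_le_card hcsub
    have hu1 := Finset.card_union_le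
      ((Bad.image fun b : Fin n => AuxD4.iota n hn (((b:ℕ):ℤ) + 1)) ∪ Bad)
      (Bad.image fun b : Fin n => AuxD4.iota n hn (((b:ℕ):ℤ) + (-1)))
    have hu2 := Finset.card_union_le
      (Bad.image fun b : Fin n => AuxD4.iota n hn (((b:ℕ):ℤ) + 1)) Bad
    have hi1 := Finset.card_image_le (s := Bad) (f := fun b : Fin n => AuxD4.iota n hn (((b:ℕ):ℤ) + 1))
    have hi2 := Finset.card_image_le (s := Bad) (f := fun b : Fin n => AuxD4.iota n hn (((b:ℕ):ℤ) + (-1)))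
    have hucard : (Finset.univ : Finset (Fin n)).card = n := Finset.card_fin n
    rw [hK]
    omega
  -- final arithmetic
  have hc1 : (n:ℝ) ≤ (K.card:ℝ) + 3 * (Bad.card:ℝ) := by exact_mod_cast hKc
  have hc2 : (K.card:ℝ) ≤ 6 * (m:ℝ) := by exact_mod_cast hK6
  linarith

end
end

section
/- Kernel perturbation under small weight movement (Lemma H.2): Let x_1,…,x_n ∈ ℝ^d be unit vectors, let R ∈ (0,1), and let w_1,…,w_m be constructed by the block coupled initialization with m = m_0·B. For weight vectors v_1,…,v_m ∈ ℝ^d define H(v) ∈ ℝ^{n×n} by H(v)_{i,j} = (1/m)⟨x_i,x_j⟩ Σ_{r=1}^m 𝟙[⟨v_r, x_i⟩ ≥ 0, ⟨v_r, x_j⟩ ≥ 0]. Then with probability at least 1 − n²·B·exp(−m_0 R/10) over the initialization, it holds that ‖H(w) − H(w̃)‖_F ≤ 3nR simultaneously for all w̃_1,…,w̃_m ∈ ℝ^d with ‖w̃_r − w_r‖₂ ≤ R for every r ∈ [m]. -/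
open MeasureTheory ProbabilityTheory
open scoped BigOperators ENNReal

noncomputable section

/-- The NTK matrix `H^cts`. -/
def Hcts (d n : ℕ) (x : Fin n → E d) : Matrix (Fin n) (Fin n) ℝ := fun i j =>
  ∫ w, (if 0 ≤ (inner ℝ w (x i) : ℝ) ∧ 0 ≤ (inner ℝ w (x j) : ℝ)
    then (inner ℝ (x i) (x j) : ℝ) else 0) ∂(stdGaussian d)

/-- The finite-width kernel matrix `H(v)` of weights `v_1,…,v_m`. -/
def Hmap (d n m : ℕ) (x : Fin n → E d) (v : Fin m → E d) : Matrix (Fin n) (Fin n) ℝ :=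
  fun i j => (m : ℝ)⁻¹ * ∑ r : Fin m,
    (if 0 ≤ (inner ℝ (v r) (x i) : ℝ) ∧ 0 ≤ (inner ℝ (v r) (x j) : ℝ)
      then (inner ℝ (x i) (x j) : ℝ) else 0)

/-- The Frobenius norm of an `n × n` real matrix. -/
def frob {n : ℕ} (A : Matrix (Fin n) (Fin n) ℝ) : ℝ :=
  Real.sqrt (∑ i, ∑ j, A i j ^ 2)

/-- The block index of `r ∈ [m₀·B]`: the collection `w_1,…,w_m` consists of `B` identical
copies of each of the `m₀` independent Gaussian vectors. -/
def blkIdx (m₀ B : ℕ) (r : Fin (m₀ * B)) : Fin m₀ :=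
  ⟨(r : ℕ) / B, Nat.div_lt_of_lt_mul (Nat.lt_of_lt_of_le r.isLt (Nat.le_of_eq (Nat.mul_comm m₀ B)))⟩

/-- The block coupled initialization: `w_r = w'_{⌊r/B⌋}`. -/
def blkW (d m₀ B : ℕ) (w' : Fin m₀ → E d) (r : Fin (m₀ * B)) : E d := w' (blkIdx m₀ B r)

end
noncomputable section

theorem my_lintegral_pi_prod {α : Type*} [MeasurableSpace α] (μ : Measure α) [SigmaFinite μ] :
    ∀ (n : ℕ) (f : Fin n → α → ℝ≥0∞), (∀ i, Measurable (f i)) →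
    ∫⁻ a, ∏ i, f i (a i) ∂(Measure.pi fun _ : Fin n => μ) = ∏ i, ∫⁻ t, f i t ∂μ := by
  intro n
  induction n with
  | zero =>
      intro f hf
      simp [lintegral_const, Measure.pi_univ]
  | succ n ih =>
      intro f hf
      have hmp := (MeasureTheory.measurePreserving_piFinSuccAbove (fun _ : Fin (n+1) => μ) 0).symm
      have key : ∫⁻ a, ∏ i, f i (a i) ∂(Measure.pi fun _ : Fin (n+1) => μ)
          = ∫⁻ p : α × (Fin n → α), f 0 p.1 * ∏ i : Fin n, f (Fin.succ i) (p.2 i)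
              ∂(μ.prod (Measure.pi fun _ : Fin n => μ)) := by
        rw [← hmp.lintegral_comp]
        · congr 1
          funext p
          simp_rw [MeasurableEquiv.piFinSuccAbove_symm_apply, Fin.insertNthEquiv,
            Fin.prod_univ_succ, Fin.insertNth_zero]
          simp [Fin.zero_succAbove, Fin.cons_zero, Fin.cons_succ]
        · exact Finset.measurable_prod _ (fun i _ => (hf i).comp (measurable_pi_apply i))
      rw [key]
      have h2 := lintegral_prod_mul (μ := μ) (ν := Measure.pi fun _ : Fin n => μ)
        (f := f 0) (g := fun y => ∏ i : Fin n, f i.succ (y i)) ((hf 0).aemeasurable)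
        ((Finset.measurable_prod _ fun i _ => (hf _).comp (measurable_pi_apply i)).aemeasurable)
      rw [h2, ih _ (fun i => hf _), Fin.prod_univ_succ]

theorem my_integral_pi_pow {α : Type*} [MeasurableSpace α] (μ : Measure α) [SigmaFinite μ] :
    ∀ (n : ℕ) (g : α → ℝ),
    ∫ a : Fin n → α, ∏ i, g (a i) ∂(Measure.pi fun _ : Fin n => μ)
      = (∫ t, g t ∂μ) ^ n := by
  intro n
  induction n with
  | zero =>
      intro g
      simp [integral_const, Measure.pi_univ, Measure.real]
  | succ n ih =>
      intro g
      have hmp := (MeasureTheory.measurePreserving_piFinSuccAbove (fun _ : Fin (n+1) => μ) 0).symm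
      have key : ∫ a : Fin (n+1) → α, ∏ i, g (a i) ∂(Measure.pi fun _ : Fin (n+1) => μ)
          = ∫ p : α × (Fin n → α), g p.1 * ∏ i : Fin n, g (p.2 i)
              ∂(μ.prod (Measure.pi fun _ : Fin n => μ)) := by
        rw [← hmp.integral_comp']
        congr 1
        funext p
        simp_rw [MeasurableEquiv.piFinSuccAbove_symm_apply, Fin.insertNthEquiv,
          Fin.prod_univ_succ, Fin.insertNth_zero]
        simp [Fin.zero_succAbove, Fin.cons_zero, Fin.cons_succ]
      rw [key, integral_prod_mul (f := g) (g := fun y : Fin n → α => ∏ i : Fin n, g (y i)),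
        ih g, pow_succ, mul_comm]

theorem pi_gauss_eq (d : ℕ) :
    (Measure.pi fun _ : Fin d => gaussianReal 0 1)
    = (volume : Measure (Fin d → ℝ)).withDensity
        (fun a => ∏ i, gaussianPDF 0 1 (a i)) := by
  refine Measure.pi_eq (ι := Fin d) (μ := fun _ => gaussianReal 0 1) fun s hs => ?_
  rw [withDensity_apply _ (MeasurableSet.univ_pi hs),
    ← lintegral_indicator (MeasurableSet.univ_pi hs)]
  have hind : (Set.univ.pi s).indicator (fun a => ∏ i, gaussianPDF 0 1 (a i))
      = fun a => ∏ i, (s i).indicator (gaussianPDF 0 1) (a i) := by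
    funext a
    by_cases ha : a ∈ Set.univ.pi s
    · rw [Set.indicator_of_mem ha]
      exact Finset.prod_congr rfl fun i _ =>
        (Set.indicator_of_mem (ha i (Set.mem_univ i)) _).symm
    · rw [Set.indicator_of_notMem ha]
      obtain ⟨i, hi⟩ := not_forall.mp (by simpa [Set.mem_univ_pi] using ha)
      exact (Finset.prod_eq_zero (Finset.mem_univ i) (Set.indicator_of_notMem hi _)).symm
  rw [hind, volume_pi, my_lintegral_pi_prod _ _ _
    (fun i => (measurable_gaussianPDF 0 1).indicator (hs i))]
  exact Finset.prod_congr rfl fun i _ => by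
    rw [lintegral_indicator (hs i), ← gaussianReal_apply 0 one_ne_zero]

def dens (d : ℕ) : E d → ℝ≥0∞ := fun z =>
  ENNReal.ofReal ((Real.sqrt (2*Real.pi))⁻¹ ^ d * Real.exp (-‖z‖^2/2))

lemma dens_measurable (d : ℕ) : Measurable (dens d) := by
  have : Continuous fun z : E d => (Real.sqrt (2*Real.pi))⁻¹ ^ d * Real.exp (-‖z‖^2/2) := by
    fun_prop
  exact this.measurable.ennreal_ofReal

lemma map_withDensity_mequiv {α β : Type*} [MeasurableSpace α] [MeasurableSpace β]
    (e : α ≃ᵐ β) (μ : Measure α) (f : β → ℝ≥0∞) (hf : Measurable f) :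
    (μ.withDensity (fun a => f (e a))).map e = (μ.map e).withDensity f := by
  ext s hs
  rw [Measure.map_apply e.measurable hs, withDensity_apply _ (e.measurable hs),
    withDensity_apply _ hs, setLIntegral_map hs hf e.measurable]

lemma prod_gaussianPDF_eq (d : ℕ) (a : Fin d → ℝ) :
    (∏ i, gaussianPDF 0 1 (a i))
      = dens d ((MeasurableEquiv.toLp 2 (Fin d → ℝ)) a) := by
  have h1 : ∀ t : ℝ, gaussianPDF 0 1 t
      = ENNReal.ofReal ((Real.sqrt (2*Real.pi))⁻¹ * Real.exp (-t^2/2)) := by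
    intro t
    simp [gaussianPDF, gaussianPDFReal]
  simp_rw [h1]
  rw [← ENNReal.ofReal_prod_of_nonneg (fun i _ => by positivity)]
  unfold dens
  congr 1
  rw [Finset.prod_mul_distrib, Finset.prod_const, ← Real.exp_sum]
  congr 2
  · simp
  · have hnorm : ‖(MeasurableEquiv.toLp 2 (Fin d → ℝ)) a‖^2 = ∑ i, (a i)^2 := by
      rw [EuclideanSpace.norm_eq, Real.sq_sqrt (by positivity)]
      refine Finset.sum_congr rfl fun i _ => by rw [Real.norm_eq_abs, sq_abs]; rfl
    rw [hnorm]
    simp [Finset.sum_div, neg_div]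

theorem stdGaussian_eq_withDensity (d : ℕ) :
    stdGaussian d = (volume : Measure (E d)).withDensity (dens d) := by
  have hcoe : ⇑(EuclideanSpace.equiv (Fin d) ℝ).symm
      = ⇑(MeasurableEquiv.toLp 2 (Fin d → ℝ)) := rfl
  rw [_root_.stdGaussian, hcoe, pi_gauss_eq]
  have h2 : (fun a : Fin d → ℝ => ∏ i, gaussianPDF 0 1 (a i))
      = fun a => dens d ((MeasurableEquiv.toLp 2 (Fin d → ℝ)) a) :=
    funext (prod_gaussianPDF_eq d)
  rw [h2, map_withDensity_mequiv _ _ _ (dens_measurable d),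
    (show Measure.map ⇑(MeasurableEquiv.toLp 2 (Fin d → ℝ)) volume = volume from
      ((EuclideanSpace.volume_preserving_symm_measurableEquiv_toLp (Fin d)).symm _).map_eq)]

theorem stdGaussian_map_isometry (d : ℕ) (e : E d ≃ₗᵢ[ℝ] E d) :
    (stdGaussian d).map e = stdGaussian d := by
  rw [_root_.stdGaussian_eq_withDensity]
  have hE : ⇑e = ⇑(e.toHomeomorph.toMeasurableEquiv) := rfl
  have hdens : (fun a : E d => dens d (e.toHomeomorph.toMeasurableEquiv a)) = dens d := by
    funext a
    unfold dens
    rw [show ‖(e.toHomeomorph.toMeasurableEquiv) a‖ = ‖a‖ from e.norm_map a]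
  rw [hE]
  conv_lhs => rw [← hdens]
  rw [map_withDensity_mequiv _ _ _ (dens_measurable d)]
  rw [show Measure.map (⇑(e.toHomeomorph.toMeasurableEquiv)) volume = volume from
    e.measurePreserving.map_eq]

theorem my_map_eval {ι : Type*} [Fintype ι] [DecidableEq ι] {α : Type*} [MeasurableSpace α]
    (μ : Measure α) [IsProbabilityMeasure μ] (i : ι) :
    (Measure.pi fun _ : ι => μ).map (fun a => a i) = μ := by
  ext s hs
  rw [Measure.map_apply (measurable_pi_apply i) hs]
  have hpre : (fun a : ι → α => a i) ⁻¹' s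
      = Set.univ.pi (Function.update (fun _ => Set.univ) i s) := by
    ext a
    simp only [Set.mem_preimage, Set.mem_univ_pi, Function.update_apply]
    constructor
    · intro h j
      split_ifs with hji
      · subst hji; exact h
      · exact Set.mem_univ _
    · intro h
      simpa using h i
  rw [hpre, Measure.pi_pi]
  rw [Fintype.prod_eq_single i (fun j hj => by
    simp [Function.update_of_ne hj, measure_univ])]
  simp

theorem stdGaussian_map_inner (d : ℕ) (x : E d) (hx : ‖x‖ = 1) (hd : 0 < d) :
    (stdGaussian d).map (fun z => (inner ℝ z x : ℝ)) = gaussianReal 0 1 := by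
  set i₀ : Fin d := ⟨0, hd⟩
  set y : E d := EuclideanSpace.single i₀ (1:ℝ) with hy_def
  have hy : ‖y‖ = 1 := by rw [hy_def, EuclideanSpace.norm_single]; norm_num
  set e : E d ≃ₗᵢ[ℝ] E d := Submodule.reflection (ℝ ∙ (x - y))ᗮ with he_def
  have hxy : e x = y := Submodule.reflection_sub (by rw [hx, hy])
  have hinner_meas : Measurable fun u : E d => (inner ℝ u y : ℝ) :=
    (continuous_id.inner continuous_const).measurable
  have hcomp : (fun z : E d => (inner ℝ z x : ℝ)) = (fun u : E d => (inner ℝ u y : ℝ)) ∘ ⇑e := by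
    funext z
    simp only [Function.comp_apply]
    rw [← hxy]
    exact (e.inner_map_map z x).symm
  rw [hcomp, ← Measure.map_map hinner_meas e.continuous.measurable,
    stdGaussian_map_isometry d e]
  have hy_eval : (fun u : E d => (inner ℝ u y : ℝ)) = fun u => u i₀ := by
    funext u
    rw [hy_def, EuclideanSpace.inner_single_right]
    simp
  rw [hy_eval, _root_.stdGaussian, Measure.map_map (by
    exact (measurable_pi_apply i₀).comp (MeasurableEquiv.toLp 2 (Fin d → ℝ)).symm.measurable)
    (EuclideanSpace.equiv (Fin d) ℝ).symm.continuous.measurable]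
  exact my_map_eval _ i₀

theorem prob_band (d : ℕ) (x : E d) (hx : ‖x‖ = 1) (hd : 0 < d) {R : ℝ} (hR0 : 0 < R) :
    (stdGaussian d {z | |(inner ℝ z x : ℝ)| ≤ R}).toReal ≤ 0.8 * R := by
  have hmeas : Measurable fun z : E d => (inner ℝ z x : ℝ) :=
    (continuous_id.inner continuous_const).measurable
  have hsetm : MeasurableSet {t : ℝ | |t| ≤ R} :=
    measurableSet_le (measurable_abs) measurable_const
  have h1 : stdGaussian d {z | |(inner ℝ z x : ℝ)| ≤ R}
      = gaussianReal 0 1 {t | |t| ≤ R} := by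
    rw [← stdGaussian_map_inner d x hx hd, Measure.map_apply hmeas hsetm]
    rfl
  rw [h1, show {t : ℝ | |t| ≤ R} = Set.Icc (-R) R from by ext t; simp [Set.mem_Icc, abs_le]]
  have hpdf_le : ∀ t : ℝ, gaussianPDF 0 1 t
      ≤ ENNReal.ofReal ((Real.sqrt (2*Real.pi))⁻¹) := by
    intro t
    rw [show gaussianPDF 0 1 t
        = ENNReal.ofReal ((Real.sqrt (2*Real.pi))⁻¹ * Real.exp (-t^2/2)) by
      simp [gaussianPDF, gaussianPDFReal]]
    refine ENNReal.ofReal_le_ofReal ?_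
    refine mul_le_of_le_one_right (by positivity) ?_
    rw [Real.exp_le_one_iff]
    nlinarith [sq_nonneg t]
  rw [gaussianReal_apply 0 one_ne_zero]
  have hle : ∫⁻ t in Set.Icc (-R) R, gaussianPDF 0 1 t
      ≤ ENNReal.ofReal ((Real.sqrt (2*Real.pi))⁻¹) * volume (Set.Icc (-R) R) := by
    calc ∫⁻ t in Set.Icc (-R) R, gaussianPDF 0 1 t
        ≤ ∫⁻ _ in Set.Icc (-R) R, ENNReal.ofReal ((Real.sqrt (2*Real.pi))⁻¹) :=
          lintegral_mono hpdf_le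
      _ = _ := by rw [setLIntegral_const]
  rw [Real.volume_Icc] at hle
  have hfin : ENNReal.ofReal ((Real.sqrt (2*Real.pi))⁻¹) * ENNReal.ofReal (R - -R) ≠ ⊤ :=
    ENNReal.mul_ne_top ENNReal.ofReal_ne_top ENNReal.ofReal_ne_top
  have h2 := ENNReal.toReal_mono hfin hle
  rw [ENNReal.toReal_mul, ENNReal.toReal_ofReal (by positivity),
    ENNReal.toReal_ofReal (by linarith)] at h2
  have hsqrt : (2.5:ℝ) ≤ Real.sqrt (2*Real.pi) := by
    rw [show (2.5:ℝ) = Real.sqrt 6.25 by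
      rw [show (6.25:ℝ) = 2.5^2 by norm_num, Real.sqrt_sq]; norm_num]
    exact Real.sqrt_le_sqrt (by nlinarith [Real.pi_gt_d6])
  have h04 : (Real.sqrt (2*Real.pi))⁻¹ ≤ 0.4 := by
    rw [show (0.4:ℝ) = 2.5⁻¹ by norm_num]
    exact inv_anti₀ (by norm_num) hsqrt
  have hsnn : (0:ℝ) ≤ (Real.sqrt (2*Real.pi))⁻¹ := by positivity
  nlinarith

instance stdGaussian_prob_s17 (d : ℕ) : IsProbabilityMeasure (stdGaussian d) := by
  rw [_root_.stdGaussian]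
  exact Measure.isProbabilityMeasure_map
    ((EuclideanSpace.equiv (Fin d) ℝ).symm.continuous.measurable.aemeasurable)

theorem chernoff (d m₀ : ℕ) (x : E d) (hx : ‖x‖ = 1) (hd : 0 < d)
    {R : ℝ} (hR0 : 0 < R) :
    ((Measure.pi fun _ : Fin m₀ => stdGaussian d)
      {w' : Fin m₀ → E d | (3/2 : ℝ) * m₀ * R ≤
        ∑ b, (if |(inner ℝ (w' b) x : ℝ)| ≤ R then (1:ℝ) else 0)}).toReal
    ≤ Real.exp (-(m₀ : ℝ) * R / 10) := by
  set μ := stdGaussian d with hμ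
  set P := (Measure.pi fun _ : Fin m₀ => μ) with hP
  set A : Set (E d) := {v | |(inner ℝ v x : ℝ)| ≤ R} with hA_def
  have hA : MeasurableSet A :=
    measurableSet_le ((continuous_id.inner continuous_const).measurable.abs) measurable_const
  set Y : E d → ℝ := fun v => if |(inner ℝ v x : ℝ)| ≤ R then (1:ℝ) else 0 with hY_def
  have hYmeas : Measurable Y := Measurable.ite hA measurable_const measurable_const
  set S : (Fin m₀ → E d) → ℝ := fun w' => ∑ b, Y (w' b) with hS_def
  have hSmeas : Measurable S :=
    Finset.measurable_sum _ fun b _ => hYmeas.comp (measurable_pi_apply b)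
  have hY0 : ∀ v, 0 ≤ Y v := fun v => by rw [hY_def]; dsimp only; split <;> norm_num
  have hY1 : ∀ v, Y v ≤ 1 := fun v => by rw [hY_def]; dsimp only; split <;> norm_num
  have hint : Integrable (fun w' => Real.exp (1 * S w')) P := by
    refine Integrable.mono' (integrable_const (Real.exp m₀))
      ((measurable_const.mul hSmeas).exp.aestronglyMeasurable) (ae_of_all _ fun w' => ?_)
    rw [Real.norm_eq_abs, abs_of_pos (Real.exp_pos _), Real.exp_le_exp, one_mul]
    calc S w' ≤ ∑ _b : Fin m₀, (1:ℝ) := Finset.sum_le_sum fun b _ => hY1 _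
      _ = m₀ := by simp
  have hch := measure_ge_le_exp_mul_mgf (μ := P) (X := S) ((3/2 : ℝ) * m₀ * R)
    zero_le_one hint
  have hmgf : mgf S P 1 = (∫ v, Real.exp (Y v) ∂μ) ^ m₀ := by
    simp only [mgf, one_mul]
    have hexp : ∀ w' : Fin m₀ → E d, Real.exp (S w') = ∏ b, Real.exp (Y (w' b)) :=
      fun w' => by rw [hS_def]; exact Real.exp_sum _ _
    simp_rw [hexp]
    exact my_integral_pi_pow μ m₀ (fun v => Real.exp (Y v))
  have hexpY : (fun v => Real.exp (Y v))
      = fun v => A.indicator (fun _ => Real.exp 1 - 1) v + 1 := by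
    funext v
    by_cases h : v ∈ A
    · rw [Set.indicator_of_mem h]
      simp only [hA_def, Set.mem_setOf_eq] at h
      simp only [hY_def]
      rw [if_pos h]
      ring
    · rw [Set.indicator_of_notMem h]
      simp only [hA_def, Set.mem_setOf_eq] at h
      simp only [hY_def]
      rw [if_neg h]
      simp
  have hbase : ∫ v, Real.exp (Y v) ∂μ = (Real.exp 1 - 1) * (μ A).toReal + 1 := by
    rw [hexpY, integral_add (((integrable_const _).indicator hA)) (integrable_const 1),
      integral_indicator_const _ hA, integral_const]
    simp [mul_comm, Measure.real]
  have hp : (μ A).toReal ≤ 0.8 * R := prob_band d x hx hd hR0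
  have he1 : (1:ℝ) ≤ Real.exp 1 := by
    have := Real.add_one_le_exp (1:ℝ); linarith
  have hbase_le : ∫ v, Real.exp (Y v) ∂μ ≤ Real.exp (0.8 * R * (Real.exp 1 - 1)) := by
    rw [hbase]
    have h1 : (Real.exp 1 - 1) * (μ A).toReal + 1 ≤ 0.8 * R * (Real.exp 1 - 1) + 1 := by
      nlinarith [ENNReal.toReal_nonneg (a := μ A)]
    have h2 := Real.add_one_le_exp (0.8 * R * (Real.exp 1 - 1))
    linarith
  have hbase_nn : 0 ≤ ∫ v, Real.exp (Y v) ∂μ :=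
    integral_nonneg fun v => (Real.exp_pos _).le
  have hmgf_le : mgf S P 1 ≤ Real.exp ((m₀ : ℝ) * (0.8 * R * (Real.exp 1 - 1))) := by
    rw [hmgf, Real.exp_nat_mul]
    exact pow_le_pow_left₀ hbase_nn hbase_le m₀
  have hfinal : Real.exp (-1 * ((3/2 : ℝ) * m₀ * R)) *
      Real.exp ((m₀ : ℝ) * (0.8 * R * (Real.exp 1 - 1)))
      ≤ Real.exp (-(m₀ : ℝ) * R / 10) := by
    rw [← Real.exp_add, Real.exp_le_exp]
    have hm0 : (0:ℝ) ≤ (m₀ : ℝ) * R := by positivity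
    have he : Real.exp 1 < 2.7182818286 := Real.exp_one_lt_d9
    nlinarith
  calc (P {w' | (3/2 : ℝ) * m₀ * R ≤ S w'}).toReal
      ≤ Real.exp (-1 * ((3/2 : ℝ) * m₀ * R)) * mgf S P 1 := hch
    _ ≤ _ := by
        refine le_trans (mul_le_mul_of_nonneg_left hmgf_le (Real.exp_pos _).le) hfinal

theorem blk_sum (m₀ B : ℕ) (hB : 0 < B) (F : Fin m₀ → ℝ) :
    ∑ r : Fin (m₀ * B), F (blkIdx m₀ B r) = B * ∑ b, F b := by
  rw [← Equiv.sum_comp (finProdFinEquiv : Fin m₀ × Fin B ≃ Fin (m₀ * B))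
    (fun r => F (blkIdx m₀ B r))]
  have hblk : ∀ p : Fin m₀ × Fin B, blkIdx m₀ B (finProdFinEquiv p) = p.1 := by
    intro p
    apply Fin.ext
    show ((finProdFinEquiv p : Fin (m₀ * B)) : ℕ) / B = p.1
    rw [finProdFinEquiv_apply_val, Nat.add_mul_div_left _ _ hB,
      Nat.div_eq_of_lt p.2.isLt, zero_add]
  simp_rw [hblk]
  rw [Fintype.sum_prod_type]
  simp [Finset.sum_const, mul_comm, Finset.mul_sum]
  exact (Finset.sum_mul _ _ _).symm

theorem det_lemma (d n m₀ B : ℕ) (hB : 0 < B) (hm₀ : 0 < m₀) (x : Fin n → E d)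
    (hx : ∀ i, ‖x i‖ = 1) (R : ℝ) (hR0 : 0 < R) (w' : Fin m₀ → E d)
    (hS : ∀ i, ∑ b, (if |(inner ℝ (w' b) (x i) : ℝ)| ≤ R then (1:ℝ) else 0)
      ≤ (3/2 : ℝ) * m₀ * R) :
    ∀ wt : Fin (m₀ * B) → E d, (∀ r, ‖wt r - blkW d m₀ B w' r‖ ≤ R) →
    frob (Hmap d n (m₀ * B) x (blkW d m₀ B w') - Hmap d n (m₀ * B) x wt) ≤ 3 * n * R := by
  intro wt hwt
  set w : Fin (m₀ * B) → E d := blkW d m₀ B w' with hw_def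
  have hmpos : (0:ℝ) < ((m₀ * B : ℕ) : ℝ) := by
    have := Nat.mul_pos hm₀ hB
    exact_mod_cast this
  have hpert : ∀ (r : Fin (m₀ * B)) (k : Fin n),
      |(inner ℝ (wt r) (x k) : ℝ) - (inner ℝ (w r) (x k) : ℝ)| ≤ R := by
    intro r k
    rw [← inner_sub_left]
    calc |(inner ℝ (wt r - w r) (x k) : ℝ)| ≤ ‖wt r - w r‖ * ‖x k‖ :=
        abs_real_inner_le_norm _ _
      _ ≤ R := by rw [hx k, mul_one]; exact hwt r
  have key : ∀ i j, |(Hmap d n (m₀ * B) x w - Hmap d n (m₀ * B) x wt) i j| ≤ 3 * R := by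
    intro i j
    set c : ℝ := (inner ℝ (x i) (x j) : ℝ) with hc_def
    have hc : |c| ≤ 1 := by
      calc |c| ≤ ‖x i‖ * ‖x j‖ := abs_real_inner_le_norm _ _
        _ = 1 := by rw [hx i, hx j, mul_one]
    have hsub : (Hmap d n (m₀ * B) x w - Hmap d n (m₀ * B) x wt) i j
        = ((m₀ * B : ℕ) : ℝ)⁻¹ * ∑ r : Fin (m₀ * B),
          ((if 0 ≤ (inner ℝ (w r) (x i) : ℝ) ∧ 0 ≤ (inner ℝ (w r) (x j) : ℝ) then c else 0)
          - (if 0 ≤ (inner ℝ (wt r) (x i) : ℝ) ∧ 0 ≤ (inner ℝ (wt r) (x j) : ℝ) then c else 0)) := by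
      simp only [Matrix.sub_apply, Hmap, Finset.sum_sub_distrib, mul_sub, hc_def]
    rw [hsub]
    have hr : ∀ r : Fin (m₀ * B),
        |(if 0 ≤ (inner ℝ (w r) (x i) : ℝ) ∧ 0 ≤ (inner ℝ (w r) (x j) : ℝ) then c else 0)
          - (if 0 ≤ (inner ℝ (wt r) (x i) : ℝ) ∧ 0 ≤ (inner ℝ (wt r) (x j) : ℝ) then c else 0)|
        ≤ (if |(inner ℝ (w r) (x i) : ℝ)| ≤ R then (1:ℝ) else 0)
          + (if |(inner ℝ (w r) (x j) : ℝ)| ≤ R then (1:ℝ) else 0) := by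
      intro r
      have hTU : |(if 0 ≤ (inner ℝ (w r) (x i) : ℝ) ∧ 0 ≤ (inner ℝ (w r) (x j) : ℝ) then c else 0)
          - (if 0 ≤ (inner ℝ (wt r) (x i) : ℝ) ∧ 0 ≤ (inner ℝ (wt r) (x j) : ℝ) then c else 0)|
          ≤ 1 := by
        split_ifs
        · simpa using zero_le_one
        · simpa using hc
        · simpa [abs_neg] using hc
        · simpa using zero_le_one
      by_cases h1 : |(inner ℝ (w r) (x i) : ℝ)| ≤ R
      · rw [if_pos h1]
        have h0 : (0:ℝ) ≤ if |(inner ℝ (w r) (x j) : ℝ)| ≤ R then (1:ℝ) else 0 := by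
          split <;> norm_num
        linarith
      · by_cases h2 : |(inner ℝ (w r) (x j) : ℝ)| ≤ R
        · rw [if_pos h2]
          have h0 : (0:ℝ) ≤ if |(inner ℝ (w r) (x i) : ℝ)| ≤ R then (1:ℝ) else 0 := by
            split <;> norm_num
          linarith
        · have hsign : ∀ k : Fin n, ¬(|(inner ℝ (w r) (x k) : ℝ)| ≤ R) →
              ((0 ≤ (inner ℝ (w r) (x k) : ℝ)) ↔ (0 ≤ (inner ℝ (wt r) (x k) : ℝ))) := by
            intro k hk
            push_neg at hk
            have hp := abs_le.mp (hpert r k)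
            constructor
            · intro h0
              have hgt : R < (inner ℝ (w r) (x k) : ℝ) := by rwa [abs_of_nonneg h0] at hk
              linarith [hp.1]
            · intro h0
              by_contra hneg
              push_neg at hneg
              have hlt : (inner ℝ (w r) (x k) : ℝ) < -R := by
                rw [abs_of_neg hneg] at hk
                linarith
              linarith [hp.2]
          have hTeq : (if 0 ≤ (inner ℝ (w r) (x i) : ℝ) ∧ 0 ≤ (inner ℝ (w r) (x j) : ℝ)
              then c else 0)
              = (if 0 ≤ (inner ℝ (wt r) (x i) : ℝ) ∧ 0 ≤ (inner ℝ (wt r) (x j) : ℝ)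
              then c else 0) := by
            by_cases hcond : 0 ≤ (inner ℝ (w r) (x i) : ℝ) ∧ 0 ≤ (inner ℝ (w r) (x j) : ℝ)
            · rw [if_pos hcond, if_pos ⟨(hsign i h1).mp hcond.1, (hsign j h2).mp hcond.2⟩]
            · rw [if_neg hcond, if_neg
                (fun hcc => hcond ⟨(hsign i h1).mpr hcc.1, (hsign j h2).mpr hcc.2⟩)]
          rw [hTeq, sub_self, abs_zero, if_neg h1, if_neg h2]
          norm_num
    have hsum : ∑ r : Fin (m₀ * B),
        ((if |(inner ℝ (w r) (x i) : ℝ)| ≤ R then (1:ℝ) else 0)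
          + (if |(inner ℝ (w r) (x j) : ℝ)| ≤ R then (1:ℝ) else 0))
        ≤ (B : ℝ) * (3 * m₀ * R) := by
      have := blk_sum m₀ B hB (fun b =>
        (if |(inner ℝ (w' b) (x i) : ℝ)| ≤ R then (1:ℝ) else 0)
          + (if |(inner ℝ (w' b) (x j) : ℝ)| ≤ R then (1:ℝ) else 0))
      rw [show (∑ r : Fin (m₀ * B),
          ((if |(inner ℝ (w r) (x i) : ℝ)| ≤ R then (1:ℝ) else 0)
          + (if |(inner ℝ (w r) (x j) : ℝ)| ≤ R then (1:ℝ) else 0)))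
        = ∑ r : Fin (m₀ * B), (fun b =>
          (if |(inner ℝ (w' b) (x i) : ℝ)| ≤ R then (1:ℝ) else 0)
          + (if |(inner ℝ (w' b) (x j) : ℝ)| ≤ R then (1:ℝ) else 0)) (blkIdx m₀ B r) from rfl,
        this, Finset.sum_add_distrib]
      have hBnn : (0:ℝ) ≤ (B:ℕ) := by positivity
      have := hS i
      have := hS j
      nlinarith [hS i, hS j]
    calc |((m₀ * B : ℕ) : ℝ)⁻¹ * ∑ r : Fin (m₀ * B), _|
        = ((m₀ * B : ℕ) : ℝ)⁻¹ * |∑ r : Fin (m₀ * B),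
          ((if 0 ≤ (inner ℝ (w r) (x i) : ℝ) ∧ 0 ≤ (inner ℝ (w r) (x j) : ℝ) then c else 0)
          - (if 0 ≤ (inner ℝ (wt r) (x i) : ℝ) ∧ 0 ≤ (inner ℝ (wt r) (x j) : ℝ) then c else 0))| := by
          rw [abs_mul, abs_of_pos (inv_pos.mpr hmpos)]
      _ ≤ ((m₀ * B : ℕ) : ℝ)⁻¹ * ((B : ℝ) * (3 * m₀ * R)) := by
          refine mul_le_mul_of_nonneg_left ?_ (inv_pos.mpr hmpos).le
          exact le_trans (Finset.abs_sum_le_sum_abs _ _) (le_trans (Finset.sum_le_sum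
            fun r _ => hr r) hsum)
      _ = 3 * R := by
          rw [Nat.cast_mul]
          field_simp
  -- frobenius bound
  rw [frob]
  have hsq : ∑ i, ∑ j, ((Hmap d n (m₀ * B) x w - Hmap d n (m₀ * B) x wt) i j) ^ 2
      ≤ (3 * n * R)^2 := by
    calc ∑ i, ∑ j, ((Hmap d n (m₀ * B) x w - Hmap d n (m₀ * B) x wt) i j) ^ 2
        ≤ ∑ _i : Fin n, ∑ _j : Fin n, (3 * R)^2 := by
          refine Finset.sum_le_sum fun i _ => Finset.sum_le_sum fun j _ => ?_
          rw [← sq_abs]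
          exact pow_le_pow_left₀ (abs_nonneg _) (key i j) 2
      _ = (3 * n * R)^2 := by
          simp [Finset.sum_const]
          ring
  calc Real.sqrt (∑ i, ∑ j, ((Hmap d n (m₀ * B) x w - Hmap d n (m₀ * B) x wt) i j) ^ 2)
      ≤ Real.sqrt ((3 * n * R)^2) := Real.sqrt_le_sqrt hsq
    _ = 3 * n * R := Real.sqrt_sq (by positivity)

/-- **Lemma H.2 (kernel perturbation under small weight movement).** With probability at least
`1 − n²·B·exp(−m₀R/10)` over the block coupled initialization, every perturbed family of
weights `w̃` with `‖w̃_r − w_r‖₂ ≤ R` for all `r` satisfies `‖H(w) − H(w̃)‖_F ≤ 3nR`. -/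
theorem kernel_perturbation (d n m₀ B : ℕ) (x : Fin n → E d) (hx : ∀ i, ‖x i‖ = 1)
    (R : ℝ) (hR0 : 0 < R) (hR1 : R < 1) :
    1 - (n : ℝ) ^ 2 * B * Real.exp (-(m₀ : ℝ) * R / 10) ≤
      ((Measure.pi fun _ : Fin m₀ => stdGaussian d)
        {w' : Fin m₀ → E d | ∀ wt : Fin (m₀ * B) → E d,
          (∀ r, ‖wt r - blkW d m₀ B w' r‖ ≤ R) →
          frob (Hmap d n (m₀ * B) x (blkW d m₀ B w') - Hmap d n (m₀ * B) x wt) ≤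
            3 * n * R}).toReal := by
  have hnne : (0:ℝ) ≤ (n : ℝ) ^ 2 * B * Real.exp (-(m₀ : ℝ) * R / 10) := by positivity
  set P := (Measure.pi fun _ : Fin m₀ => stdGaussian d) with hP_def
  haveI : IsProbabilityMeasure P := by rw [hP_def]; infer_instance
  set T := {w' : Fin m₀ → E d | ∀ wt : Fin (m₀ * B) → E d,
      (∀ r, ‖wt r - blkW d m₀ B w' r‖ ≤ R) →
      frob (Hmap d n (m₀ * B) x (blkW d m₀ B w') - Hmap d n (m₀ * B) x wt) ≤
        3 * n * R} with hT_def
  by_cases hmB : m₀ * B = 0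
  · have hT : T = Set.univ := by
      apply Set.eq_univ_of_forall
      intro w' wt hwt
      have hentry : ∀ i j, (Hmap d n (m₀ * B) x (blkW d m₀ B w')
          - Hmap d n (m₀ * B) x wt) i j = 0 := by
        intro i j
        simp [Hmap, Matrix.sub_apply, hmB]
      rw [frob]
      simp only [hentry]
      simp only [ne_eq, OfNat.ofNat_ne_zero, not_false_eq_true, zero_pow,
        Finset.sum_const_zero, Real.sqrt_zero]
      positivity
    rw [hT, measure_univ, ENNReal.toReal_one]
    linarith
  · have hm₀ : 0 < m₀ := Nat.pos_of_ne_zero fun h => hmB (by simp [h])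
    have hB : 0 < B := Nat.pos_of_ne_zero fun h => hmB (by simp [h])
    by_cases hn : n = 0
    · have hT : T = Set.univ := by
        apply Set.eq_univ_of_forall
        intro w' wt hwt
        rw [frob]
        subst hn
        simp
      rw [hT, measure_univ, ENNReal.toReal_one]
      linarith
    · have hn' : 0 < n := Nat.pos_of_ne_zero hn
      have hd : 0 < d := by
        by_contra hd0
        have hd0' : d = 0 := by omega
        subst hd0'
        have h0 : x ⟨0, hn'⟩ = 0 := Subsingleton.elim _ _
        have hx0 := hx ⟨0, hn'⟩
        rw [h0, norm_zero] at hx0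
        norm_num at hx0
      set Bad : Fin n → Set (Fin m₀ → E d) := fun i =>
        {w' : Fin m₀ → E d | (3/2 : ℝ) * m₀ * R ≤
          ∑ b, (if |(inner ℝ (w' b) (x i) : ℝ)| ≤ R then (1:ℝ) else 0)} with hBad_def
      have hone : ∀ i, Measurable fun v : E d =>
          if |(inner ℝ v (x i) : ℝ)| ≤ R then (1:ℝ) else 0 := fun i =>
        Measurable.ite (measurableSet_le
          ((continuous_id.inner continuous_const).measurable.abs) measurable_const)
          measurable_const measurable_const
      have hBadMeas : ∀ i, MeasurableSet (Bad i) := fun i =>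
        measurableSet_le measurable_const (Finset.measurable_sum _ fun b _ =>
          (hone i).comp (measurable_pi_apply b))
      have hsub : (⋃ i, Bad i)ᶜ ⊆ T := by
        intro w' hw'
        simp only [Set.mem_compl_iff, Set.mem_iUnion, not_exists] at hw'
        intro wt hwt
        refine det_lemma d n m₀ B hB hm₀ x hx R hR0 w' (fun i => ?_) wt hwt
        have hi := hw' i
        simp only [hBad_def, Set.mem_setOf_eq] at hi
        linarith [not_le.mp hi]
      have hUnion_le : (P (⋃ i, Bad i)).toReal
          ≤ (n:ℝ) * Real.exp (-(m₀:ℝ) * R / 10) := by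
        have h1 : P (⋃ i, Bad i) ≤ ∑ i, P (Bad i) := measure_iUnion_fintype_le _ _
        have hne : (∑ i, P (Bad i)) ≠ ⊤ :=
          (ENNReal.sum_lt_top.mpr fun i _ => measure_lt_top P _).ne
        calc (P (⋃ i, Bad i)).toReal ≤ (∑ i, P (Bad i)).toReal :=
              ENNReal.toReal_mono hne h1
          _ = ∑ i, (P (Bad i)).toReal :=
              ENNReal.toReal_sum fun i _ => measure_ne_top P _
          _ ≤ ∑ _i : Fin n, Real.exp (-(m₀:ℝ) * R / 10) :=
              Finset.sum_le_sum fun i _ => chernoff d m₀ (x i) (hx i) hd hR0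
          _ = (n:ℝ) * Real.exp (-(m₀:ℝ) * R / 10) := by
              simp [Finset.sum_const, nsmul_eq_mul]
      have hUmeas : MeasurableSet (⋃ i, Bad i) := MeasurableSet.iUnion fun i => hBadMeas i
      have h3 : (P ((⋃ i, Bad i)ᶜ)).toReal = 1 - (P (⋃ i, Bad i)).toReal := by
        rw [measure_compl hUmeas (measure_ne_top _ _), measure_univ,
          ENNReal.toReal_sub_of_le prob_le_one ENNReal.one_ne_top, ENNReal.toReal_one]
      have h4 := ENNReal.toReal_mono (measure_ne_top P T) (measure_mono hsub)
      have hfac : (n:ℝ) * Real.exp (-(m₀:ℝ) * R / 10)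
          ≤ (n:ℝ)^2 * B * Real.exp (-(m₀:ℝ) * R / 10) := by
        have h1 : (1:ℝ) ≤ (n:ℝ) := by exact_mod_cast hn'
        have h2 : (1:ℝ) ≤ (B:ℝ) := by exact_mod_cast hB
        have h5 : (0:ℝ) < Real.exp (-(m₀:ℝ) * R / 10) := Real.exp_pos _
        have hnn : (n:ℝ) ≤ (n:ℝ)^2 * (B:ℝ) := by nlinarith
        exact mul_le_mul_of_nonneg_right hnn h5.le
      linarith [h3 ▸ h4]

end
end

section
/- Bounded weight movement under linear convergence (Lemma 4.6 / J.1): In the squared-loss setting, fix η > 0 and λ > 0 with 0 < mηλ/2 < 1, and suppose the gradient descent iterates satisfy ‖y − u(i)‖₂² ≤ (1 − mηλ/2)^i · ‖y − u(0)‖₂² for all i = 0, …, k. Then for every r ∈ [m], ‖w_r(k+1) − w_r(0)‖₂ ≤ 4√n·‖y − u(0)‖₂/(mλ). -/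
open MeasureTheory ProbabilityTheory
open scoped BigOperators ENNReal

noncomputable section

/-- Output of the (unnormalized) two-layer ReLU network `f(W,x,a) = Σ_r a_r φ(⟨w_r, x⟩)`. -/
def sqNet (d m : ℕ) (a : Fin m → ℝ) (W : Fin m → E d) (xi : E d) : ℝ :=
  ∑ r, a r * max 0 (inner ℝ (W r) xi : ℝ)

end
noncomputable section

/-- **Lemma 4.6 / J.1 (bounded weight movement under linear convergence).** If the squared
errors of the gradient descent iterates decay as `(1 − mηλ/2)^i` up to step `k`, then every
weight vector stays within distance `4√n‖y − u(0)‖₂/(mλ)` of its initialization. -/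
theorem bounded_weight_movement (d n m : ℕ) (x : Fin n → E d) (y : Fin n → ℝ)
    (hx : ∀ i, ‖x i‖ = 1)
    (a : Fin m → ℝ) (ha : ∀ r, a r = 1 ∨ a r = -1)
    (η lam : ℝ) (hη : 0 < η) (hlam : 0 < lam)
    (hstep0 : 0 < (m : ℝ) * η * lam / 2) (hstep1 : (m : ℝ) * η * lam / 2 < 1)
    (W : ℕ → Fin m → E d)
    (hupd : ∀ k r, W (k + 1) r = W k r -
      η • ∑ i, ((sqNet d m a (W k) (x i) - y i) * a r *
        (if 0 ≤ (inner ℝ (W k r) (x i) : ℝ) then 1 else 0)) • x i)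
    (k : ℕ)
    (hconv : ∀ i ≤ k, ∑ j, (y j - sqNet d m a (W i) (x j)) ^ 2 ≤
      (1 - (m : ℝ) * η * lam / 2) ^ i * ∑ j, (y j - sqNet d m a (W 0) (x j)) ^ 2) :
    ∀ r, ‖W (k + 1) r - W 0 r‖ ≤
      4 * Real.sqrt n * Real.sqrt (∑ j, (y j - sqNet d m a (W 0) (x j)) ^ 2) /
        ((m : ℝ) * lam) := by
  intro r
  set s : ℝ := (m : ℝ) * η * lam / 2 with hs
  set R : ℝ := Real.sqrt (∑ j, (y j - sqNet d m a (W 0) (x j)) ^ 2) with hR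
  have hR0 : 0 ≤ R := Real.sqrt_nonneg _
  have hm : 0 < (m : ℝ) := by nlinarith [mul_pos hη hlam]
  set q : ℝ := Real.sqrt (1 - s) with hq
  have hq0 : 0 ≤ q := Real.sqrt_nonneg _
  have hq1 : q ≤ 1 - s / 2 := by
    have h1 : (1 : ℝ) - s ≤ (1 - s / 2) ^ 2 := by nlinarith [sq_nonneg s]
    calc q ≤ Real.sqrt ((1 - s / 2) ^ 2) := Real.sqrt_le_sqrt h1
      _ = 1 - s / 2 := Real.sqrt_sq (by linarith)
  have hstep : ∀ i ≤ k, ‖W (i + 1) r - W i r‖ ≤ η * Real.sqrt n * R * q ^ i := by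
    intro i hi
    rw [hupd i r, sub_sub_cancel_left, norm_neg, norm_smul, Real.norm_eq_abs,
      abs_of_pos hη]
    have h1 : ‖∑ j, ((sqNet d m a (W i) (x j) - y j) * a r *
        (if 0 ≤ (inner ℝ (W i r) (x j) : ℝ) then 1 else 0)) • x j‖ ≤
        ∑ j, |y j - sqNet d m a (W i) (x j)| := by
      refine (norm_sum_le _ _).trans (Finset.sum_le_sum fun j _ => ?_)
      rw [norm_smul, Real.norm_eq_abs, hx j, mul_one, abs_mul, abs_mul]
      have haj : |a r| = 1 := by rcases ha r with h | h <;> simp [h]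
      have hind : |(if 0 ≤ (inner ℝ (W i r) (x j) : ℝ) then (1:ℝ) else 0)| ≤ 1 := by
        split <;> simp
      rw [haj, mul_one, abs_sub_comm]
      nlinarith [abs_nonneg (y j - sqNet d m a (W i) (x j)),
        abs_nonneg (if 0 ≤ (inner ℝ (W i r) (x j) : ℝ) then (1:ℝ) else 0)]
    have h2 : ∑ j, |y j - sqNet d m a (W i) (x j)| ≤
        Real.sqrt n * Real.sqrt (∑ j, (y j - sqNet d m a (W i) (x j)) ^ 2) := by
      rw [← Real.sqrt_mul (by positivity)]
      rw [Real.le_sqrt (by positivity) (by positivity)]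
      have := sq_sum_le_card_mul_sum_sq (s := Finset.univ)
        (f := fun j => |y j - sqNet d m a (W i) (x j)|)
      simpa [sq_abs] using this
    have h3 : Real.sqrt (∑ j, (y j - sqNet d m a (W i) (x j)) ^ 2) ≤ q ^ i * R := by
      have := hconv i hi
      calc Real.sqrt (∑ j, (y j - sqNet d m a (W i) (x j)) ^ 2)
          ≤ Real.sqrt ((1 - s) ^ i * ∑ j, (y j - sqNet d m a (W 0) (x j)) ^ 2) :=
            Real.sqrt_le_sqrt this
        _ = q ^ i * R := by
            have h1s : (0:ℝ) ≤ 1 - s := by linarith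
            rw [Real.sqrt_mul (pow_nonneg h1s i), ← hR,
              show (1 - s) ^ i = (q ^ i) ^ 2 by
                rw [← pow_mul, mul_comm, pow_mul, hq, Real.sq_sqrt h1s],
              Real.sqrt_sq (pow_nonneg hq0 i)]
    have h4 : ‖∑ j, ((sqNet d m a (W i) (x j) - y j) * a r *
        (if 0 ≤ (inner ℝ (W i r) (x j) : ℝ) then 1 else 0)) • x j‖ ≤
        Real.sqrt n * (q ^ i * R) :=
      h1.trans (h2.trans (mul_le_mul_of_nonneg_left h3 (Real.sqrt_nonneg _)))
    calc η * ‖∑ j, ((sqNet d m a (W i) (x j) - y j) * a r *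
          (if 0 ≤ (inner ℝ (W i r) (x j) : ℝ) then 1 else 0)) • x j‖
        ≤ η * (Real.sqrt n * (q ^ i * R)) := mul_le_mul_of_nonneg_left h4 hη.le
      _ = η * Real.sqrt n * R * q ^ i := by ring
  have htel : W (k + 1) r - W 0 r = ∑ i ∈ Finset.range (k + 1), (W (i + 1) r - W i r) := by
    rw [Finset.sum_range_sub (fun i => W i r)]
  have hgeom : ∑ i ∈ Finset.range (k + 1), q ^ i ≤ 2 / s := by
    have h1q : s / 2 ≤ 1 - q := by linarith
    have hpos : 0 < 1 - q := lt_of_lt_of_le (by positivity) h1q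
    have hmul := geom_sum_mul q (k + 1)
    have hsumle : ∑ i ∈ Finset.range (k + 1), q ^ i ≤ 1 / (1 - q) := by
      rw [le_div_iff₀ hpos]
      nlinarith [pow_nonneg hq0 (k + 1)]
    refine hsumle.trans ?_
    rw [div_le_div_iff₀ hpos hstep0]
    linarith
  calc ‖W (k + 1) r - W 0 r‖ ≤ ∑ i ∈ Finset.range (k + 1), ‖W (i + 1) r - W i r‖ := by
        rw [htel]; exact norm_sum_le _ _
    _ ≤ ∑ i ∈ Finset.range (k + 1), η * Real.sqrt n * R * q ^ i :=
        Finset.sum_le_sum fun i hi => hstep i (Nat.lt_succ_iff.mp (Finset.mem_range.mp hi))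
    _ = η * Real.sqrt n * R * ∑ i ∈ Finset.range (k + 1), q ^ i := by
        rw [Finset.mul_sum]
    _ ≤ η * Real.sqrt n * R * (2 / s) := by
        apply mul_le_mul_of_nonneg_left hgeom (by positivity)
    _ = 4 * Real.sqrt n * R / ((m : ℝ) * lam) := by
        rw [hs]; field_simp; ring


end
end
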